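/- arXiv:1712.05047 — 9 statements merged into one kernel-verified Lean document; each statement's English description precedes it below -/
import Mathlib

section
/- Let K be a field of characteristic different from 2, let E be an elliptic curve over K given by y² = f(x) with f ∈ K[x] a monic cubic without repeated roots, and let a be a nonzero element of K. Then the following are equivalent: (i) E(K) contains exactly one point of order 2 and contains a point of order 4; (ii) there exists a nonzero b ∈ K such that a² + 4b is not a square in K and E is K-isomorphic to the elliptic curve E⁽⁴⁾_{a,b} : y² = (x² + (a² + 2b)x + b²)·x. -/
open WeierstrassCurve

open Classical

section Helpers

variable {K : Type*} [Field K]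

private lemma negY_eq' (W : Affine K) (h1 : W.a₁ = 0) (h3 : W.a₃ = 0) (x y : K) :
    W.negY x y = -y := by simp [Affine.negY, h1, h3]

private lemma order_two_iff' (h2 : (2:K) ≠ 0) {W : Affine K} (h1 : W.a₁ = 0) (h3 : W.a₃ = 0)
    (P : W.Point) : addOrderOf P = 2 ↔ ∃ x : K, ∃ h : W.Nonsingular x 0, P = .some _ _ h := by
  constructor
  · intro hP
    have hP0 : P ≠ 0 := by rintro rfl; simp at hP
    have h2P : P + P = 0 := by
      have := addOrderOf_nsmul_eq_zero P
      rwa [hP, two_nsmul] at this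
    cases P with
    | zero => simp [Affine.Point.zero_def] at hP0
    | some x y h =>
      by_cases hy : y = W.negY x y
      · have hy0 : y = 0 := by
          rw [negY_eq' W h1 h3] at hy
          have h2y : 2 * y = 0 := by linear_combination hy
          exact (mul_eq_zero.mp h2y).resolve_left h2
        exact ⟨x, by rwa [hy0] at h, by subst hy0; rfl⟩
      · rw [Affine.Point.add_self_of_Y_ne hy] at h2P
        exact absurd h2P (Affine.Point.some_ne_zero _)
  · rintro ⟨x, h, rfl⟩
    have hy : (0:K) = W.negY x 0 := by rw [negY_eq' W h1 h3]; ring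
    haveI : Fact (Nat.Prime 2) := ⟨Nat.prime_two⟩
    apply addOrderOf_eq_prime
    · rw [two_nsmul, Affine.Point.add_self_of_Y_eq hy]
    · exact Affine.Point.some_ne_zero _

private lemma order_four_iff' {W : Affine K} :
    (∃ P : W.Point, addOrderOf P = 4) ↔ ∃ P : W.Point, addOrderOf (P + P) = 2 := by
  constructor
  · rintro ⟨P, hP⟩
    refine ⟨P, ?_⟩
    haveI : Fact (Nat.Prime 2) := ⟨Nat.prime_two⟩
    apply addOrderOf_eq_prime
    · have h40 : (4 : ℕ) • P = 0 := by rw [← hP]; exact addOrderOf_nsmul_eq_zero P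
      rw [show (4:ℕ) = 2 + 2 from rfl, add_nsmul, two_nsmul] at h40
      rw [two_nsmul]
      exact h40
    · intro h20
      have hd : addOrderOf P ∣ 2 := by
        rw [addOrderOf_dvd_iff_nsmul_eq_zero, two_nsmul]
        exact h20
      rw [hP] at hd
      omega
  · rintro ⟨P, hP⟩
    refine ⟨P, ?_⟩
    have h4 : addOrderOf P ∣ 4 := by
      rw [addOrderOf_dvd_iff_nsmul_eq_zero]
      have h20 : (2:ℕ) • (P + P) = 0 := by
        rw [← hP]; exact addOrderOf_nsmul_eq_zero _
      rw [two_nsmul] at h20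
      rw [show (4:ℕ) = 2 + 2 from rfl, add_nsmul, two_nsmul]
      exact h20
    have hPP : P + P ≠ 0 := by
      intro h0
      rw [h0] at hP
      simp at hP
    have hn2 : ¬ addOrderOf P ∣ 2 := by
      rw [addOrderOf_dvd_iff_nsmul_eq_zero, two_nsmul]
      exact hPP
    have hle := Nat.le_of_dvd (by norm_num) h4
    interval_cases (addOrderOf P) <;> revert h4 hn2 <;> decide

private lemma point_some_congr' {W : Affine K} {x y y' : K} (h : W.Nonsingular x y)
    (hy : y = y') : Affine.Point.some _ _ h = Affine.Point.some _ _ (hy ▸ h) := by subst hy; rfl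

/-- The combined condition in terms of equations. -/
private lemma lhs_iff_Phi (h2 : (2:K) ≠ 0) {W : Affine K} (h1 : W.a₁ = 0) (h3 : W.a₃ = 0)
    (hΔ : W.Δ ≠ 0) :
    ((∃! P : W.Point, addOrderOf P = 2) ∧ ∃ P : W.Point, addOrderOf P = 4) ↔
    ((∃! p : K × K, W.Equation p.1 p.2 ∧ p.2 = 0) ∧
      ∃ x y : K, W.Equation x y ∧ y ≠ 0 ∧ W.addY x x y (W.slope x x y y) = 0) := by
  constructor
  · rintro ⟨⟨P, hP, hPuniq⟩, h4⟩
    obtain ⟨x, hx, rfl⟩ := (order_two_iff' h2 h1 h3 P).mp hP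
    constructor
    · refine ⟨(x, 0), ⟨hx.1, rfl⟩, ?_⟩
      rintro ⟨x', y'⟩ ⟨heq, hy'⟩
      dsimp only at heq hy' ⊢
      subst hy'
      have hns : W.Nonsingular x' 0 := (W.equation_iff_nonsingular_of_Δ_ne_zero hΔ).mp heq
      have := hPuniq (.some _ _ hns) ((order_two_iff' h2 h1 h3 _).mpr ⟨x', hns, rfl⟩)
      injection this with hx' hy'
      simp [hx']
    · obtain ⟨Q, hQ⟩ := order_four_iff'.mp h4
      cases Q with
      | zero =>
        rw [← Affine.Point.zero_def, add_zero] at hQ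
        simp at hQ
      | some x₀ y₀ h₀ =>
        by_cases hy₀ : y₀ = W.negY x₀ y₀
        · rw [Affine.Point.add_self_of_Y_eq hy₀] at hQ
          simp at hQ
        · rw [Affine.Point.add_self_of_Y_ne hy₀] at hQ
          obtain ⟨x', hns', heq'⟩ := (order_two_iff' h2 h1 h3 _).mp hQ
          injection heq' with hx' hy'
          refine ⟨x₀, y₀, h₀.1, ?_, hy'⟩
          intro hy0
          apply hy₀
          rw [negY_eq' W h1 h3, hy0, neg_zero]
  · rintro ⟨⟨⟨e, ey⟩, ⟨heq, hey⟩, huniq⟩, x₀, y₀, h₀, hy₀, haddY⟩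
    dsimp only at heq hey
    subst hey
    have hnse : W.Nonsingular e 0 := (W.equation_iff_nonsingular_of_Δ_ne_zero hΔ).mp heq
    constructor
    · refine ⟨.some _ _ hnse, (order_two_iff' h2 h1 h3 _).mpr ⟨e, hnse, rfl⟩, ?_⟩
      intro Q hQ
      obtain ⟨x', hns', rfl⟩ := (order_two_iff' h2 h1 h3 Q).mp hQ
      have := huniq (x', 0) ⟨hns'.1, rfl⟩
      injection this with h1' h2'
      subst h1'
      rfl
    · rw [order_four_iff']
      have hns₀ : W.Nonsingular x₀ y₀ := (W.equation_iff_nonsingular_of_Δ_ne_zero hΔ).mp h₀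
      have hy₀' : y₀ ≠ W.negY x₀ y₀ := by
        rw [negY_eq' W h1 h3]
        intro hc
        have h2y : 2 * y₀ = 0 := by linear_combination hc
        exact hy₀ ((mul_eq_zero.mp h2y).resolve_left h2)
      refine ⟨.some _ _ hns₀, ?_⟩
      rw [Affine.Point.add_self_of_Y_ne hy₀']
      apply (order_two_iff' h2 h1 h3 _).mpr
      rw [point_some_congr' _ haddY]
      exact ⟨_, _, rfl⟩

private lemma equation_vc {W : Affine K} (C : VariableChange K) (hs : C.s = 0) (ht : C.t = 0)
    (X Y : K) :
    (C • W).toAffine.Equation X Y ↔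
      W.Equation ((C.u:K)^2*X + C.r) ((C.u:K)^3*Y) := by
  have hu : (C.u : K) ≠ 0 := C.u.ne_zero
  rw [Affine.equation_iff, Affine.equation_iff]
  simp only [toAffine, variableChange_a₁, variableChange_a₂, variableChange_a₃,
    variableChange_a₄, variableChange_a₆, hs, ht, Units.val_inv_eq_inv_val]
  constructor <;> intro h
  · field_simp at h
    apply mul_left_cancel₀ (pow_ne_zero 10 hu)
    linear_combination (C.u:K)^10 * h
  · field_simp
    linear_combination h

set_option maxHeartbeats 1000000 in
private lemma addY_vc_final {W : Affine K} (h1 : W.a₁ = 0) (h3 : W.a₃ = 0)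
    (C : VariableChange K) (hs : C.s = 0) (ht : C.t = 0) (X Y L : K) :
    W.addY ((C.u:K)^2*X + C.r) ((C.u:K)^2*X + C.r) ((C.u:K)^3*Y) ((C.u:K) * L) =
      (C.u:K)^3 * ((C • W).toAffine.addY X X Y L) := by
  have hu : (C.u : K) ≠ 0 := C.u.ne_zero
  simp only [Affine.addY, Affine.negAddY, Affine.addX, Affine.negY, toAffine,
    variableChange_a₁, variableChange_a₂, variableChange_a₃, variableChange_a₄,
    h1, h3, hs, ht, Units.val_inv_eq_inv_val, mul_zero, zero_mul, add_zero, zero_add,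
    neg_zero, sub_zero]
  field_simp
  ring

set_option maxHeartbeats 1000000 in
private lemma slope_vc {W : Affine K} (h1 : W.a₁ = 0) (h3 : W.a₃ = 0)
    (C : VariableChange K) (hs : C.s = 0) (ht : C.t = 0) (X Y : K)
    (h2Y : Y ≠ (C • W).toAffine.negY X Y)
    (h2y : (C.u:K)^3*Y ≠ W.negY ((C.u:K)^2*X + C.r) ((C.u:K)^3*Y)) :
    W.slope ((C.u:K)^2*X + C.r) ((C.u:K)^2*X + C.r) ((C.u:K)^3*Y) ((C.u:K)^3*Y) =
      (C.u:K) * (C • W).toAffine.slope X X Y Y := by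
  have hu : (C.u : K) ≠ 0 := C.u.ne_zero
  rw [Affine.slope_of_Y_ne rfl h2y, Affine.slope_of_Y_ne rfl h2Y]
  have hd1 : (C.u:K)^3*Y - W.negY ((C.u:K)^2*X + C.r) ((C.u:K)^3*Y) ≠ 0 :=
    sub_ne_zero_of_ne h2y
  have hd2 : Y - (C • W).toAffine.negY X Y ≠ 0 := sub_ne_zero_of_ne h2Y
  rw [mul_div_assoc', div_eq_div_iff hd1 hd2]
  simp only [Affine.negY, toAffine, variableChange_a₁, variableChange_a₂,
    variableChange_a₃, variableChange_a₄, h1, h3, hs, ht, Units.val_inv_eq_inv_val,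
    mul_zero, zero_mul, add_zero, zero_add, neg_zero, sub_zero]
  field_simp
  ring

private lemma addY_vc (h2 : (2:K) ≠ 0) {W : Affine K} (h1 : W.a₁ = 0) (h3 : W.a₃ = 0)
    (C : VariableChange K) (hs : C.s = 0) (ht : C.t = 0) (X Y : K) (hY : Y ≠ 0) :
    W.addY ((C.u:K)^2*X + C.r) ((C.u:K)^2*X + C.r) ((C.u:K)^3*Y)
        (W.slope ((C.u:K)^2*X + C.r) ((C.u:K)^2*X + C.r) ((C.u:K)^3*Y) ((C.u:K)^3*Y)) =
      (C.u:K)^3 * ((C • W).toAffine.addY X X Y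
        ((C • W).toAffine.slope X X Y Y)) := by
  have hu : (C.u : K) ≠ 0 := C.u.ne_zero
  have ha₁' : (C • W).a₁ = 0 := by
    rw [variableChange_a₁, hs, h1]; ring
  have ha₃' : (C • W).a₃ = 0 := by
    rw [variableChange_a₃, ht, h1, h3]; ring
  have h2Y : Y ≠ (C • W).toAffine.negY X Y := by
    simp only [Affine.negY, ha₁', ha₃', toAffine]
    intro hc
    have : 2 * Y = 0 := by linear_combination hc
    exact hY ((mul_eq_zero.mp this).resolve_left h2)
  have h2y : (C.u:K)^3*Y ≠ W.negY ((C.u:K)^2*X + C.r) ((C.u:K)^3*Y) := by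
    simp only [Affine.negY, h1, h3]
    intro hc
    have : 2 * ((C.u:K)^3 * Y) = 0 := by linear_combination hc
    rcases mul_eq_zero.mp this with h | h
    · exact h2 h
    · exact (mul_ne_zero (pow_ne_zero 3 hu) hY) h
  rw [slope_vc h1 h3 C hs ht X Y h2Y h2y]
  exact addY_vc_final h1 h3 C hs ht X Y _

private lemma E4_unique (h2 : (2:K) ≠ 0) {a b : K} (ha : a ≠ 0) (hb : b ≠ 0)
    (hnsq : ¬ IsSquare (a^2 + 4*b)) (x : K)
    (hx : (⟨0, a^2+2*b, 0, b^2, 0⟩ : WeierstrassCurve K).toAffine.Equation x 0) : x = 0 := by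
  rw [Affine.equation_iff] at hx
  simp only [toAffine] at hx
  by_contra hx0
  have hquad : x^2 + (a^2+2*b)*x + b^2 = 0 := by
    have : x * (x^2 + (a^2+2*b)*x + b^2) = 0 := by linear_combination -hx
    exact (mul_eq_zero.mp this).resolve_left hx0
  apply hnsq
  refine ⟨(2*x + (a^2+2*b))/a, ?_⟩
  field_simp
  linear_combination -4*hquad

private lemma E4_eq00 (a b : K) :
    (⟨0, a^2+2*b, 0, b^2, 0⟩ : WeierstrassCurve K).toAffine.Equation 0 0 := by
  rw [Affine.equation_iff]
  simp only [toAffine]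
  ring

private lemma E4_equation (a b : K) :
    (⟨0, a^2+2*b, 0, b^2, 0⟩ : WeierstrassCurve K).toAffine.Equation (-b) (a*b) := by
  rw [Affine.equation_iff]
  simp only [toAffine]
  ring

private lemma E4_addY (h2 : (2:K) ≠ 0) {a b : K} (ha : a ≠ 0) (hb : b ≠ 0) :
    (⟨0, a^2+2*b, 0, b^2, 0⟩ : WeierstrassCurve K).toAffine.addY (-b) (-b) (a*b)
      ((⟨0, a^2+2*b, 0, b^2, 0⟩ : WeierstrassCurve K).toAffine.slope (-b) (-b) (a*b) (a*b))
      = 0 := by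
  set W := (⟨0, a^2+2*b, 0, b^2, 0⟩ : WeierstrassCurve K).toAffine with hW
  have hy : (a*b) ≠ W.negY (-b) (a*b) := by
    simp only [Affine.negY, W, toAffine]
    intro hc
    have : 2*(a*b) = 0 := by linear_combination hc
    rcases mul_eq_zero.mp this with h | h
    · exact h2 h
    · exact mul_ne_zero ha hb h
  have hsl : W.slope (-b) (-b) (a*b) (a*b) = -a := by
    rw [Affine.slope_of_Y_ne rfl hy]
    simp only [Affine.negY, W, toAffine]
    rw [div_eq_iff (by
      intro hc
      have h20 : 2*(a*b) = 0 := by linear_combination hc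
      exact mul_ne_zero ha hb ((mul_eq_zero.mp h20).resolve_left h2))]
    ring
  rw [hsl]
  simp only [Affine.addY, Affine.negAddY, Affine.addX, Affine.negY, W, toAffine]
  ring

end Helpers

/-- versal family of elliptic curves with a point of order 4 and exactly one
point of order 2, over a field of characteristic ≠ 2. -/
theorem order_four_versal_family {K : Type*} [Field K] (h2 : (2 : K) ≠ 0)
    (E : WeierstrassCurve K) (hE₁ : E.a₁ = 0) (hE₃ : E.a₃ = 0) (hΔ : E.Δ ≠ 0)
    (a : K) (ha : a ≠ 0) :
    ((∃! P : E.toAffine.Point, addOrderOf P = 2) ∧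
      ∃ P : E.toAffine.Point, addOrderOf P = 4) ↔
    ∃ b : K, b ≠ 0 ∧ ¬ IsSquare (a ^ 2 + 4 * b) ∧
      ∃ C : VariableChange K,
        C • E =
          ⟨0, a ^ 2 + 2 * b, 0, b ^ 2, 0⟩ := by
  rw [lhs_iff_Phi h2 hE₁ hE₃ hΔ]
  constructor
  · rintro ⟨huniq, x₀, y₀, heq, hy₀, haddY⟩
    set ℓ := E.toAffine.slope x₀ x₀ y₀ y₀ with hℓdef
    have hy₀' : y₀ ≠ E.toAffine.negY x₀ y₀ := by
      rw [negY_eq' _ hE₁ hE₃]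
      intro hc
      have h2y : 2 * y₀ = 0 := by linear_combination hc
      exact hy₀ ((mul_eq_zero.mp h2y).resolve_left h2)
    have hsl : ℓ * (y₀ - E.toAffine.negY x₀ y₀) =
        3*x₀^2 + 2*E.a₂*x₀ + E.a₄ - E.a₁*y₀ := by
      rw [hℓdef, Affine.slope_of_Y_ne rfl hy₀', div_mul_cancel₀]
      exact sub_ne_zero_of_ne hy₀'
    rw [negY_eq' _ hE₁ hE₃, hE₁] at hsl
    set r := E.toAffine.addX x₀ x₀ ℓ with hrdef
    have hr : r = ℓ^2 - E.a₂ - 2*x₀ := by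
      rw [hrdef]; simp only [Affine.addX, hE₁]; ring
    have heqr : E.toAffine.Equation r 0 := by
      have h := Affine.equation_add (W := E.toAffine) heq heq (fun h => hy₀' h.2)
      rw [← hℓdef, ← hrdef, haddY] at h
      exact h
    have haddY' : ℓ*(x₀ - r) = y₀ := by
      have h := haddY
      simp only [Affine.addY, Affine.negAddY, Affine.negY, hE₁, hE₃, ← hrdef] at h
      linear_combination h
    have hl0 : ℓ ≠ 0 := fun h0 => hy₀ (by rw [← haddY', h0, zero_mul])
    have hxr : x₀ - r ≠ 0 := fun h0 => hy₀ (by rw [← haddY', h0, mul_zero])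
    have hroot : ∀ x : K, E.toAffine.Equation x 0 → x = r := by
      intro x hx
      obtain ⟨p, hp, hup⟩ := huniq
      have hh1 := hup (x, 0) ⟨hx, rfl⟩
      have hh2 := hup (r, 0) ⟨heqr, rfl⟩
      have := hh1.trans hh2.symm
      exact congrArg Prod.fst this
    have hA : 2*ℓ^2*(x₀ - r) = 3*x₀^2 + 2*E.a₂*x₀ + E.a₄ := by
      linear_combination hsl + 2*ℓ*haddY'
    have hkey : E.a₄ + 2*r*E.a₂ + 3*r^2 = (x₀ - r)^2 := by
      linear_combination -hA - 2*(x₀-r)*hr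
    have heqr' : r^3 + E.a₂*r^2 + E.a₄*r + E.a₆ = 0 := by
      have h := (Affine.equation_iff _ _).mp heqr
      rw [hE₁, hE₃] at h
      linear_combination -h
    have hua : ℓ/a ≠ 0 := div_ne_zero hl0 ha
    set b := -(x₀ - r)*a^2/ℓ^2 with hbdef
    have hbne : b ≠ 0 := by
      rw [hbdef]
      exact div_ne_zero (mul_ne_zero (neg_ne_zero.mpr hxr) (pow_ne_zero 2 ha))
        (pow_ne_zero 2 hl0)
    have hC : (⟨Units.mk0 (ℓ/a) hua, r, 0, 0⟩ : VariableChange K) • E =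
        ⟨0, a^2+2*b, 0, b^2, 0⟩ := by
      ext <;> simp only [variableChange_a₁, variableChange_a₂, variableChange_a₃,
        variableChange_a₄, variableChange_a₆, hE₁, hE₃, Units.val_inv_eq_inv_val,
        Units.val_mk0, hbdef]
      · ring
      · field_simp
        linear_combination hr
      · ring
      · field_simp
        linear_combination hkey
      · field_simp
        linear_combination (a^6)*heqr'
    have hnsq : ¬ IsSquare (a^2 + 4*b) := by
      rintro ⟨w, hw⟩
      set ξ := (a*w - (a^2+2*b))/2 with hxidef
      have hquad : ξ^2 + (a^2+2*b)*ξ + b^2 = 0 := by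
        rw [hxidef]
        field_simp
        linear_combination (-a^2)*hw
      have hE4x : (⟨0, a^2+2*b, 0, b^2, 0⟩ : WeierstrassCurve K).toAffine.Equation ξ 0 := by
        rw [Affine.equation_iff]
        simp only [toAffine]
        linear_combination -ξ*hquad
      have hEx : E.toAffine.Equation ((ℓ/a)^2*ξ + r) 0 := by
        have h := (equation_vc (W := E.toAffine) ⟨Units.mk0 (ℓ/a) hua, r, 0, 0⟩ rfl rfl ξ 0).mp (by
          simp only [toAffine]
          rw [hC]
          exact hE4x)
        simp only [Units.val_mk0, mul_zero] at h
        exact h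
      have hxr0 := hroot _ hEx
      have hξ0 : ξ = 0 := by
        have h0 : (ℓ/a)^2*ξ = 0 := by linear_combination hxr0
        rcases mul_eq_zero.mp h0 with h'|h'
        · exact absurd h' (pow_ne_zero 2 hua)
        · exact h'
      rw [hξ0] at hquad
      apply hbne
      have hb2 : b^2 = 0 := by linear_combination hquad
      exact pow_eq_zero_iff (two_ne_zero) |>.mp hb2
    refine ⟨b, hbne, ?_, ⟨Units.mk0 (ℓ/a) hua, r, 0, 0⟩, ?_⟩
    · convert hnsq using 2 <;> ring_nf
    · convert hC using 2 <;> ring_nf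
  · rintro ⟨b, hb, hnsq, C, hC⟩
    have hu : (C.u : K) ≠ 0 := C.u.ne_zero
    have hs : C.s = 0 := by
      have h := congrArg WeierstrassCurve.a₁ hC
      rw [variableChange_a₁, hE₁, Units.val_inv_eq_inv_val] at h
      rcases mul_eq_zero.mp h with h' | h'
      · exact absurd h' (inv_ne_zero hu)
      · have h'' : 2 * C.s = 0 := by linear_combination h'
        exact (mul_eq_zero.mp h'').resolve_left h2
    have ht : C.t = 0 := by
      have h := congrArg WeierstrassCurve.a₃ hC
      rw [variableChange_a₃, hE₁, hE₃, Units.val_inv_eq_inv_val] at h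
      rcases mul_eq_zero.mp h with h' | h'
      · exact absurd h' (pow_ne_zero 3 (inv_ne_zero hu))
      · have h'' : 2 * C.t = 0 := by linear_combination h'
        exact (mul_eq_zero.mp h'').resolve_left h2
    constructor
    · -- unique 2-torsion pair
      refine ⟨(C.r, 0), ⟨?_, rfl⟩, ?_⟩
      · have h00 := (equation_vc (W := E.toAffine) C hs ht 0 0).mp (by
          simp only [toAffine]
          rw [hC]
          exact E4_eq00 a b)
        simpa using h00
      · rintro ⟨x, y⟩ ⟨heq, hy⟩
        dsimp only at heq hy ⊢
        subst hy
        have hx : (C.u:K)^2 * ((x - C.r)/(C.u:K)^2) + C.r = x := by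
            rw [mul_div_assoc', mul_div_cancel_left₀ _ (pow_ne_zero 2 hu)]; ring
        have hXeq : (C • E).toAffine.Equation ((x - C.r)/(C.u:K)^2) 0 := by
          apply (equation_vc (W := E.toAffine) C hs ht _ 0).mpr
          rw [mul_zero, hx]
          exact heq
        rw [hC] at hXeq
        have hX0 := E4_unique h2 ha hb hnsq _ hXeq
        have : x = C.r := by
          field_simp at hX0
          linear_combination hX0
        rw [this]
    · -- point of order 4 data
      refine ⟨(C.u:K)^2*(-b) + C.r, (C.u:K)^3*(a*b), ?_, ?_, ?_⟩
      · apply (equation_vc (W := E.toAffine) C hs ht (-b) (a*b)).mp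
        simp only [toAffine]
        rw [hC]
        exact E4_equation a b
      · exact mul_ne_zero (pow_ne_zero 3 hu) (mul_ne_zero ha hb)
      · rw [addY_vc h2 hE₁ hE₃ C hs ht (-b) (a*b) (mul_ne_zero ha hb)]
        have : (C • E.toAffine).toAffine = (⟨0, a^2+2*b, 0, b^2, 0⟩ : WeierstrassCurve K).toAffine := by
          simp only [toAffine]
          rw [hC]
        rw [this, E4_addY h2 ha hb, mul_zero]
end

section
/- Let K be a field of characteristic different from 2 and let E be an elliptic curve over K given by y² = f(x) with f ∈ K[x] a monic cubic without repeated roots. Then the following are equivalent: (i) E(K) contains exactly one point of order 2 and contains a point of order 6; (ii) there exists t ∈ K with t ∉ {0, −4, 1/2} such that t² + 4t is not a square in K and E is K-isomorphic to the elliptic curve E⁽⁶⁾_t : y² = (x² + (t² + 2t)x + t²)(x + 1). -/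
open WeierstrassCurve Affine WeierstrassCurve.Affine.Point
open Classical

namespace VersalSix
variable {K : Type*} [Field K]

lemma some_eq_some {W : WeierstrassCurve K} {x₁ x₂ y₁ y₂ : K} (h₁ : W.toAffine.Nonsingular x₁ y₁)
    (h₂ : W.toAffine.Nonsingular x₂ y₂) (hx : x₁ = x₂) (hy : y₁ = y₂) :
    Point.some _ _ h₁ = Point.some _ _ h₂ := by subst hx; subst hy; rfl

lemma some_inj {W : WeierstrassCurve K} {x₁ x₂ y₁ y₂ : K} {h₁ : W.toAffine.Nonsingular x₁ y₁}
    {h₂ : W.toAffine.Nonsingular x₂ y₂} (h : Point.some _ _ h₁ = Point.some _ _ h₂) :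
    x₁ = x₂ ∧ y₁ = y₂ := by cases h; exact ⟨rfl, rfl⟩

section VC

variable {W W' : WeierstrassCurve K} {u r : K}

variable (hu : u ≠ 0) (hΔ : W.Δ ≠ 0)
  (h1 : W.a₁ = 0) (h3 : W.a₃ = 0) (e1 : W'.a₁ = 0) (e3 : W'.a₃ = 0)
  (e2 : W.a₂ = u ^ 2 * W'.a₂ - 3 * r)
  (e4 : W.a₄ = u ^ 4 * W'.a₄ - 2 * r * W.a₂ - 3 * r ^ 2)
  (e6 : W.a₆ = u ^ 6 * W'.a₆ - r * W.a₄ - r ^ 2 * W.a₂ - r ^ 3)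

include h1 h3 e1 e3 in
lemma vc_negY (x y : K) : W.toAffine.negY (u ^ 2 * x + r) (u ^ 3 * y) =
    u ^ 3 * W'.toAffine.negY x y := by
  simp only [Affine.negY, h1, h3, e1, e3]; ring

include h1 h3 e1 e3 e2 e4 e6 in
lemma vc_equation {x y : K} (h : W'.toAffine.Equation x y) :
    W.toAffine.Equation (u ^ 2 * x + r) (u ^ 3 * y) := by
  rw [Affine.equation_iff] at h ⊢
  rw [e6, e4, e2] at *
  rw [h1, h3] at *
  rw [e1, e3] at h
  linear_combination u ^ 6 * h

include hu h1 h3 e1 e3 e2 e4 e6 in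
lemma vc_equation_rev {x y : K} (h : W.toAffine.Equation (u ^ 2 * x + r) (u ^ 3 * y)) :
    W'.toAffine.Equation x y := by
  rw [Affine.equation_iff] at h ⊢
  rw [e6, e4, e2] at *
  rw [h1, h3] at *
  rw [e1, e3]
  have key : u ^ 6 * (y ^ 2 - (x ^ 3 + W'.a₂ * x ^ 2 + W'.a₄ * x + W'.a₆)) = 0 := by
    linear_combination h
  have := (mul_eq_zero.mp key).resolve_left (pow_ne_zero 6 hu)
  linear_combination this

include hu hΔ h1 h3 e1 e3 e2 e4 e6 in
lemma vc_nonsingular {x y : K} (h : W'.toAffine.Nonsingular x y) :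
    W.toAffine.Nonsingular (u ^ 2 * x + r) (u ^ 3 * y) :=
  (Affine.equation_iff_nonsingular_of_Δ_ne_zero (W := W.toAffine) hΔ).mp
    (vc_equation h1 h3 e1 e3 e2 e4 e6 h.1)

include hu h1 h3 e1 e3 e2 e4 in
lemma vc_slope (x₁ x₂ y₁ y₂ : K) :
    W.toAffine.slope (u ^ 2 * x₁ + r) (u ^ 2 * x₂ + r) (u ^ 3 * y₁) (u ^ 3 * y₂) =
    u * W'.toAffine.slope x₁ x₂ y₁ y₂ := by
  by_cases hx : x₁ = x₂
  · by_cases hy : y₁ = W'.toAffine.negY x₂ y₂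
    · rw [Affine.slope_of_Y_eq hx hy, Affine.slope_of_Y_eq (by rw [hx])
        (by rw [hy, vc_negY h1 h3 e1 e3]), mul_zero]
    · rw [Affine.slope_of_Y_ne hx hy, Affine.slope_of_Y_ne (by rw [hx])
        (by rw [vc_negY h1 h3 e1 e3]
            exact fun hc => hy (mul_left_cancel₀ (pow_ne_zero 3 hu) hc))]
      rcases eq_or_ne (y₁ - W'.toAffine.negY x₁ y₁) 0 with hd | hd
      · have hd' : u ^ 3 * y₁ - W.toAffine.negY (u ^ 2 * x₁ + r) (u ^ 3 * y₁) = 0 := by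
          rw [vc_negY h1 h3 e1 e3]; linear_combination u ^ 3 * hd
        rw [hd', div_zero, hd, div_zero, mul_zero]
      · have hd' : u ^ 3 * y₁ - W.toAffine.negY (u ^ 2 * x₁ + r) (u ^ 3 * y₁) =
            u ^ 3 * (y₁ - W'.toAffine.negY x₁ y₁) := by
          rw [vc_negY h1 h3 e1 e3]; ring
        rw [hd', div_eq_iff (mul_ne_zero (pow_ne_zero 3 hu) hd)]
        have hBd : ∀ B : K, u * (B / (y₁ - W'.toAffine.negY x₁ y₁)) *
            (u ^ 3 * (y₁ - W'.toAffine.negY x₁ y₁)) = u ^ 4 * B := by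
          intro B
          have hh : u * (B / (y₁ - W'.toAffine.negY x₁ y₁)) *
              (u ^ 3 * (y₁ - W'.toAffine.negY x₁ y₁)) = u ^ 4 * B *
              ((y₁ - W'.toAffine.negY x₁ y₁) / (y₁ - W'.toAffine.negY x₁ y₁)) := by ring
          rw [hh, div_self hd, mul_one]
        rw [hBd]
        rw [h1, e1, e4, e2]
        ring
  · have hx' : u ^ 2 * x₁ + r ≠ u ^ 2 * x₂ + r := fun hc => hx <| by
      have : u ^ 2 * x₁ = u ^ 2 * x₂ := by linear_combination hc
      exact mul_left_cancel₀ (pow_ne_zero 2 hu) this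
    rw [Affine.slope_of_X_ne hx, Affine.slope_of_X_ne hx']
    rw [← mul_div_assoc, div_eq_div_iff (sub_ne_zero.mpr hx') (sub_ne_zero.mpr hx)]
    ring

include h1 e1 e2 in
lemma vc_addX (x₁ x₂ L : K) :
    W.toAffine.addX (u ^ 2 * x₁ + r) (u ^ 2 * x₂ + r) (u * L) =
    u ^ 2 * W'.toAffine.addX x₁ x₂ L + r := by
  simp only [Affine.addX, h1, e1, e2]; ring

include h1 h3 e1 e3 e2 in
lemma vc_addY (x₁ x₂ y₁ L : K) :
    W.toAffine.addY (u ^ 2 * x₁ + r) (u ^ 2 * x₂ + r) (u ^ 3 * y₁) (u * L) =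
    u ^ 3 * W'.toAffine.addY x₁ x₂ y₁ L := by
  simp only [Affine.addY, Affine.negAddY, Affine.negY, Affine.addX, h1, h3, e1, e3, e2]; ring

variable (W W' u r) in
include hu hΔ h1 h3 e1 e3 e2 e4 e6 in
/-- The map on points induced by a variable change with `s = t = 0`. -/
noncomputable def vcFun : W'.toAffine.Point → W.toAffine.Point
  | .zero => .zero
  | .some _ _ h => .some _ _ (vc_nonsingular hu hΔ h1 h3 e1 e3 e2 e4 e6 h)

@[simp] lemma vcFun_zero : vcFun W W' u r hu hΔ h1 h3 e1 e3 e2 e4 e6 0 = 0 := rfl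

@[simp] lemma vcFun_some {x y : K} (h : W'.toAffine.Nonsingular x y) :
    vcFun W W' u r hu hΔ h1 h3 e1 e3 e2 e4 e6 (.some _ _ h) =
    .some _ _ (vc_nonsingular hu hΔ h1 h3 e1 e3 e2 e4 e6 h) := rfl

lemma vcFun_add (P Q : W'.toAffine.Point) :
    vcFun W W' u r hu hΔ h1 h3 e1 e3 e2 e4 e6 (P + Q) =
    vcFun W W' u r hu hΔ h1 h3 e1 e3 e2 e4 e6 P +
    vcFun W W' u r hu hΔ h1 h3 e1 e3 e2 e4 e6 Q := by
  cases P with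
  | zero => rw [show (Point.zero : W'.toAffine.Point) = 0 from rfl, zero_add, vcFun_zero, zero_add]
  | some x₁ y₁ h₁ =>
    cases Q with
    | zero => rw [show (Point.zero : W'.toAffine.Point) = 0 from rfl, add_zero, vcFun_zero, add_zero]
    | some x₂ y₂ h₂ =>
      by_cases hxy : x₁ = x₂ ∧ y₁ = W'.toAffine.negY x₂ y₂
      · rw [Point.add_of_Y_eq hxy.1 hxy.2, vcFun_zero, vcFun_some, vcFun_some,
          Point.add_of_Y_eq (by rw [hxy.1]) (by rw [hxy.2, vc_negY h1 h3 e1 e3])]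
      · have himp : x₁ = x₂ → y₁ ≠ W'.toAffine.negY x₂ y₂ := fun hx hy => hxy ⟨hx, hy⟩
        have himp' : u ^ 2 * x₁ + r = u ^ 2 * x₂ + r →
            u ^ 3 * y₁ ≠ W.toAffine.negY (u ^ 2 * x₂ + r) (u ^ 3 * y₂) := by
          intro hX hY
          have hx : x₁ = x₂ := by
            have : u ^ 2 * x₁ = u ^ 2 * x₂ := by linear_combination hX
            exact mul_left_cancel₀ (pow_ne_zero 2 hu) this
          refine himp hx ?_
          rw [vc_negY h1 h3 e1 e3] at hY
          exact mul_left_cancel₀ (pow_ne_zero 3 hu) hY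
        rw [Point.add_some (fun hxy => himp hxy.1 hxy.2), vcFun_some, vcFun_some, vcFun_some,
          Point.add_some (fun hxy => himp' hxy.1 hxy.2)]
        apply some_eq_some
        · rw [vc_slope hu h1 h3 e1 e3 e2 e4 x₁ x₂ y₁ y₂, vc_addX h1 e1 e2]
        · rw [vc_slope hu h1 h3 e1 e3 e2 e4 x₁ x₂ y₁ y₂, vc_addY h1 h3 e1 e3 e2]

variable (W W' u r) in
include hu hΔ h1 h3 e1 e3 e2 e4 e6 in
/-- The additive hom on points induced by a variable change with `s = t = 0`. -/
noncomputable def vcHom : W'.toAffine.Point →+ W.toAffine.Point :=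
  AddMonoidHom.mk' (vcFun W W' u r hu hΔ h1 h3 e1 e3 e2 e4 e6)
    (vcFun_add hu hΔ h1 h3 e1 e3 e2 e4 e6)

include hu hΔ h1 h3 e1 e3 e2 e4 e6 in
lemma vcHom_bijective (hΔ' : W'.Δ ≠ 0) :
    Function.Bijective (vcHom W W' u r hu hΔ h1 h3 e1 e3 e2 e4 e6) := by
  constructor
  · intro P Q h
    cases P with
    | zero =>
      cases Q with
      | zero => rfl
      | some _ _ h₂ => exact absurd h.symm (Point.some_ne_zero _)
    | some x₁ y₁ h₁ =>
      cases Q with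
      | zero => exact absurd h (Point.some_ne_zero _)
      | some x₂ y₂ h₂ =>
        obtain ⟨hX, hY⟩ := some_inj h
        refine some_eq_some _ _ ?_ ?_
        · exact mul_left_cancel₀ (pow_ne_zero 2 hu) (by linear_combination hX)
        · exact mul_left_cancel₀ (pow_ne_zero 3 hu) hY
  · intro P
    cases P with
    | zero => exact ⟨0, rfl⟩
    | some X Y h =>
      have hX : u ^ 2 * ((X - r) / u ^ 2) + r = X := by field_simp; ring
      have hY : u ^ 3 * (Y / u ^ 3) = Y := by field_simp
      have heq : W'.toAffine.Equation ((X - r) / u ^ 2) (Y / u ^ 3) := by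
        refine vc_equation_rev hu h1 h3 e1 e3 e2 e4 e6 ?_
        rw [hX, hY]; exact h.1
      refine ⟨.some _ _ ((Affine.equation_iff_nonsingular_of_Δ_ne_zero (W := W'.toAffine) hΔ').mp heq), ?_⟩
      exact some_eq_some _ _ hX hY

variable (W W' u r) in
include hu hΔ h1 h3 e1 e3 e2 e4 e6 in
/-- The additive equivalence on points induced by a variable change with `s = t = 0`. -/
noncomputable def vcEquiv (hΔ' : W'.Δ ≠ 0) : W'.toAffine.Point ≃+ W.toAffine.Point :=
  AddEquiv.ofBijective _ (vcHom_bijective hu hΔ h1 h3 e1 e3 e2 e4 e6 hΔ')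

lemma vcEquiv_some (hΔ' : W'.Δ ≠ 0) {x y : K} (h : W'.toAffine.Nonsingular x y) :
    vcEquiv W W' u r hu hΔ h1 h3 e1 e3 e2 e4 e6 hΔ' (.some _ _ h) =
    .some _ _ (vc_nonsingular hu hΔ h1 h3 e1 e3 e2 e4 e6 h) := rfl

lemma vcEquiv_addOrderOf (hΔ' : W'.Δ ≠ 0) (P : W'.toAffine.Point) :
    addOrderOf (vcEquiv W W' u r hu hΔ h1 h3 e1 e3 e2 e4 e6 hΔ' P) = addOrderOf P :=
  AddEquiv.addOrderOf_eq _ P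

end VC

section Torsion

variable {W : WeierstrassCurve K} (h2 : (2 : K) ≠ 0) (hΔ : W.Δ ≠ 0)
  (h1 : W.a₁ = 0) (h3 : W.a₃ = 0)

include h1 h3 in
lemma negY_eq (x y : K) : W.toAffine.negY x y = -y := by
  simp [Affine.negY, h1, h3]

include h2 h1 h3 in
lemma order_two_iff (P : W.toAffine.Point) :
    addOrderOf P = 2 ↔ ∃ (x : K) (hx : W.toAffine.Nonsingular x 0), P = .some _ _ hx := by
  constructor
  · intro hP
    have hP0 : P ≠ 0 := by
      rintro rfl
      rw [addOrderOf_zero] at hP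
      norm_num at hP
    have h2P : (2 : ℕ) • P = 0 := by rw [← hP]; exact addOrderOf_nsmul_eq_zero P
    cases P with
    | zero => exact absurd rfl hP0
    | some x y h =>
      rw [two_smul] at h2P
      by_cases hy : y = W.toAffine.negY x y
      · have hy0 : y = 0 := by
          rw [negY_eq h1 h3] at hy
          have h2y : 2 * y = 0 := by linear_combination hy
          exact (mul_eq_zero.mp h2y).resolve_left h2
        exact ⟨x, hy0 ▸ h, some_eq_some _ _ rfl hy0⟩
      · rw [Point.add_of_Y_ne hy] at h2P
        exact absurd h2P (Point.some_ne_zero _)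
  · rintro ⟨x, hx, rfl⟩
    haveI : Fact (Nat.Prime 2) := ⟨Nat.prime_two⟩
    refine addOrderOf_eq_prime ?_ (Point.some_ne_zero hx)
    rw [two_smul]
    exact Point.add_of_Y_eq rfl (by rw [negY_eq h1 h3, _root_.neg_zero])

include h2 hΔ h1 h3 in
lemma unique_two_torsion_iff :
    (∃! P : W.toAffine.Point, addOrderOf P = 2) ↔ ∃! x : K, W.toAffine.Equation x 0 := by
  constructor
  · rintro ⟨P, hP, huniq⟩
    obtain ⟨x, hx, rfl⟩ := (order_two_iff h2 h1 h3 P).mp hP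
    refine ⟨x, hx.1, ?_⟩
    intro x' hx'
    have hns' := (Affine.equation_iff_nonsingular_of_Δ_ne_zero (W := W.toAffine) hΔ).mp hx'
    have heq : Point.some _ _ hns' = Point.some _ _ hx :=
      huniq _ ((order_two_iff h2 h1 h3 _).mpr ⟨x', hns', rfl⟩)
    exact (some_inj heq).1
  · rintro ⟨x, hx, huniq⟩
    have hns := (Affine.equation_iff_nonsingular_of_Δ_ne_zero (W := W.toAffine) hΔ).mp hx
    refine ⟨.some _ _ hns, (order_two_iff h2 h1 h3 _).mpr ⟨x, hns, rfl⟩, ?_⟩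
    intro P hP
    obtain ⟨x', hx', rfl⟩ := (order_two_iff h2 h1 h3 P).mp hP
    exact some_eq_some _ _ (huniq x' hx'.1) rfl

include h2 h1 h3 in
lemma order_three_key {x₀ y₀ : K} (h : W.toAffine.Nonsingular x₀ y₀) (hy : y₀ ≠ 0)
    (h3Q : (3 : ℕ) • (Point.some _ _ h) = 0) :
    (3 * x₀ ^ 2 + 2 * W.a₂ * x₀ + W.a₄) ^ 2 = 4 * y₀ ^ 2 * (W.a₂ + 3 * x₀) := by
  have hy' : y₀ ≠ W.toAffine.negY x₀ y₀ := by
    rw [negY_eq h1 h3]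
    intro hc
    exact hy ((mul_eq_zero.mp (by linear_combination hc : 2 * y₀ = 0)).resolve_left h2)
  have h2Q : Point.some _ _ h + Point.some _ _ h = -Point.some _ _ h := by
    have h' : (Point.some _ _ h + Point.some _ _ h) + Point.some _ _ h = 0 := by
      rw [← h3Q, succ_nsmul, two_smul]
    exact eq_neg_of_add_eq_zero_left h'
  rw [Point.add_of_Y_ne hy', Point.neg_some] at h2Q
  obtain ⟨hX, -⟩ := some_inj h2Q
  rw [Affine.slope_of_Y_ne rfl hy'] at hX
  simp only [Affine.addX, negY_eq h1 h3, h1, h3] at hX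
  have hden : y₀ - -y₀ = 2 * y₀ := by ring
  rw [hden] at hX
  have h2y : 2 * y₀ ≠ 0 := mul_ne_zero h2 hy
  field_simp at hX
  linear_combination hX

end Torsion

section Etc

/-- The versal curve `E⁽⁶⁾_t`. -/
def Etc (t : K) : WeierstrassCurve K := ⟨0, (t ^ 2 + 2 * t) + 1, 0, (t ^ 2 + 2 * t) + t ^ 2, t ^ 2⟩

lemma Etc_a₁ (t : K) : (Etc t).a₁ = 0 := rfl
lemma Etc_a₃ (t : K) : (Etc t).a₃ = 0 := rfl

lemma Etc_Δ (t : K) : (Etc t).Δ = 16 * t ^ 3 * (t + 4) * (2 * t - 1) ^ 2 := by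
  simp only [Etc, WeierstrassCurve.Δ, WeierstrassCurve.b₂, WeierstrassCurve.b₄,
    WeierstrassCurve.b₆, WeierstrassCurve.b₈]
  ring

variable {t : K} (h2 : (2 : K) ≠ 0) (hΔt : (Etc t).Δ ≠ 0) (ht0 : t ≠ 0)

include h2 hΔt ht0 in
lemma Etc_exists_order_six : ∃ P : (Etc t).toAffine.Point, addOrderOf P = 6 := by
  have hQeq : (Etc t).toAffine.Equation 0 t := by
    rw [Affine.equation_iff]; simp only [Etc]; ring
  have hQns := (Affine.equation_iff_nonsingular_of_Δ_ne_zero (W := (Etc t).toAffine) hΔt).mp hQeq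
  have hReq : (Etc t).toAffine.Equation (-1) 0 := by
    rw [Affine.equation_iff]; simp only [Etc]; ring
  have hRns := (Affine.equation_iff_nonsingular_of_Δ_ne_zero (W := (Etc t).toAffine) hΔt).mp hReq
  have hyne : t ≠ (Etc t).toAffine.negY 0 t := by
    rw [negY_eq (Etc_a₁ t) (Etc_a₃ t)]
    intro hc
    exact ht0 ((mul_eq_zero.mp (by linear_combination hc : 2 * t = 0)).resolve_left h2)
  have hslope : (Etc t).toAffine.slope 0 0 t t = t + 1 := by
    rw [Affine.slope_of_Y_ne rfl hyne, negY_eq (Etc_a₁ t) (Etc_a₃ t)]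
    rw [div_eq_iff (by intro hc; exact ht0 ((mul_eq_zero.mp
      (by linear_combination hc : 2 * t = 0)).resolve_left h2))]
    simp only [Etc]; ring
  have h2Q : Point.some _ _ hQns + Point.some _ _ hQns = -Point.some _ _ hQns := by
    rw [Point.add_of_Y_ne hyne, Point.neg_some]
    refine some_eq_some _ _ ?_ ?_
    · rw [hslope]; simp only [Affine.addX, Etc]; ring
    · rw [hslope, negY_eq (Etc_a₁ t) (Etc_a₃ t)]
      simp only [Affine.addY, Affine.negAddY, Affine.negY, Affine.addX, Etc]; ring
  have h3Q : (3 : ℕ) • Point.some _ _ hQns = 0 := by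
    rw [succ_nsmul, two_smul, h2Q, neg_add_cancel]
  haveI : Fact (Nat.Prime 3) := ⟨Nat.prime_three⟩
  haveI : Fact (Nat.Prime 2) := ⟨Nat.prime_two⟩
  have hordQ : addOrderOf (Point.some _ _ hQns) = 3 :=
    addOrderOf_eq_prime h3Q (Point.some_ne_zero hQns)
  have hordR : addOrderOf (Point.some _ _ hRns) = 2 :=
    (order_two_iff h2 (Etc_a₁ t) (Etc_a₃ t) _).mpr ⟨-1, hRns, rfl⟩
  refine ⟨Point.some _ _ hQns + Point.some _ _ hRns, ?_⟩
  rw [(AddCommute.all _ _).addOrderOf_add_eq_mul_addOrderOf_of_coprime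
    (by rw [hordQ, hordR]; decide), hordQ, hordR]

include h2 ht0 in
lemma Etc_unique_root (hsq : ¬IsSquare (t ^ 2 + 4 * t)) :
    ∃! x : K, (Etc t).toAffine.Equation x 0 := by
  refine ⟨-1, show (Etc t).toAffine.Equation (-1) 0 by rw [Affine.equation_iff]; simp only [Etc]; ring, ?_⟩
  intro x' hx'
  rw [Affine.equation_iff] at hx'
  simp only [Etc] at hx'
  have hfac : (x' + 1) * (x' ^ 2 + (t ^ 2 + 2 * t) * x' + t ^ 2) = 0 := by
    linear_combination -hx'
  rcases mul_eq_zero.mp hfac with hl | hq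
  · linear_combination hl
  · exfalso
    refine hsq ⟨(2 * x' + (t ^ 2 + 2 * t)) / t, ?_⟩
    rw [div_mul_div_comm, eq_div_iff (mul_ne_zero ht0 ht0)]
    linear_combination -4 * hq

end Etc

section Bundle

variable {W W' : WeierstrassCurve K}

lemma exists_vcEquiv (hΔ : W.Δ ≠ 0) (h1 : W.a₁ = 0) (h3 : W.a₃ = 0) (v : Kˣ) (r : K)
    (hW' : W' = (⟨v, r, 0, 0⟩ : VariableChange K) • W) :
    ∃ φ : W'.toAffine.Point ≃+ W.toAffine.Point,
      (∀ P : W'.toAffine.Point, addOrderOf (φ P) = addOrderOf P) ∧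
      ∀ (x y : K) (h : W'.toAffine.Nonsingular x y),
        ∃ h' : W.toAffine.Nonsingular ((v : K) ^ 2 * x + r) ((v : K) ^ 3 * y),
          φ (.some _ _ h) = .some _ _ h' := by
  have hv : (v : K) ≠ 0 := v.ne_zero
  have hvv : ((v⁻¹ : Kˣ) : K) = (v : K)⁻¹ := Units.val_inv_eq_inv_val v
  have e1 : W'.a₁ = 0 := by rw [hW']; simp [variableChange_a₁, h1]
  have e3 : W'.a₃ = 0 := by rw [hW']; simp [variableChange_a₃, h1, h3]
  have e2 : W.a₂ = (v : K) ^ 2 * W'.a₂ - 3 * r := by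
    rw [hW']; simp only [variableChange_a₂, h1, hvv]; field_simp; ring
  have e4 : W.a₄ = (v : K) ^ 4 * W'.a₄ - 2 * r * W.a₂ - 3 * r ^ 2 := by
    rw [hW']; simp only [variableChange_a₄, h1, h3, hvv]; field_simp; ring
  have e6 : W.a₆ = (v : K) ^ 6 * W'.a₆ - r * W.a₄ - r ^ 2 * W.a₂ - r ^ 3 := by
    rw [hW']; simp only [variableChange_a₆, h1, h3, hvv]; field_simp; ring
  have hΔ' : W'.Δ ≠ 0 := by
    rw [hW', variableChange_Δ]
    exact mul_ne_zero (pow_ne_zero 12 (Units.ne_zero _)) hΔ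
  refine ⟨vcEquiv W W' (v : K) r hv hΔ h1 h3 e1 e3 e2 e4 e6 hΔ', ?_, ?_⟩
  · exact fun P => AddEquiv.addOrderOf_eq _ P
  · exact fun x y h => ⟨_, vcEquiv_some hv hΔ h1 h3 e1 e3 e2 e4 e6 hΔ' h⟩

end Bundle
end VersalSix

open VersalSix

open Classical in
/-- versal family of elliptic curves with a point of order 6 and exactly one
point of order 2, over a field of characteristic ≠ 2.  The curve
`E⁽⁶⁾_t : y² = (x² + (t² + 2t)x + t²)(x + 1)` has expanded Weierstrass form
`y² = x³ + (t² + 2t + 1)x² + (2t² + 2t)x + t²`. -/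
theorem order_six_versal_family {K : Type*} [Field K] (h2 : (2 : K) ≠ 0)
    (E : WeierstrassCurve K) (hE₁ : E.a₁ = 0) (hE₃ : E.a₃ = 0) (hΔ : E.Δ ≠ 0) :
    ((∃! P : E.toAffine.Point, addOrderOf P = 2) ∧
      ∃ P : E.toAffine.Point, addOrderOf P = 6) ↔
    ∃ t : K, t ≠ 0 ∧ t ≠ -4 ∧ t ≠ 1 / 2 ∧ ¬ IsSquare (t ^ 2 + 4 * t) ∧
      ∃ C : VariableChange K,
        C • E =
          ⟨0, (t ^ 2 + 2 * t) + 1, 0, (t ^ 2 + 2 * t) + t ^ 2, t ^ 2⟩ := by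
  constructor
  · rintro ⟨hU, P₆, hP₆⟩
    -- `Q = 2 • P₆` is a point of order 3
    have h6 : (6 : ℕ) • P₆ = 0 := by rw [← hP₆]; exact addOrderOf_nsmul_eq_zero P₆
    have hQ3 : (3 : ℕ) • ((2 : ℕ) • P₆) = 0 := by rw [smul_smul]; exact h6
    have hQ0 : (2 : ℕ) • P₆ ≠ 0 := by
      intro hc
      have hdvd := addOrderOf_dvd_of_nsmul_eq_zero hc
      rw [hP₆] at hdvd
      norm_num at hdvd
    cases hQdef : ((2 : ℕ) • P₆) with
    | zero => exact absurd hQdef hQ0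
    | some x₀ y₀ hQns =>
    rw [hQdef] at hQ3 hQ0
    have hy₀ : y₀ ≠ 0 := by
      intro h0
      subst h0
      have h2Q0 : Point.some _ _ hQns + Point.some _ _ hQns = 0 :=
        Point.add_of_Y_eq rfl (by rw [negY_eq hE₁ hE₃, _root_.neg_zero])
      rw [succ_nsmul, two_smul, h2Q0, zero_add] at hQ3
      exact hQ0 hQ3
    have hkey := order_three_key h2 hE₁ hE₃ hQns hy₀ hQ3
    have hQeq : y₀ ^ 2 = x₀ ^ 3 + E.a₂ * x₀ ^ 2 + E.a₄ * x₀ + E.a₆ := by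
      have h := hQns.1
      rw [Affine.equation_iff, hE₁, hE₃] at h
      linear_combination h
    -- the unique 2-torsion abscissa
    obtain ⟨e₀, he₀, -⟩ := (unique_two_torsion_iff h2 hΔ hE₁ hE₃).mp hU
    have he₀' : e₀ ^ 3 + E.a₂ * e₀ ^ 2 + E.a₄ * e₀ + E.a₆ = 0 := by
      have h := he₀
      rw [Affine.equation_iff, hE₁, hE₃] at h
      linear_combination -h
    have he0 : e₀ - x₀ ≠ 0 := by
      intro hc
      apply hy₀
      have hx : x₀ = e₀ := by linear_combination -hc
      have hsq0 : y₀ ^ 2 = 0 := by rw [hQeq, hx]; linear_combination he₀'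
      exact pow_eq_zero_iff (by norm_num : (2 : ℕ) ≠ 0) |>.mp hsq0
    set e := e₀ - x₀ with he_def
    have hcubic : e ^ 3 + (E.a₂ + 3 * x₀) * e ^ 2 +
        (3 * x₀ ^ 2 + 2 * E.a₂ * x₀ + E.a₄) * e + y₀ ^ 2 = 0 := by
      rw [he_def]; linear_combination he₀' + hQeq
    obtain ⟨γ, hγe⟩ : ∃ g : K, g * e = -(y₀ ^ 2) := ⟨-(y₀ ^ 2) / e, div_mul_cancel₀ _ he0⟩
    have hγ0 : γ ≠ 0 := by
      intro hc
      rw [hc, zero_mul] at hγe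
      exact hy₀ (pow_eq_zero_iff (by norm_num : (2 : ℕ) ≠ 0) |>.mp (by linear_combination hγe))
    set β := (E.a₂ + 3 * x₀) + e with hβ_def
    obtain ⟨w, hw2⟩ : ∃ w : K, 2 * e * w = γ + e * β :=
      ⟨(γ + e * β) / (2 * e), mul_div_cancel₀ _ (mul_ne_zero h2 he0)⟩
    have hB : 3 * x₀ ^ 2 + 2 * E.a₂ * x₀ + E.a₄ = γ - e * β := by
      apply mul_left_cancel₀ he0
      linear_combination hcubic - hγe
    have hA : E.a₂ + 3 * x₀ = β - e := by rw [hβ_def]; ring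
    rw [hB, hA] at hkey
    have hsq4 : (γ + e * β) ^ 2 = 4 * e ^ 2 * γ := by
      linear_combination hkey + 4 * (β - e) * hγe
    have hwsq : w ^ 2 = γ := by
      apply mul_left_cancel₀ (pow_ne_zero 2 (mul_ne_zero h2 he0))
      linear_combination (2 * e * w + (γ + e * β)) * hw2 + hsq4
    have hw0 : w ≠ 0 := fun hc => hγ0 (by rw [← hwsq, hc]; ring)
    obtain ⟨uu, huuw⟩ : ∃ u : K, u * w = y₀ := ⟨y₀ / w, div_mul_cancel₀ _ hw0⟩
    have huu0 : uu ≠ 0 := by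
      intro hc
      apply hy₀
      rw [← huuw, hc, zero_mul]
    have huu2 : uu ^ 2 = -e := by
      apply mul_right_cancel₀ (pow_ne_zero 2 hw0)
      linear_combination (uu * w + y₀) * huuw + hγe + e * hwsq
    obtain ⟨t, hte⟩ : ∃ t : K, t * e = -w := ⟨-w / e, div_mul_cancel₀ _ he0⟩
    have ht0 : t ≠ 0 := by
      intro hc
      rw [hc, zero_mul] at hte
      exact hw0 (by linear_combination hte)
    -- the variable change carries `E` to `Etc t`
    have hCeq : (⟨Units.mk0 uu huu0, x₀, 0, 0⟩ : VariableChange K) • E = Etc t := by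
      ext
      · show uu⁻¹ * (E.a₁ + 2 * 0) = 0
        rw [hE₁]; simp
      · show uu⁻¹ ^ 2 * (E.a₂ - 0 * E.a₁ + 3 * x₀ - 0 ^ 2) = (t ^ 2 + 2 * t) + 1
        rw [inv_pow, inv_mul_eq_iff_eq_mul₀ (pow_ne_zero 2 huu0)]
        apply mul_left_cancel₀ he0
        linear_combination (-(e * (t ^ 2 + 2 * t + 1))) * huu2 + (t * e - w + 2 * e) * hte +
          hwsq - hw2
      · show uu⁻¹ ^ 3 * (E.a₃ + x₀ * E.a₁ + 2 * 0) = 0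
        rw [hE₁, hE₃]; simp
      · show uu⁻¹ ^ 4 * (E.a₄ - 0 * E.a₃ + 2 * x₀ * E.a₂ - (0 + x₀ * 0) * E.a₁ + 3 * x₀ ^ 2 -
          2 * 0 * 0) = (t ^ 2 + 2 * t) + t ^ 2
        rw [hE₁, hE₃, inv_pow, inv_mul_eq_iff_eq_mul₀ (pow_ne_zero 4 huu0)]
        linear_combination hB - (2 * t ^ 2 + 2 * t) * (uu ^ 2 - e) * huu2 -
          (2 * (t * e - w) + 2 * e) * hte - 2 * hwsq + hw2
      · show uu⁻¹ ^ 6 * (E.a₆ + x₀ * E.a₄ + x₀ ^ 2 * E.a₂ + x₀ ^ 3 - 0 * E.a₃ - 0 ^ 2 -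
          x₀ * 0 * E.a₁) = t ^ 2
        rw [hE₁, hE₃, inv_pow, inv_mul_eq_iff_eq_mul₀ (pow_ne_zero 6 huu0)]
        linear_combination -hQeq - t ^ 2 * (uu ^ 4 - uu ^ 2 * e + e ^ 2) * huu2 +
          e * (t * e - w) * hte + e * hwsq + hγe
    have hΔt : (Etc t).Δ ≠ 0 := by
      rw [← hCeq, variableChange_Δ]
      exact mul_ne_zero (pow_ne_zero 12 (Units.ne_zero _)) hΔ
    have hfac : 16 * t ^ 3 * (t + 4) * (2 * t - 1) ^ 2 ≠ 0 := by rw [← Etc_Δ]; exact hΔt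
    have ht4 : t ≠ -4 := by
      intro hc
      exact hfac (by rw [hc]; ring)
    have ht12 : t ≠ 1 / 2 := by
      intro hc
      refine hfac ?_
      rw [hc, show (2 * (1 / 2 : K) - 1) = 0 by field_simp; ring]
      ring
    have hsqt : ¬IsSquare (t ^ 2 + 4 * t) := by
      rintro ⟨d, hd⟩
      obtain ⟨φ, hφord, -⟩ := exists_vcEquiv hΔ hE₁ hE₃ (Units.mk0 uu huu0) x₀ hCeq.symm
      have hUt : ∃! P : (Etc t).toAffine.Point, addOrderOf P = 2 :=
        (φ.toEquiv.existsUnique_congr (fun P => by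
          rw [show φ.toEquiv P = φ P from rfl, hφord])).mpr hU
      obtain ⟨xr, hxr, hxru⟩ :=
        (unique_two_torsion_iff h2 hΔt (Etc_a₁ t) (Etc_a₃ t)).mp hUt
      obtain ⟨x', hx'2⟩ : ∃ x' : K, 2 * x' = t * d - (t ^ 2 + 2 * t) :=
        ⟨(t * d - (t ^ 2 + 2 * t)) / 2, mul_div_cancel₀ _ h2⟩
      have h4 : (4 : K) ≠ 0 := by
        rw [show (4 : K) = 2 * 2 by norm_num]
        exact mul_ne_zero h2 h2
      have hx'root : (Etc t).toAffine.Equation x' 0 := by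
        rw [Affine.equation_iff]
        apply mul_left_cancel₀ h4
        simp only [Etc]
        linear_combination -((x' + 1) * (2 * x' + t * d + (t ^ 2 + 2 * t))) * hx'2 +
          (x' + 1) * t ^ 2 * hd
      have hm1root : (Etc t).toAffine.Equation (-1) 0 := by
        rw [Affine.equation_iff]; simp only [Etc]; ring
      have h1r := hxru _ hm1root
      have h2r := hxru _ hx'root
      have hx'm1 : x' = -1 := by rw [h2r, ← h1r]
      have hTD : t * d = t ^ 2 + 2 * t - 2 := by
        rw [hx'm1] at hx'2
        linear_combination -hx'2
      have h8t : 8 * t - 4 = 0 := by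
        linear_combination t ^ 2 * hd + (t * d + t ^ 2 + 2 * t - 2) * hTD
      have h2t : 2 * t - 1 = 0 := by
        have h44 : 4 * (2 * t - 1) = 0 := by linear_combination h8t
        exact (mul_eq_zero.mp h44).resolve_left h4
      exact ht12 (by rw [eq_div_iff h2]; linear_combination h2t)
    exact ⟨t, ht0, ht4, ht12, hsqt, ⟨Units.mk0 uu huu0, x₀, 0, 0⟩, hCeq⟩
  · rintro ⟨t, ht0, ht4, ht12, hsq, C, hC⟩
    have hC' : C • E = Etc t := hC
    -- the variable change necessarily has `s = t = 0`
    have hs0 : C.s = 0 := by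
      have h := congrArg WeierstrassCurve.a₁ hC'
      rw [variableChange_a₁, hE₁, Etc_a₁] at h
      have h' := (mul_eq_zero.mp h).resolve_left (Units.ne_zero _)
      have := (mul_eq_zero.mp (by linear_combination h' : 2 * C.s = 0)).resolve_left h2
      exact this
    have ht0' : C.t = 0 := by
      have h := congrArg WeierstrassCurve.a₃ hC'
      rw [variableChange_a₃, hE₁, hE₃, Etc_a₃] at h
      have h' := (mul_eq_zero.mp h).resolve_left (pow_ne_zero 3 (Units.ne_zero _))
      have := (mul_eq_zero.mp (by linear_combination h' : 2 * C.t = 0)).resolve_left h2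
      exact this
    have hCfull : (⟨C.u, C.r, 0, 0⟩ : VariableChange K) = C := by
      ext <;> simp [hs0, ht0']
    have hW' : Etc t = (⟨C.u, C.r, 0, 0⟩ : VariableChange K) • E := by
      rw [hCfull]; exact hC'.symm
    obtain ⟨φ, hφord, -⟩ := exists_vcEquiv hΔ hE₁ hE₃ C.u C.r hW'
    have hΔt : (Etc t).Δ ≠ 0 := by
      rw [hW', variableChange_Δ]
      exact mul_ne_zero (pow_ne_zero 12 (Units.ne_zero _)) hΔ
    constructor
    · have hUt : ∃! P : (Etc t).toAffine.Point, addOrderOf P = 2 :=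
        (unique_two_torsion_iff h2 hΔt (Etc_a₁ t) (Etc_a₃ t)).mpr
          (Etc_unique_root h2 ht0 hsq)
      exact (φ.toEquiv.existsUnique_congr (fun P => by
        rw [show φ.toEquiv P = φ P from rfl, hφord])).mp hUt
    · obtain ⟨P, hP⟩ := Etc_exists_order_six h2 hΔt ht0
      exact ⟨φ P, by rw [hφord]; exact hP⟩
end

section
/- Let K be a field of characteristic different from 2 with algebraic closure K̄, let f ∈ K[x] be a monic cubic without repeated roots whose roots in K̄ are α₁, α₂, α₃, let E : y² = f(x) be the associated elliptic curve over K, and let P = (x₀, y₀) ∈ E(K). (a) If r₁, r₂, r₃ ∈ K̄ satisfy rᵢ² = x₀ − αᵢ for i = 1, 2, 3, r₁r₂r₃ = −y₀, and both s₁ := r₁ + r₂ + r₃ and s₂ := r₁r₂ + r₂r₃ + r₃r₁ lie in K, then the point Q := (x₀ + s₂, −y₀ − s₁s₂) lies in E(K) and satisfies 2Q = P. (b) Conversely, if Q ∈ E(K) satisfies 2Q = P, then there exists exactly one triple (r₁, r₂, r₃) of elements of K̄ with rᵢ² = x₀ − αᵢ, r₁r₂r₃ = −y₀, s₁ ∈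 K, s₂ ∈ K, and Q = (x₀ + s₂, −y₀ − s₁s₂). -/
open WeierstrassCurve

lemma point_some_eq_some {F : Type*} [Field F] {W : Affine F} {x₁ y₁ x₂ y₂ : F}
    (h₁ : W.Nonsingular x₁ y₁) (h₂ : W.Nonsingular x₂ y₂) (hx : x₁ = x₂) (hy : y₁ = y₂) :
    Affine.Point.some _ _ h₁ = Affine.Point.some _ _ h₂ := by subst hx; subst hy; rfl

lemma triple_eq_of_sq_eq {F : Type*} [Field F] (two : (2 : F) ≠ 0) {r1 r2 r3 t1 t2 t3 : F}
    (h12 : r1 ^ 2 ≠ r2 ^ 2) (h13 : r1 ^ 2 ≠ r3 ^ 2) (h23 : r2 ^ 2 ≠ r3 ^ 2)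
    (e1 : t1 ^ 2 = r1 ^ 2) (e2 : t2 ^ 2 = r2 ^ 2) (e3 : t3 ^ 2 = r3 ^ 2)
    (epi : t1 * t2 * t3 = r1 * r2 * r3)
    (esig : t1 * t2 + t2 * t3 + t3 * t1 = r1 * r2 + r2 * r3 + r3 * r1)
    (es1 : (t1 + t2 + t3) * (r1 * r2 + r2 * r3 + r3 * r1)
      = (r1 + r2 + r3) * (r1 * r2 + r2 * r3 + r3 * r1)) :
    t1 = r1 ∧ t2 = r2 ∧ t3 = r3 := by
  have cancel2 : ∀ x : F, 2 * x = 0 → x = 0 := fun x hx =>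
    (mul_eq_zero.mp hx).resolve_left two
  have s12 : r1 + r2 ≠ 0 := fun h => h12 (by linear_combination (r1 - r2) * h)
  have s13 : r1 + r3 ≠ 0 := fun h => h13 (by linear_combination (r1 - r3) * h)
  have s23 : r2 + r3 ≠ 0 := fun h => h23 (by linear_combination (r2 - r3) * h)
  have d1 : t1 = r1 ∨ t1 = -r1 := by
    rcases mul_eq_zero.mp (show (t1 - r1) * (t1 + r1) = 0 by linear_combination e1) with h | h
    · exact Or.inl (by linear_combination h)
    · exact Or.inr (by linear_combination h)
  have d2 : t2 = r2 ∨ t2 = -r2 := by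
    rcases mul_eq_zero.mp (show (t2 - r2) * (t2 + r2) = 0 by linear_combination e2) with h | h
    · exact Or.inl (by linear_combination h)
    · exact Or.inr (by linear_combination h)
  have d3 : t3 = r3 ∨ t3 = -r3 := by
    rcases mul_eq_zero.mp (show (t3 - r3) * (t3 + r3) = 0 by linear_combination e3) with h | h
    · exact Or.inl (by linear_combination h)
    · exact Or.inr (by linear_combination h)
  rcases d1 with d1 | d1 <;> rcases d2 with d2 | d2 <;> rcases d3 with d3 | d3
  · exact ⟨d1, d2, d3⟩
  · -- (+,+,-) : r3 = 0
    rw [d1, d2, d3] at esig epi es1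
    have hr3 : r3 = 0 := by
      rcases mul_eq_zero.mp (show (2 * r3) * (r1 + r2) = 0 by linear_combination -esig) with h | h
      · exact cancel2 _ h
      · exact absurd h s12
    exact ⟨d1, d2, by rw [d3, hr3, neg_zero]⟩
  · -- (+,-,+) : r2 = 0
    rw [d1, d2, d3] at esig epi es1
    have hr2 : r2 = 0 := by
      rcases mul_eq_zero.mp (show (2 * r2) * (r1 + r3) = 0 by linear_combination -esig) with h | h
      · exact cancel2 _ h
      · exact absurd h s13
    exact ⟨d1, by rw [d2, hr2, neg_zero], d3⟩
  · -- (+,-,-) : r1 = 0, then contradiction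
    rw [d1, d2, d3] at esig epi es1
    have hr1 : r1 = 0 := by
      rcases mul_eq_zero.mp (show (2 * r1) * (r2 + r3) = 0 by linear_combination -esig) with h | h
      · exact cancel2 _ h
      · exact absurd h s23
    have hr2 : r2 ≠ 0 := fun h => h12 (by rw [hr1, h])
    have hr3 : r3 ≠ 0 := fun h => h13 (by rw [hr1, h])
    exfalso
    rcases mul_eq_zero.mp (show (2 * (r2 + r3)) * (r1 * r2 + r2 * r3 + r3 * r1) = 0 by
      linear_combination -es1) with h | h
    · exact s23 (cancel2 _ h)
    · exact hr2 (by
        rcases mul_eq_zero.mp (show r2 * r3 = 0 by rw [hr1] at h; linear_combination h)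
          with h' | h'
        · exact h'
        · exact absurd h' hr3)
  · -- (-,+,+) : r1 = 0
    rw [d1, d2, d3] at esig epi es1
    have hr1 : r1 = 0 := by
      rcases mul_eq_zero.mp (show (2 * r1) * (r2 + r3) = 0 by linear_combination -esig) with h | h
      · exact cancel2 _ h
      · exact absurd h s23
    exact ⟨by rw [d1, hr1, neg_zero], d2, d3⟩
  · -- (-,+,-) : r2 = 0, contradiction
    rw [d1, d2, d3] at esig epi es1
    have hr2 : r2 = 0 := by
      rcases mul_eq_zero.mp (show (2 * r2) * (r1 + r3) = 0 by linear_combination -esig) with h | h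
      · exact cancel2 _ h
      · exact absurd h s13
    have hr1 : r1 ≠ 0 := fun h => h12 (by rw [hr2, h])
    have hr3 : r3 ≠ 0 := fun h => h23 (by rw [hr2, h])
    exfalso
    rcases mul_eq_zero.mp (show (2 * (r1 + r3)) * (r1 * r2 + r2 * r3 + r3 * r1) = 0 by
      linear_combination -es1) with h | h
    · exact s13 (cancel2 _ h)
    · exact hr1 (by
        rcases mul_eq_zero.mp (show r3 * r1 = 0 by rw [hr2] at h; linear_combination h)
          with h' | h'
        · exact absurd h' hr3
        · exact h')
  · -- (-,-,+) : r3 = 0, contradiction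
    rw [d1, d2, d3] at esig epi es1
    have hr3 : r3 = 0 := by
      rcases mul_eq_zero.mp (show (2 * r3) * (r1 + r2) = 0 by linear_combination -esig) with h | h
      · exact cancel2 _ h
      · exact absurd h s12
    have hr1 : r1 ≠ 0 := fun h => h13 (by rw [hr3, h])
    have hr2 : r2 ≠ 0 := fun h => h23 (by rw [hr3, h])
    exfalso
    rcases mul_eq_zero.mp (show (2 * (r1 + r2)) * (r1 * r2 + r2 * r3 + r3 * r1) = 0 by
      linear_combination -es1) with h | h
    · exact s12 (cancel2 _ h)
    · exact hr1 (by
        rcases mul_eq_zero.mp (show r1 * r2 = 0 by rw [hr3] at h; linear_combination h)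
          with h' | h'
        · exact h'
        · exact absurd h' hr2)
  · -- (-,-,-) : some rᵢ = 0, contradiction
    rw [d1, d2, d3] at esig epi es1
    exfalso
    have hpi : r1 * (r2 * r3) = 0 :=
      cancel2 _ (show 2 * (r1 * (r2 * r3)) = 0 by linear_combination -epi)
    have key : (2 * (r1 + r2 + r3)) * (r1 * r2 + r2 * r3 + r3 * r1) = 0 := by
      linear_combination -es1
    rcases mul_eq_zero.mp key with h | hσ
    · have hsum : r1 + r2 + r3 = 0 := cancel2 _ h
      rcases mul_eq_zero.mp hpi with h1 | h1
      · exact s23 (by rw [h1] at hsum; linear_combination hsum)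
      · rcases mul_eq_zero.mp h1 with h2 | h2
        · exact s13 (by rw [h2] at hsum; linear_combination hsum)
        · exact s12 (by rw [h2] at hsum; linear_combination hsum)
    · rcases mul_eq_zero.mp hpi with h1 | h1
      · have hr2 : r2 ≠ 0 := fun h => h12 (by rw [h1, h])
        have hr3 : r3 ≠ 0 := fun h => h13 (by rw [h1, h])
        rcases mul_eq_zero.mp (show r2 * r3 = 0 by rw [h1] at hσ; linear_combination hσ)
          with h' | h'
        · exact hr2 h'
        · exact hr3 h'
      · rcases mul_eq_zero.mp h1 with h2 | h2
        · have hr1 : r1 ≠ 0 := fun h => h12 (by rw [h2, h])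
          have hr3 : r3 ≠ 0 := fun h => h23 (by rw [h2, h])
          rcases mul_eq_zero.mp (show r3 * r1 = 0 by rw [h2] at hσ; linear_combination hσ)
            with h' | h'
          · exact hr3 h'
          · exact hr1 h'
        · have hr1 : r1 ≠ 0 := fun h => h13 (by rw [h2, h])
          have hr2 : r2 ≠ 0 := fun h => h23 (by rw [h2, h])
          rcases mul_eq_zero.mp (show r1 * r2 = 0 by rw [h2] at hσ; linear_combination hσ)
            with h' | h'
          · exact hr1 h'
          · exact hr2 h'


open Classical in
/-- explicit description of all halves in `E(K)` of a point
`P = (x₀, y₀) ∈ E(K)`, where `E : y² = f(x)` and `f` is a monic cubic with distinct roots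
`α₁, α₂, α₃` in an algebraic closure `K̄` of `K`. -/
theorem halves_of_point_description {K : Type*} [Field K] (h2 : (2 : K) ≠ 0)
    (A B C : K) (E : WeierstrassCurve K) (hE : E = ⟨0, A, 0, B, C⟩)
    (α₁ α₂ α₃ : AlgebraicClosure K)
    (hf : ∀ z : AlgebraicClosure K,
      z ^ 3 + algebraMap K (AlgebraicClosure K) A * z ^ 2 +
        algebraMap K (AlgebraicClosure K) B * z + algebraMap K (AlgebraicClosure K) C =
        (z - α₁) * (z - α₂) * (z - α₃))
    (h12 : α₁ ≠ α₂) (h13 : α₁ ≠ α₃) (h23 : α₂ ≠ α₃)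
    (x₀ y₀ : K) (hP : E.toAffine.Nonsingular x₀ y₀) :
    -- (a) a triple of square roots with `s₁, s₂ ∈ K` yields a half of `P` in `E(K)`
    (∀ r₁ r₂ r₃ : AlgebraicClosure K, ∀ s₁ s₂ : K,
      r₁ ^ 2 = algebraMap K (AlgebraicClosure K) x₀ - α₁ →
      r₂ ^ 2 = algebraMap K (AlgebraicClosure K) x₀ - α₂ →
      r₃ ^ 2 = algebraMap K (AlgebraicClosure K) x₀ - α₃ →
      r₁ * r₂ * r₃ = -(algebraMap K (AlgebraicClosure K) y₀) →
      algebraMap K (AlgebraicClosure K) s₁ = r₁ + r₂ + r₃ →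
      algebraMap K (AlgebraicClosure K) s₂ = r₁ * r₂ + r₂ * r₃ + r₃ * r₁ →
      ∃ hQ : E.toAffine.Nonsingular (x₀ + s₂) (-y₀ - s₁ * s₂),
        2 • Affine.Point.some _ _ hQ = Affine.Point.some _ _ hP) ∧
    -- (b) conversely, every half of `P` in `E(K)` arises from exactly one such triple
    (∀ Q : E.toAffine.Point, 2 • Q = Affine.Point.some _ _ hP →
      ∃! r : AlgebraicClosure K × AlgebraicClosure K × AlgebraicClosure K,
        r.1 ^ 2 = algebraMap K (AlgebraicClosure K) x₀ - α₁ ∧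
        r.2.1 ^ 2 = algebraMap K (AlgebraicClosure K) x₀ - α₂ ∧
        r.2.2 ^ 2 = algebraMap K (AlgebraicClosure K) x₀ - α₃ ∧
        r.1 * r.2.1 * r.2.2 = -(algebraMap K (AlgebraicClosure K) y₀) ∧
        ∃ s₁ s₂ : K,
          algebraMap K (AlgebraicClosure K) s₁ = r.1 + r.2.1 + r.2.2 ∧
          algebraMap K (AlgebraicClosure K) s₂ = r.1 * r.2.1 + r.2.1 * r.2.2 + r.2.2 * r.1 ∧
          ∃ hQ : E.toAffine.Nonsingular (x₀ + s₂) (-y₀ - s₁ * s₂),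
            Q = Affine.Point.some _ _ hQ) := by
  subst hE
  have φinj := (algebraMap K (AlgebraicClosure K)).injective
  have h2' : (2 : AlgebraicClosure K) ≠ 0 := by
    intro h; apply h2; apply φinj; rw [map_ofNat, map_zero, h]
  have hA : algebraMap K (AlgebraicClosure K) A = -(α₁ + α₂ + α₃) := by
    apply mul_left_cancel₀ h2'
    linear_combination hf 1 + hf (-1) - 2 * hf 0
  have hB : algebraMap K (AlgebraicClosure K) B = α₁ * α₂ + α₁ * α₃ + α₂ * α₃ := by
    apply mul_left_cancel₀ h2'
    linear_combination hf 1 - hf (-1)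
  have hC : algebraMap K (AlgebraicClosure K) C = -(α₁ * α₂ * α₃) := by
    linear_combination hf 0
  have ha1 : (⟨0, A, 0, B, C⟩ : WeierstrassCurve K).toAffine.a₁ = 0 := rfl
  have ha2 : (⟨0, A, 0, B, C⟩ : WeierstrassCurve K).toAffine.a₂ = A := rfl
  have ha3 : (⟨0, A, 0, B, C⟩ : WeierstrassCurve K).toAffine.a₃ = 0 := rfl
  have ha4 : (⟨0, A, 0, B, C⟩ : WeierstrassCurve K).toAffine.a₄ = B := rfl
  have ha6 : (⟨0, A, 0, B, C⟩ : WeierstrassCurve K).toAffine.a₆ = C := rfl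
  constructor
  ·
    intro r₁ r₂ r₃ s₁ s₂ hr1 hr2 hr3 hy hs1 hs2
    have hα₁ : α₁ = algebraMap K (AlgebraicClosure K) x₀ - r₁ ^ 2 := by linear_combination hr1
    have hα₂ : α₂ = algebraMap K (AlgebraicClosure K) x₀ - r₂ ^ 2 := by linear_combination hr2
    have hα₃ : α₃ = algebraMap K (AlgebraicClosure K) x₀ - r₃ ^ 2 := by linear_combination hr3
    simp only [hα₁, hα₂, hα₃] at hA hB hC h12 h13 h23
    have hy' : algebraMap K (AlgebraicClosure K) y₀ = -(r₁ * r₂ * r₃) := by linear_combination hy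
    -- y-coordinate of Q is nonzero
    have hyQK : (-y₀ - s₁ * s₂) ≠ 0 := by
      intro h0
      have h0' : -(algebraMap K (AlgebraicClosure K) y₀) -
          algebraMap K (AlgebraicClosure K) s₁ * algebraMap K (AlgebraicClosure K) s₂ = 0 := by
        rw [← map_mul, ← map_neg, ← map_sub, h0, map_zero]
      have hprod : (r₁ + r₂) * ((r₂ + r₃) * (r₃ + r₁)) = 0 := by
        rw [hy', hs1, hs2] at h0'
        linear_combination -h0'
      rcases mul_eq_zero.mp hprod with h | h
      · exact h12 (by linear_combination (r₂ - r₁) * h)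
      rcases mul_eq_zero.mp h with h | h
      · exact h23 (by linear_combination (r₃ - r₂) * h)
      · exact h13 (by linear_combination (r₃ - r₁) * h)
    -- Q satisfies the curve equation
    have heq : (⟨0, A, 0, B, C⟩ : WeierstrassCurve K).toAffine.Equation (x₀ + s₂) (-y₀ - s₁ * s₂) := by
      rw [Affine.equation_iff, ha1, ha2, ha3, ha4, ha6]
      apply φinj
      simp only [map_add, map_mul, map_pow, map_neg, map_sub, map_zero, zero_mul, add_zero,
        mul_zero, zero_add]
      rw [hy', hs1, hs2, hA, hB, hC]
      ring
    have hQ : (⟨0, A, 0, B, C⟩ : WeierstrassCurve K).toAffine.Nonsingular (x₀ + s₂) (-y₀ - s₁ * s₂) := by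
      rw [Affine.nonsingular_iff]
      refine ⟨heq, Or.inr ?_⟩
      rw [ha1, ha3]
      intro h
      have h' : 2 * (-y₀ - s₁ * s₂) = 0 := by linear_combination h
      exact hyQK ((mul_eq_zero.mp h').resolve_left h2)
    refine ⟨hQ, ?_⟩
    have hne : (-y₀ - s₁ * s₂) ≠
        (⟨0, A, 0, B, C⟩ : WeierstrassCurve K).toAffine.negY (x₀ + s₂) (-y₀ - s₁ * s₂) := by
      rw [Affine.negY, ha1, ha3]
      intro h
      have h' : 2 * (-y₀ - s₁ * s₂) = 0 := by linear_combination h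
      exact hyQK ((mul_eq_zero.mp h').resolve_left h2)
    rw [two_nsmul, Affine.Point.add_self_of_Y_ne hne]
    have h2yQ : 2 * (-y₀ - s₁ * s₂) ≠ 0 := mul_ne_zero h2 hyQK
    have hslope : (⟨0, A, 0, B, C⟩ : WeierstrassCurve K).toAffine.slope (x₀ + s₂) (x₀ + s₂)
        (-y₀ - s₁ * s₂) (-y₀ - s₁ * s₂) =
        (3 * (x₀ + s₂) ^ 2 + 2 * A * (x₀ + s₂) + B) / (2 * (-y₀ - s₁ * s₂)) := by
      rw [Affine.slope_of_Y_ne rfl hne, Affine.negY, ha1, ha2, ha3, ha4]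
      rw [show (-y₀ - s₁ * s₂) - (-(-y₀ - s₁ * s₂) - 0 * (x₀ + s₂) - 0)
        = 2 * (-y₀ - s₁ * s₂) from by ring]
      rw [show 3 * (x₀ + s₂) ^ 2 + 2 * A * (x₀ + s₂) + B - 0 * (-y₀ - s₁ * s₂)
        = 3 * (x₀ + s₂) ^ 2 + 2 * A * (x₀ + s₂) + B from by ring]
    have hXeq : (⟨0, A, 0, B, C⟩ : WeierstrassCurve K).toAffine.addX (x₀ + s₂) (x₀ + s₂)
        ((⟨0, A, 0, B, C⟩ : WeierstrassCurve K).toAffine.slope (x₀ + s₂) (x₀ + s₂)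
          (-y₀ - s₁ * s₂) (-y₀ - s₁ * s₂)) = x₀ := by
      rw [hslope, Affine.addX, ha1, ha2]
      field_simp [h2yQ, show -y₀ - s₂ * s₁ ≠ 0 by rw [mul_comm]; exact hyQK]
      apply φinj
      simp only [map_add, map_mul, map_pow, map_neg, map_sub, map_zero, zero_mul, add_zero,
        mul_zero, zero_add, map_ofNat]
      rw [hy', hs1, hs2, hA, hB]
      ring
    apply point_some_eq_some _ _ hXeq
    -- y-coordinate
    rw [Affine.addY, Affine.negAddY, hXeq, Affine.negY, ha1, ha3, hslope]
    field_simp [h2yQ, show -y₀ - s₂ * s₁ ≠ 0 by rw [mul_comm]; exact hyQK]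
    apply φinj
    simp only [map_add, map_mul, map_pow, map_neg, map_sub, map_zero, zero_mul, add_zero,
      mul_zero, zero_add, map_ofNat]
    rw [hy', hs1, hs2, hA, hB]
    ring
  ·
    intro Q hQP
    induction Q with
    | zero =>
      rw [show (Affine.Point.zero :
          (⟨0, A, 0, B, C⟩ : WeierstrassCurve K).toAffine.Point) = 0 from rfl, smul_zero] at hQP
      exact absurd hQP.symm (Affine.Point.some_ne_zero hP)
    | @some x₁ y₁ h₁ =>
      have hy1 : y₁ ≠ (⟨0, A, 0, B, C⟩ : WeierstrassCurve K).toAffine.negY x₁ y₁ := by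
        intro h
        rw [two_nsmul, Affine.Point.add_self_of_Y_eq h] at hQP
        exact absurd hQP.symm (Affine.Point.some_ne_zero hP)
      have hy10 : y₁ ≠ 0 := by
        intro h0
        exact hy1 (by rw [Affine.negY, ha1, ha3, h0]; ring)
      have h2y1 : 2 * y₁ ≠ 0 := mul_ne_zero h2 hy10
      rw [two_nsmul, Affine.Point.add_self_of_Y_ne hy1, Affine.Point.some.injEq] at hQP
      obtain ⟨hX, hY⟩ := hQP
      have hslope : (⟨0, A, 0, B, C⟩ : WeierstrassCurve K).toAffine.slope x₁ x₁ y₁ y₁ =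
          (3 * x₁ ^ 2 + 2 * A * x₁ + B) / (2 * y₁) := by
        rw [Affine.slope_of_Y_ne rfl hy1, Affine.negY, ha1, ha2, ha3, ha4]
        rw [show y₁ - (-y₁ - 0 * x₁ - 0) = 2 * y₁ from by ring]
        rw [show 3 * x₁ ^ 2 + 2 * A * x₁ + B - 0 * y₁
          = 3 * x₁ ^ 2 + 2 * A * x₁ + B from by ring]
      -- K-level doubling relations
      have hy0p : y₀ * (2 * y₁) = -((3 * x₁ ^ 2 + 2 * A * x₁ + B) * (x₀ - x₁) + 2 * y₁ ^ 2) := by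
        rw [Affine.addY, Affine.negAddY, hX, Affine.negY, ha1, ha3, hslope] at hY
        field_simp at hY
        linear_combination -hY
      have hx0p : x₀ * (2 * y₁) ^ 2
          = (3 * x₁ ^ 2 + 2 * A * x₁ + B) ^ 2 - (A + 2 * x₁) * (2 * y₁) ^ 2 := by
        rw [Affine.addX, ha1, ha2, hslope] at hX
        field_simp at hX
        linear_combination -hX
      -- base-changed relations
      have hQeqn : y₁ ^ 2 = x₁ ^ 3 + A * x₁ ^ 2 + B * x₁ + C := by
        have h := (Affine.equation_iff ..).mp h₁.1
        rw [ha1, ha2, ha3, ha4, ha6] at h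
        linear_combination h
      have H1 : (algebraMap K (AlgebraicClosure K) y₁) ^ 2 =
          (algebraMap K (AlgebraicClosure K) x₁ - α₁) * (algebraMap K (AlgebraicClosure K) x₁ - α₂) *
          (algebraMap K (AlgebraicClosure K) x₁ - α₃) := by
        have hφ := congrArg (algebraMap K (AlgebraicClosure K)) hQeqn
        simp only [map_add, map_mul, map_pow] at hφ
        linear_combination hφ + hf (algebraMap K (AlgebraicClosure K) x₁)
      have H2 : algebraMap K (AlgebraicClosure K) x₀ * (2 * algebraMap K (AlgebraicClosure K) y₁) ^ 2
          = (3 * algebraMap K (AlgebraicClosure K) x₁ ^ 2 +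
              2 * (-(α₁ + α₂ + α₃)) * algebraMap K (AlgebraicClosure K) x₁ +
              (α₁ * α₂ + α₁ * α₃ + α₂ * α₃)) ^ 2 -
            ((-(α₁ + α₂ + α₃)) + 2 * algebraMap K (AlgebraicClosure K) x₁) *
              (2 * algebraMap K (AlgebraicClosure K) y₁) ^ 2 := by
        have hφ := congrArg (algebraMap K (AlgebraicClosure K)) hx0p
        simp only [map_add, map_mul, map_pow, map_sub, map_ofNat] at hφ
        rw [hA, hB] at hφ
        linear_combination hφ
      have H3 : algebraMap K (AlgebraicClosure K) y₀ * (2 * algebraMap K (AlgebraicClosure K) y₁)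
          = -((3 * algebraMap K (AlgebraicClosure K) x₁ ^ 2 +
              2 * (-(α₁ + α₂ + α₃)) * algebraMap K (AlgebraicClosure K) x₁ +
              (α₁ * α₂ + α₁ * α₃ + α₂ * α₃)) *
              (algebraMap K (AlgebraicClosure K) x₀ - algebraMap K (AlgebraicClosure K) x₁) +
            2 * algebraMap K (AlgebraicClosure K) y₁ ^ 2) := by
        have hφ := congrArg (algebraMap K (AlgebraicClosure K)) hy0p
        simp only [map_add, map_mul, map_pow, map_sub, map_neg, map_ofNat] at hφ
        rw [hA, hB] at hφ
        linear_combination hφ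
      have hY' : algebraMap K (AlgebraicClosure K) y₁ ≠ 0 := fun h =>
        hy10 (φinj (by rw [h, map_zero]))
      have hd : 2 * algebraMap K (AlgebraicClosure K) y₁ ≠ 0 := mul_ne_zero h2' hY'
      -- the triple
      set X := algebraMap K (AlgebraicClosure K) x₁ with hXdef
      set Y := algebraMap K (AlgebraicClosure K) y₁ with hYdef
      set rr1 : AlgebraicClosure K := -((X - α₁) ^ 2 - (α₁ - α₂) * (α₁ - α₃)) / (2 * Y) with hr1def
      set rr2 : AlgebraicClosure K := -((X - α₂) ^ 2 - (α₂ - α₁) * (α₂ - α₃)) / (2 * Y) with hr2def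
      set rr3 : AlgebraicClosure K := -((X - α₃) ^ 2 - (α₃ - α₁) * (α₃ - α₂)) / (2 * Y) with hr3def
      have c1 : rr1 ^ 2 = algebraMap K (AlgebraicClosure K) x₀ - α₁ := by
        rw [hr1def]
        field_simp
        linear_combination (8 * X - 4 * α₂ - 4 * α₃) * H1 - H2
      have c2 : rr2 ^ 2 = algebraMap K (AlgebraicClosure K) x₀ - α₂ := by
        rw [hr2def]
        field_simp
        linear_combination (8 * X - 4 * α₁ - 4 * α₃) * H1 - H2
      have c3 : rr3 ^ 2 = algebraMap K (AlgebraicClosure K) x₀ - α₃ := by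
        rw [hr3def]
        field_simp
        linear_combination (8 * X - 4 * α₁ - 4 * α₂) * H1 - H2
      have c4 : rr1 * rr2 * rr3 = -(algebraMap K (AlgebraicClosure K) y₀) := by
        rw [hr1def, hr2def, hr3def]
        field_simp
        linear_combination (4 * Y ^ 2) * H3 -
          (3 * X ^ 2 + 2 * (-(α₁ + α₂ + α₃)) * X + (α₁ * α₂ + α₁ * α₃ + α₂ * α₃)) * H2 -
          (4 * α₂ * α₃ ^ 2 + 4 * α₂ ^ 2 * α₃ + 4 * α₁ * α₃ ^ 2 + 4 * α₁ * α₂ * α₃ + 4 * α₁ * α₂ ^ 2 +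
            4 * α₁ ^ 2 * α₃ + 4 * α₁ ^ 2 * α₂ + 8 * Y ^ 2 -
            8 * X * α₃ ^ 2 - 20 * X * α₂ * α₃ - 8 * X * α₂ ^ 2 - 20 * X * α₁ * α₃ -
            20 * X * α₁ * α₂ - 8 * X * α₁ ^ 2 + 28 * X ^ 2 * α₃ + 28 * X ^ 2 * α₂ + 28 * X ^ 2 * α₁ -
            28 * X ^ 3) * H1
      have c5 : algebraMap K (AlgebraicClosure K) (-(3 * x₁ ^ 2 + 2 * A * x₁ + B) / (2 * y₁))
          = rr1 + rr2 + rr3 := by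
        rw [hr1def, hr2def, hr3def]
        simp only [map_div₀, map_neg, map_add, map_mul, map_pow, map_ofNat]
        rw [hA, hB, ← hXdef, ← hYdef]
        field_simp
        ring
      have c6 : algebraMap K (AlgebraicClosure K) (x₁ - x₀)
          = rr1 * rr2 + rr2 * rr3 + rr3 * rr1 := by
        rw [hr1def, hr2def, hr3def]
        simp only [map_sub]
        rw [← hXdef]
        field_simp
        linear_combination -H2 - (4 * (α₁ + α₂ + α₃) - 12 * X) * H1
      have hx₀s : x₀ + (x₁ - x₀) = x₁ := by ring
      have hy₀s : -y₀ - (-(3 * x₁ ^ 2 + 2 * A * x₁ + B) / (2 * y₁)) * (x₁ - x₀) = y₁ := by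
        field_simp
        linear_combination -hy0p
      have hQ' : (⟨0, A, 0, B, C⟩ : WeierstrassCurve K).toAffine.Nonsingular
          (x₀ + (x₁ - x₀)) (-y₀ - (-(3 * x₁ ^ 2 + 2 * A * x₁ + B) / (2 * y₁)) * (x₁ - x₀)) := by
        rw [hx₀s, hy₀s]; exact h₁
      have hQeqfin : Affine.Point.some _ _ h₁ = Affine.Point.some _ _ hQ' :=
        point_some_eq_some h₁ hQ' hx₀s.symm hy₀s.symm
      refine ⟨⟨rr1, rr2, rr3⟩,
        ⟨c1, c2, c3, c4, -(3 * x₁ ^ 2 + 2 * A * x₁ + B) / (2 * y₁), x₁ - x₀, c5, c6, hQ', hQeqfin⟩,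
        ?_⟩
      rintro ⟨t1, t2, t3⟩ ⟨d1, d2, d3, d4, u1, u2, d5, d6, hQ2, hQeq2⟩
      have hcoord := hQeq2.symm.trans hQeqfin
      rw [Affine.Point.some.injEq] at hcoord
      obtain ⟨hxx, hyy⟩ := hcoord
      have hu2 : u2 = x₁ - x₀ := by linear_combination hxx
      have hu12 : u1 * u2 = (-(3 * x₁ ^ 2 + 2 * A * x₁ + B) / (2 * y₁)) * (x₁ - x₀) := by
        linear_combination -hyy
      have esig : t1 * t2 + t2 * t3 + t3 * t1 = rr1 * rr2 + rr2 * rr3 + rr3 * rr1 := by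
        rw [← d6, ← c6, hu2]
      have es1 : (t1 + t2 + t3) * (rr1 * rr2 + rr2 * rr3 + rr3 * rr1)
          = (rr1 + rr2 + rr3) * (rr1 * rr2 + rr2 * rr3 + rr3 * rr1) := by
        calc (t1 + t2 + t3) * (rr1 * rr2 + rr2 * rr3 + rr3 * rr1)
            = (t1 + t2 + t3) * (t1 * t2 + t2 * t3 + t3 * t1) := by rw [esig]
          _ = algebraMap K (AlgebraicClosure K) u1 * algebraMap K (AlgebraicClosure K) u2 := by
              rw [d5, d6]
          _ = algebraMap K (AlgebraicClosure K) (-(3 * x₁ ^ 2 + 2 * A * x₁ + B) / (2 * y₁)) *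
              algebraMap K (AlgebraicClosure K) (x₁ - x₀) := by
              rw [← map_mul, hu12, map_mul]
          _ = (rr1 + rr2 + rr3) * (rr1 * rr2 + rr2 * rr3 + rr3 * rr1) := by rw [c5, c6]
      have hsq12 : rr1 ^ 2 ≠ rr2 ^ 2 := by
        rw [c1, c2]; intro h; exact h12 (by linear_combination -h)
      have hsq13 : rr1 ^ 2 ≠ rr3 ^ 2 := by
        rw [c1, c3]; intro h; exact h13 (by linear_combination -h)
      have hsq23 : rr2 ^ 2 ≠ rr3 ^ 2 := by
        rw [c2, c3]; intro h; exact h23 (by linear_combination -h)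
      obtain ⟨w1, w2, w3⟩ := triple_eq_of_sq_eq h2' hsq12 hsq13 hsq23
        (d1.trans c1.symm) (d2.trans c2.symm) (d3.trans c3.symm)
        (d4.trans c4.symm) esig es1
      exact Prod.ext w1 (Prod.ext w2 w3)
end

section
/- Let K be a field of characteristic different from 2 with algebraic closure K̄, let f ∈ K[x] be a monic cubic without repeated roots whose roots in K̄ are α₁, α₂, α₃, let E : y² = f(x) be the associated elliptic curve over K, and let P = (x₀, y₀) ∈ E(K). Then the following are equivalent: (i) P ∈ 2E(K), i.e., there exists Q ∈ E(K) with 2Q = P; (ii) one may choose r₁, r₂, r₃ ∈ K̄ with rᵢ² = x₀ − αᵢ (i = 1, 2, 3) such that r₁ + r₂ + r₃ ∈ K and r₁r₂ + r₂r₃ + r₃r₁ ∈ K; (iii) one may choose r₁, r₂, r₃ ∈ K̄ with rᵢ² = x₀ − αᵢ (i = 1, 2, 3) such that r₁r₂r₃ = −y₀, r₁ + r₂ + r₃ ∈ K, and r₁r₂ + r₂r₃ + r₃r₁ ∈ K. -/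
open WeierstrassCurve

private lemma someEq {F : Type*} [Field F] {W : Affine F} {x₁ y₁ x₂ y₂ : F}
    {h₁ : W.Nonsingular x₁ y₁} {h₂ : W.Nonsingular x₂ y₂} (hx : x₁ = x₂) (hy : y₁ = y₂) :
    Affine.Point.some _ _ h₁ = Affine.Point.some _ _ h₂ := by subst hx; subst hy; rfl

private lemma myNegY {K : Type*} [Field K] (h2 : (2 : K) ≠ 0) (A B C x y : K) (hy : y ≠ 0) :
    y ≠ (⟨0, A, 0, B, C⟩ : WeierstrassCurve K).toAffine.negY x y := by
  show y ≠ -y - 0 * x - 0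
  intro h; apply hy
  have h2y : 2 * y = 0 := by linear_combination h
  rcases mul_eq_zero.mp h2y with h' | h'
  · exact absurd h' h2
  · exact h'

open Classical in
private lemma mySlope {K : Type*} [Field K] (h2 : (2 : K) ≠ 0) (A B C x y : K) (hy : y ≠ 0) :
    (⟨0, A, 0, B, C⟩ : WeierstrassCurve K).toAffine.slope x x y y
      = (3 * x ^ 2 + 2 * A * x + B) / (2 * y) := by
  rw [Affine.slope_of_Y_ne rfl (myNegY h2 A B C x y hy)]
  show (3 * x ^ 2 + 2 * A * x + B - 0 * y) / (y - (-y - 0 * x - 0)) = _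
  ring_nf

open Classical in
private lemma myAddX {K : Type*} [Field K] (h2 : (2 : K) ≠ 0) (A B C x y : K) (hy : y ≠ 0) :
    (⟨0, A, 0, B, C⟩ : WeierstrassCurve K).toAffine.addX x x
        ((⟨0, A, 0, B, C⟩ : WeierstrassCurve K).toAffine.slope x x y y) * (2 * y) ^ 2
      = (3 * x ^ 2 + 2 * A * x + B) ^ 2 - (A + 2 * x) * (2 * y) ^ 2 := by
  have h2y : 2 * y ≠ 0 := mul_ne_zero h2 hy
  rw [mySlope h2 A B C x y hy]
  show (((3 * x ^ 2 + 2 * A * x + B) / (2 * y)) ^ 2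
      + 0 * ((3 * x ^ 2 + 2 * A * x + B) / (2 * y)) - A - x - x) * (2 * y) ^ 2
    = (3 * x ^ 2 + 2 * A * x + B) ^ 2 - (A + 2 * x) * (2 * y) ^ 2
  field_simp
  ring

open Classical in
private lemma myAddY {K : Type*} [Field K] (h2 : (2 : K) ≠ 0) (A B C x y : K) (hy : y ≠ 0) :
    (⟨0, A, 0, B, C⟩ : WeierstrassCurve K).toAffine.addY x x y
        ((⟨0, A, 0, B, C⟩ : WeierstrassCurve K).toAffine.slope x x y y) * (2 * y) ^ 3
      = -((3 * x ^ 2 + 2 * A * x + B)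
          * ((⟨0, A, 0, B, C⟩ : WeierstrassCurve K).toAffine.addX x x
              ((⟨0, A, 0, B, C⟩ : WeierstrassCurve K).toAffine.slope x x y y) - x) * (2 * y) ^ 2
        + y * (2 * y) ^ 3) := by
  have h2y : 2 * y ≠ 0 := mul_ne_zero h2 hy
  rw [mySlope h2 A B C x y hy]
  show (-(((3 * x ^ 2 + 2 * A * x + B) / (2 * y))
          * ((((3 * x ^ 2 + 2 * A * x + B) / (2 * y)) ^ 2
              + 0 * ((3 * x ^ 2 + 2 * A * x + B) / (2 * y)) - A - x - x) - x)
        + y)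
      - 0 * (((3 * x ^ 2 + 2 * A * x + B) / (2 * y)) ^ 2
              + 0 * ((3 * x ^ 2 + 2 * A * x + B) / (2 * y)) - A - x - x)
      - 0) * (2 * y) ^ 3
    = -((3 * x ^ 2 + 2 * A * x + B)
          * ((((3 * x ^ 2 + 2 * A * x + B) / (2 * y)) ^ 2
              + 0 * ((3 * x ^ 2 + 2 * A * x + B) / (2 * y)) - A - x - x) - x) * (2 * y) ^ 2
        + y * (2 * y) ^ 3)
  field_simp
  ring
open Classical in
/-- criterion for divisibility by 2 in `E(K)` for `E : y² = f(x)` with `f` a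
monic cubic with distinct roots `α₁, α₂, α₃` in an algebraic closure `K̄` of `K`. -/
theorem divisible_by_two_criterion {K : Type*} [Field K] (h2 : (2 : K) ≠ 0)
    (A B C : K) (E : WeierstrassCurve K) (hE : E = ⟨0, A, 0, B, C⟩)
    (α₁ α₂ α₃ : AlgebraicClosure K)
    (hf : ∀ z : AlgebraicClosure K,
      z ^ 3 + algebraMap K (AlgebraicClosure K) A * z ^ 2 +
        algebraMap K (AlgebraicClosure K) B * z + algebraMap K (AlgebraicClosure K) C =
        (z - α₁) * (z - α₂) * (z - α₃))
    (h12 : α₁ ≠ α₂) (h13 : α₁ ≠ α₃) (h23 : α₂ ≠ α₃)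
    (x₀ y₀ : K) (hP : E.toAffine.Nonsingular x₀ y₀) :
    ((∃ Q : E.toAffine.Point, 2 • Q = Affine.Point.some _ _ hP) ↔
      (∃ r₁ r₂ r₃ : AlgebraicClosure K,
        r₁ ^ 2 = algebraMap K (AlgebraicClosure K) x₀ - α₁ ∧
        r₂ ^ 2 = algebraMap K (AlgebraicClosure K) x₀ - α₂ ∧
        r₃ ^ 2 = algebraMap K (AlgebraicClosure K) x₀ - α₃ ∧
        (∃ s₁ : K, algebraMap K (AlgebraicClosure K) s₁ = r₁ + r₂ + r₃) ∧
        (∃ s₂ : K, algebraMap K (AlgebraicClosure K) s₂ = r₁ * r₂ + r₂ * r₃ + r₃ * r₁))) ∧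
    ((∃ Q : E.toAffine.Point, 2 • Q = Affine.Point.some _ _ hP) ↔
      (∃ r₁ r₂ r₃ : AlgebraicClosure K,
        r₁ ^ 2 = algebraMap K (AlgebraicClosure K) x₀ - α₁ ∧
        r₂ ^ 2 = algebraMap K (AlgebraicClosure K) x₀ - α₂ ∧
        r₃ ^ 2 = algebraMap K (AlgebraicClosure K) x₀ - α₃ ∧
        r₁ * r₂ * r₃ = -(algebraMap K (AlgebraicClosure K) y₀) ∧
        (∃ s₁ : K, algebraMap K (AlgebraicClosure K) s₁ = r₁ + r₂ + r₃) ∧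
        (∃ s₂ : K, algebraMap K (AlgebraicClosure K) s₂ = r₁ * r₂ + r₂ * r₃ + r₃ * r₁))) := by
  subst hE
  have injφ : Function.Injective (algebraMap K (AlgebraicClosure K)) :=
    (algebraMap K (AlgebraicClosure K)).injective
  have h2' : (2 : AlgebraicClosure K) ≠ 0 := by
    intro h; exact h2 (injφ (by rw [map_ofNat, map_zero, h]))
  have hA : algebraMap K (AlgebraicClosure K) A = -(α₁ + α₂ + α₃) := by
    apply mul_left_cancel₀ h2'
    linear_combination hf 1 + hf (-1) - 2 * hf 0
  have hB : algebraMap K (AlgebraicClosure K) B = α₁ * α₂ + α₁ * α₃ + α₂ * α₃ := by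
    linear_combination hf 1 - hf 0 - hA
  have hC : algebraMap K (AlgebraicClosure K) C = -(α₁ * α₂ * α₃) := by
    linear_combination hf 0
  have hPeq : y₀ ^ 2 = x₀ ^ 3 + A * x₀ ^ 2 + B * x₀ + C := by
    have h : y₀ ^ 2 + 0 * x₀ * y₀ + 0 * y₀ = x₀ ^ 3 + A * x₀ ^ 2 + B * x₀ + C :=
      (Affine.equation_iff (W := (⟨0, A, 0, B, C⟩ : WeierstrassCurve K).toAffine) x₀ y₀).mp hP.1
    linear_combination h
  have fwd : (∃ Q : (⟨0, A, 0, B, C⟩ : WeierstrassCurve K).toAffine.Point,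
        2 • Q = Affine.Point.some _ _ hP) →
      (∃ r₁ r₂ r₃ : AlgebraicClosure K,
        r₁ ^ 2 = algebraMap K (AlgebraicClosure K) x₀ - α₁ ∧
        r₂ ^ 2 = algebraMap K (AlgebraicClosure K) x₀ - α₂ ∧
        r₃ ^ 2 = algebraMap K (AlgebraicClosure K) x₀ - α₃ ∧
        r₁ * r₂ * r₃ = -(algebraMap K (AlgebraicClosure K) y₀) ∧
        (∃ s₁ : K, algebraMap K (AlgebraicClosure K) s₁ = r₁ + r₂ + r₃) ∧
        (∃ s₂ : K, algebraMap K (AlgebraicClosure K) s₂ = r₁ * r₂ + r₂ * r₃ + r₃ * r₁)) := by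
    rintro ⟨Q, hQ⟩
    cases Q with
    | zero =>
        rw [← Affine.Point.zero_def, smul_zero] at hQ
        exact absurd hQ.symm (Affine.Point.some_ne_zero hP)
    | @some x₁ y₁ h₁ =>
        rw [two_nsmul] at hQ
        by_cases hy : y₁ = (⟨0, A, 0, B, C⟩ : WeierstrassCurve K).toAffine.negY x₁ y₁
        · rw [Affine.Point.add_self_of_Y_eq hy] at hQ
          exact absurd hQ.symm (Affine.Point.some_ne_zero hP)
        · have hy1 : y₁ ≠ 0 := by
            intro h; apply hy; rw [h]; show (0 : K) = -0 - 0 * x₁ - 0; ring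
          rw [Affine.Point.add_self_of_Y_ne hy] at hQ
          injection hQ with hx hyc
          have heq1 : y₁ ^ 2 = x₁ ^ 3 + A * x₁ ^ 2 + B * x₁ + C := by
            have h : y₁ ^ 2 + 0 * x₁ * y₁ + 0 * y₁ = x₁ ^ 3 + A * x₁ ^ 2 + B * x₁ + C :=
              (Affine.equation_iff
                (W := (⟨0, A, 0, B, C⟩ : WeierstrassCurve K).toAffine) x₁ y₁).mp h₁.1
            linear_combination h
          have hxx : x₀ * (2 * y₁) ^ 2
              = (3 * x₁ ^ 2 + 2 * A * x₁ + B) ^ 2 - (A + 2 * x₁) * (2 * y₁) ^ 2 := by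
            rw [← hx]; exact myAddX h2 A B C x₁ y₁ hy1
          have hyy : y₀ * (2 * y₁) ^ 3
              = -((3 * x₁ ^ 2 + 2 * A * x₁ + B) * (x₀ - x₁) * (2 * y₁) ^ 2
                  + y₁ * (2 * y₁) ^ 3) := by
            rw [← hyc, ← hx]; exact myAddY h2 A B C x₁ y₁ hy1
          have HXX := congrArg (algebraMap K (AlgebraicClosure K)) hxx
          have HYY := congrArg (algebraMap K (AlgebraicClosure K)) hyy
          have HW := congrArg (algebraMap K (AlgebraicClosure K)) heq1
          simp only [map_mul, map_add, map_sub, map_neg, map_pow, map_ofNat] at HXX HYY HW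
          rw [hA, hB] at HXX HYY
          rw [hA, hB, hC] at HW
          set X0 := algebraMap K (AlgebraicClosure K) x₀ with hX0
          set Y0 := algebraMap K (AlgebraicClosure K) y₀ with hY0
          set X1 := algebraMap K (AlgebraicClosure K) x₁ with hX1
          set Y1 := algebraMap K (AlgebraicClosure K) y₁ with hY1b
          have hY1 : Y1 ≠ 0 := by
            rw [hY1b]; intro hh; exact hy1 (injφ (by rw [map_zero]; exact hh))
          have hD : (2 : AlgebraicClosure K) * Y1 ≠ 0 := mul_ne_zero h2' hY1
          refine ⟨-(X1 ^ 2 - 2 * α₁ * X1 + α₁ * (α₂ + α₃) - α₂ * α₃) / (2 * Y1),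
                  -(X1 ^ 2 - 2 * α₂ * X1 + α₂ * (α₁ + α₃) - α₁ * α₃) / (2 * Y1),
                  -(X1 ^ 2 - 2 * α₃ * X1 + α₃ * (α₁ + α₂) - α₁ * α₂) / (2 * Y1),
                  ?_, ?_, ?_, ?_, ?_, ?_⟩
          · rw [div_pow, div_eq_iff (pow_ne_zero 2 hD)]
            linear_combination (-1 : AlgebraicClosure K) * HXX + (-4 * α₃ - 4 * α₂ + 8 * X1) * HW
          · rw [div_pow, div_eq_iff (pow_ne_zero 2 hD)]
            linear_combination (-1 : AlgebraicClosure K) * HXX + (-4 * α₃ - 4 * α₁ + 8 * X1) * HW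
          · rw [div_pow, div_eq_iff (pow_ne_zero 2 hD)]
            linear_combination (-1 : AlgebraicClosure K) * HXX + (-4 * α₂ - 4 * α₁ + 8 * X1) * HW
          · rw [div_mul_div_comm, div_mul_div_comm,
              div_eq_iff (mul_ne_zero (mul_ne_zero hD hD) hD)]
            linear_combination HYY
              + (-(α₂ * α₃) - α₁ * α₃ - α₁ * α₂ + 2 * X1 * α₃ + 2 * X1 * α₂ + 2 * X1 * α₁
                  - 3 * X1 ^ 2) * HXX
              + (-4 * α₂ * α₃ ^ 2 - 4 * α₂ ^ 2 * α₃ - 4 * α₁ * α₃ ^ 2 - 4 * α₁ * α₂ * α₃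
                  - 4 * α₁ * α₂ ^ 2 - 4 * α₁ ^ 2 * α₃ - 4 * α₁ ^ 2 * α₂ - 8 * Y1 ^ 2
                  + 8 * X1 * α₃ ^ 2 + 20 * X1 * α₂ * α₃ + 8 * X1 * α₂ ^ 2 + 20 * X1 * α₁ * α₃
                  + 20 * X1 * α₁ * α₂ + 8 * X1 * α₁ ^ 2 - 28 * X1 ^ 2 * α₃ - 28 * X1 ^ 2 * α₂
                  - 28 * X1 ^ 2 * α₁ + 28 * X1 ^ 3) * HW
          · refine ⟨-((3 * x₁ ^ 2 + 2 * A * x₁ + B) / (2 * y₁)), ?_⟩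
            simp only [map_neg, map_div₀, map_add, map_mul, map_pow, map_ofNat]
            rw [← hX1, ← hY1b, hA, hB]
            field_simp
            ring
          · refine ⟨x₁ - x₀, ?_⟩
            simp only [map_sub]
            rw [← hX1, ← hX0]
            simp only [div_mul_div_comm, ← add_div]
            rw [eq_div_iff (mul_ne_zero hD hD)]
            linear_combination (-1 : AlgebraicClosure K) * HXX
              + (-4 * (α₁ + α₂ + α₃) + 12 * X1) * HW
  have bwd : (∃ r₁ r₂ r₃ : AlgebraicClosure K,
        r₁ ^ 2 = algebraMap K (AlgebraicClosure K) x₀ - α₁ ∧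
        r₂ ^ 2 = algebraMap K (AlgebraicClosure K) x₀ - α₂ ∧
        r₃ ^ 2 = algebraMap K (AlgebraicClosure K) x₀ - α₃ ∧
        r₁ * r₂ * r₃ = -(algebraMap K (AlgebraicClosure K) y₀) ∧
        (∃ s₁ : K, algebraMap K (AlgebraicClosure K) s₁ = r₁ + r₂ + r₃) ∧
        (∃ s₂ : K, algebraMap K (AlgebraicClosure K) s₂ = r₁ * r₂ + r₂ * r₃ + r₃ * r₁)) →
      (∃ Q : (⟨0, A, 0, B, C⟩ : WeierstrassCurve K).toAffine.Point,
        2 • Q = Affine.Point.some _ _ hP) := by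
    rintro ⟨r₁, r₂, r₃, hr₁, hr₂, hr₃, hprod, ⟨s₁, hs₁⟩, ⟨s₂, hs₂⟩⟩
    have hα₁ : α₁ = algebraMap K (AlgebraicClosure K) x₀ - r₁ ^ 2 := by linear_combination hr₁
    have hα₂ : α₂ = algebraMap K (AlgebraicClosure K) x₀ - r₂ ^ 2 := by linear_combination hr₂
    have hα₃ : α₃ = algebraMap K (AlgebraicClosure K) x₀ - r₃ ^ 2 := by linear_combination hr₃
    have hy0 : algebraMap K (AlgebraicClosure K) y₀ = -(r₁ * r₂ * r₃) := by
      linear_combination hprod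
    have h12' : r₁ + r₂ ≠ 0 := by
      intro hh; apply h12
      have hr : r₂ = -r₁ := by linear_combination hh
      rw [hα₁, hα₂, hr]; ring
    have h23' : r₂ + r₃ ≠ 0 := by
      intro hh; apply h23
      have hr : r₃ = -r₂ := by linear_combination hh
      rw [hα₂, hα₃, hr]; ring
    have h31' : r₃ + r₁ ≠ 0 := by
      intro hh; apply h13
      have hr : r₃ = -r₁ := by linear_combination hh
      rw [hα₁, hα₃, hr]; ring
    have hy1 : -(s₁ * s₂ + y₀) ≠ 0 := by
      intro hh
      have h0 := congrArg (algebraMap K (AlgebraicClosure K)) hh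
      simp only [map_neg, map_add, map_mul, map_zero] at h0
      rw [hs₁, hs₂, hy0] at h0
      exact (mul_ne_zero (mul_ne_zero h12' h23') h31') (by linear_combination -h0)
    have h2y : (2 : K) * -(s₁ * s₂ + y₀) ≠ 0 := mul_ne_zero h2 hy1
    have heq1 : (-(s₁ * s₂ + y₀)) ^ 2
        = (x₀ + s₂) ^ 3 + A * (x₀ + s₂) ^ 2 + B * (x₀ + s₂) + C := by
      apply injφ
      simp only [map_mul, map_add, map_neg, map_pow]
      rw [hs₁, hs₂, hy0, hA, hB, hC, hα₁, hα₂, hα₃]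
      ring
    have hQns : (⟨0, A, 0, B, C⟩ : WeierstrassCurve K).toAffine.Nonsingular
        (x₀ + s₂) (-(s₁ * s₂ + y₀)) := by
      rw [Affine.nonsingular_iff, Affine.equation_iff]
      constructor
      · show (-(s₁ * s₂ + y₀)) ^ 2 + 0 * (x₀ + s₂) * (-(s₁ * s₂ + y₀)) + 0 * (-(s₁ * s₂ + y₀))
          = (x₀ + s₂) ^ 3 + A * (x₀ + s₂) ^ 2 + B * (x₀ + s₂) + C
        linear_combination heq1
      · right
        show -(s₁ * s₂ + y₀) ≠ -(-(s₁ * s₂ + y₀)) - 0 * (x₀ + s₂) - 0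
        exact myNegY h2 A B C (x₀ + s₂) (-(s₁ * s₂ + y₀)) hy1
    have hxcoord : (⟨0, A, 0, B, C⟩ : WeierstrassCurve K).toAffine.addX (x₀ + s₂) (x₀ + s₂)
        ((⟨0, A, 0, B, C⟩ : WeierstrassCurve K).toAffine.slope (x₀ + s₂) (x₀ + s₂)
          (-(s₁ * s₂ + y₀)) (-(s₁ * s₂ + y₀))) = x₀ := by
      apply mul_right_cancel₀ (pow_ne_zero 2 h2y)
      rw [myAddX h2 A B C (x₀ + s₂) (-(s₁ * s₂ + y₀)) hy1]
      apply injφ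
      simp only [map_mul, map_add, map_sub, map_neg, map_pow, map_ofNat]
      rw [hs₁, hs₂, hy0, hA, hB, hα₁, hα₂, hα₃]
      ring
    have hycoord : (⟨0, A, 0, B, C⟩ : WeierstrassCurve K).toAffine.addY (x₀ + s₂) (x₀ + s₂)
        (-(s₁ * s₂ + y₀))
        ((⟨0, A, 0, B, C⟩ : WeierstrassCurve K).toAffine.slope (x₀ + s₂) (x₀ + s₂)
          (-(s₁ * s₂ + y₀)) (-(s₁ * s₂ + y₀))) = y₀ := by
      have h := myAddY h2 A B C (x₀ + s₂) (-(s₁ * s₂ + y₀)) hy1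
      rw [hxcoord] at h
      apply mul_right_cancel₀ (pow_ne_zero 3 h2y)
      rw [h]
      apply injφ
      simp only [map_mul, map_add, map_sub, map_neg, map_pow, map_ofNat]
      rw [hs₁, hs₂, hy0, hA, hB, hα₁, hα₂, hα₃]
      ring
    refine ⟨Affine.Point.some _ _ hQns, ?_⟩
    rw [two_nsmul,
      Affine.Point.add_self_of_Y_ne (myNegY h2 A B C (x₀ + s₂) (-(s₁ * s₂ + y₀)) hy1)]
    exact someEq hxcoord hycoord
  refine ⟨⟨fun h => ?_, fun h => ?_⟩, fwd, bwd⟩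
  · obtain ⟨r₁, r₂, r₃, q1, q2, q3, _, hs1, hs2⟩ := fwd h
    exact ⟨r₁, r₂, r₃, q1, q2, q3, hs1, hs2⟩
  · obtain ⟨r₁, r₂, r₃, hr₁, hr₂, hr₃, ⟨s₁, hs1⟩, ⟨s₂, hs2⟩⟩ := h
    have HP := congrArg (algebraMap K (AlgebraicClosure K)) hPeq
    simp only [map_mul, map_add, map_pow] at HP
    have hsq : (r₁ * r₂ * r₃ - algebraMap K (AlgebraicClosure K) y₀)
        * (r₁ * r₂ * r₃ + algebraMap K (AlgebraicClosure K) y₀) = 0 := by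
      linear_combination (r₂ ^ 2 * r₃ ^ 2) * hr₁
        + ((algebraMap K (AlgebraicClosure K) x₀ - α₁) * r₃ ^ 2) * hr₂
        + ((algebraMap K (AlgebraicClosure K) x₀ - α₁)
            * (algebraMap K (AlgebraicClosure K) x₀ - α₂)) * hr₃
        - HP - hf (algebraMap K (AlgebraicClosure K) x₀)
    rcases mul_eq_zero.mp hsq with h' | h'
    · refine bwd ⟨-r₁, -r₂, -r₃, by linear_combination hr₁, by linear_combination hr₂,
        by linear_combination hr₃, by linear_combination -h', ⟨-s₁, ?_⟩, ⟨s₂, ?_⟩⟩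
      · rw [map_neg, hs1]; ring
      · rw [hs2]; ring
    · exact bwd ⟨r₁, r₂, r₃, hr₁, hr₂, hr₃, by linear_combination h', ⟨s₁, hs1⟩, ⟨s₂, hs2⟩⟩
end

section
/- Let K be a field of characteristic different from 2, let g(x) = x² + px + q ∈ K[x] be a monic irreducible quadratic, let K_g = K[x]/(g(x)) with 𝐱 the image of x, let Tr and N be the trace and norm of K_g over K, let α ∈ K, and let E : y² = (x − α)(x² + px + q) be the associated elliptic curve over K. Suppose P = (x₀, y₀) ∈ E(K), r ∈ K, and 𝔯 ∈ K_g satisfy r² = x₀ − α, 𝔯² = x₀ − 𝐱, and r·N(𝔯) = −y₀. Then the points Q₊ := (x₀ + Tr(𝔯)·r + N(𝔯), −y₀ − (r + Tr(𝔯))·(Tr(𝔯)·r + N(𝔯))) and Q₋ := (x₀ − Tr(𝔯)·r + N(𝔯), −y₀ − (r − Tr(𝔯))·(−Tr(𝔯)·r + N(𝔯))) are distinct points of E(K) satisfying 2Q₊ = 2Q₋ = P. -/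
open WeierstrassCurve Polynomial

lemma CH2 {K : Type*} [Field K] {S : Type*} [CommRing S] [Algebra K S]
    (b : Module.Basis (Fin 2) K S) (z : S) :
    z ^ 2 - algebraMap K S (Algebra.trace K S z) * z
      + algebraMap K S (Algebra.norm K (S := S) z) = 0 := by
  apply Algebra.leftMulMatrix_injective b
  rw [map_zero, map_add, map_sub, map_pow, map_mul, AlgHom.commutes, AlgHom.commutes,
    Algebra.trace_eq_matrix_trace b z, Algebra.norm_eq_matrix_det b z]
  set M := Algebra.leftMulMatrix b z
  ext i j
  fin_cases i <;> fin_cases j <;>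
    simp [pow_two, Matrix.mul_apply, Fin.sum_univ_two, Matrix.trace_fin_two,
      Matrix.det_fin_two, Matrix.algebraMap_matrix_apply] <;> ring

lemma ns_congr {K : Type*} [Field K] {W : Affine K} {x y x' y' : K}
    (hx : x = x') (hy : y = y') (h : W.Nonsingular x y) : W.Nonsingular x' y' := hx ▸ hy ▸ h

lemma some_eq_some {K : Type*} [Field K] {W : Affine K} {x1 y1 x2 y2 : K}
    {h1 : W.Nonsingular x1 y1} {h2 : W.Nonsingular x2 y2} (hx : x1 = x2) (hy : y1 = y2) :
    Affine.Point.some _ _ h1 = Affine.Point.some _ _ h2 := by subst hx; subst hy; rfl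

open Classical in
lemma half_lemma {K : Type*} [Field K] (h2 : (2 : K) ≠ 0) (p q α r t n : K)
    (hn : n ^ 2 = (r ^ 2 + α) ^ 2 + p * (r ^ 2 + α) + q)
    (ht : t ^ 2 = 2 * (r ^ 2 + α) + p + 2 * n)
    (hga : α ^ 2 + p * α + q ≠ 0)
    (hdisc : p ^ 2 - 4 * q ≠ 0)
    (ht0 : t ≠ 0)
    (hP : (⟨0, p - α, 0, q - α * p, -(α * q)⟩ :
        WeierstrassCurve K).toAffine.Nonsingular (r ^ 2 + α) (-(r * n))) :
    ∃ hQ : (⟨0, p - α, 0, q - α * p, -(α * q)⟩ :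
        WeierstrassCurve K).toAffine.Nonsingular (r ^ 2 + α + t * r + n)
          (-(-(r * n)) - (r + t) * (t * r + n)),
      2 • Affine.Point.some _ _ hQ = Affine.Point.some _ _ hP := by
  let W : Affine K := (⟨0, p - α, 0, q - α * p, -(α * q)⟩ : WeierstrassCurve K).toAffine
  set x₁ : K := r ^ 2 + α + t * r + n with hx₁
  set y₁ : K := -(-(r * n)) - (r + t) * (t * r + n) with hy₁
  have ha1 : W.a₁ = 0 := rfl
  have ha2 : W.a₂ = p - α := rfl
  have ha3 : W.a₃ = 0 := rfl
  have ha4 : W.a₄ = q - α * p := rfl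
  have ha6 : W.a₆ = -(α * q) := rfl
  have hxa : r ^ 2 + t * r + n ≠ 0 := by
    intro h0
    exact hga (by linear_combination (-1 : K) * hn + r ^ 2 * ht + (n + r ^ 2 - t * r) * h0)
  have hyt : y₁ = -t * (r ^ 2 + t * r + n) := by rw [hy₁]; ring
  have hy0 : y₁ ≠ 0 := by
    rw [hyt]; exact mul_ne_zero (neg_ne_zero.mpr ht0) hxa
  have hEq : W.Equation x₁ y₁ := by
    rw [Affine.equation_iff, ha1, ha2, ha3, ha4, ha6, hx₁, hy₁]
    linear_combination (n ^ 2 + 2 * r * t * n + r ^ 2 * n + r ^ 2 * t ^ 2 + r ^ 3 * t) * ht +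
      (n + r * t + r ^ 2) * hn
  have hΔ : W.Δ ≠ 0 := by
    have hΔval : W.Δ = 16 * (p ^ 2 - 4 * q) * (α ^ 2 + p * α + q) ^ 2 := by
      simp only [Δ, b₂, b₄, b₆, b₈, ha1, ha2, ha3, ha4, ha6]
      ring
    rw [hΔval]
    have h16 : (16 : K) ≠ 0 := by
      have := pow_ne_zero 4 h2; norm_num at this ⊢; exact this
    exact mul_ne_zero (mul_ne_zero h16 hdisc) (pow_ne_zero 2 hga)
  have hQ : W.Nonsingular x₁ y₁ := (Affine.equation_iff_nonsingular_of_Δ_ne_zero hΔ).mp hEq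
  have hnegY : W.negY x₁ y₁ = -y₁ := by rw [Affine.negY, ha1, ha3]; ring
  have hyne : y₁ ≠ W.negY x₁ y₁ := by
    rw [hnegY]
    intro h
    have h2y : 2 * y₁ = 0 := by linear_combination h
    exact hy0 ((mul_eq_zero.mp h2y).resolve_left h2)
  refine ⟨hQ, ?_⟩
  have hL : W.slope x₁ x₁ y₁ y₁ =
      (3 * x₁ ^ 2 + 2 * (p - α) * x₁ + (q - α * p)) / (2 * y₁) := by
    rw [Affine.slope_of_Y_ne rfl hyne, hnegY, ha1, ha2, ha4]
    congr 1 <;> ring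
  have hd : (2 : K) * y₁ ≠ 0 := mul_ne_zero h2 hy0
  have hXkey : (3 * x₁ ^ 2 + 2 * (p - α) * x₁ + (q - α * p)) ^ 2 =
      ((r ^ 2 + α) + (p - α) + 2 * x₁) * (2 * y₁) ^ 2 := by
    rw [hx₁, hy₁]
    linear_combination (-8*n^2*α - 4*n^2*p - 8*n^3 - 16*r*t*n*α - 8*r*t*n*p - 24*r*t*n^2
        + 6*r^2*α^2 + 6*r^2*q + 6*r^2*p*α - 8*r^2*n*α - 4*r^2*n*p - 22*r^2*n^2
        - 8*r^2*t^2*α - 4*r^2*t^2*p - 24*r^2*t^2*n - 8*r^3*t*α - 4*r^3*t*p - 36*r^3*t*n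
        - 8*r^3*t^3 + 10*r^4*α + 5*r^4*p - 10*r^4*n - 19*r^4*t^2 - 12*r^5*t + 4*r^6) * ht +
      (-α^2 - q - p*α - 8*n*α - 4*n*p - 7*n^2 - 8*r*t*α - 4*r*t*p - 12*r*t*n
        - 18*r^2*α - 9*r^2*p - 24*r^2*n - 12*r^3*t - 17*r^4) * hn
  have hX : W.addX x₁ x₁ (W.slope x₁ x₁ y₁ y₁) = r ^ 2 + α := by
    rw [hL, Affine.addX, ha1, ha2]
    field_simp
    linear_combination hXkey
  have hYkey : (3 * x₁ ^ 2 + 2 * (p - α) * x₁ + (q - α * p)) * ((r ^ 2 + α) - x₁)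
      + y₁ * (2 * y₁) = r * n * (2 * y₁) := by
    rw [hx₁, hy₁]
    linear_combination (2*n^2 + 4*r*t*n + r^2*n + 2*r^2*t^2 + r^3*t) * ht + (n + r*t) * hn
  have hY : W.addY x₁ x₁ y₁ (W.slope x₁ x₁ y₁ y₁) = -(r * n) := by
    have key : (3 * x₁ ^ 2 + 2 * (p - α) * x₁ + (q - α * p)) / (2 * y₁) *
        ((r ^ 2 + α) - x₁) + y₁ = r * n := by
      rw [div_mul_eq_mul_div, div_add' _ _ _ hd, div_eq_iff hd]
      linear_combination hYkey
    rw [Affine.addY, Affine.negY, ha1, ha3, Affine.negAddY, hX, hL, key]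
    ring
  rw [two_nsmul, Affine.Point.add_self_of_Y_ne hyne]
  exact some_eq_some hX hY

open Classical in
/-- explicit halves of a point `P = (x₀, y₀)` on the elliptic curve
`E : y² = (x − α)g(x)`, where `g = x² + px + q` is monic irreducible over `K`,
in terms of the trace `Tr` and norm `N` of the quadratic extension `K_g = K[x]/(g)`. -/
theorem explicit_halves_quadratic_ext {K : Type*} [Field K]
    (h2 : (2 : K) ≠ 0) (p q α : K)
    (g : K[X]) (hg : g = X ^ 2 + C p * X + C q) (hirr : Irreducible g)
    (E : WeierstrassCurve K) (hE : E = ⟨0, p - α, 0, q - α * p, -(α * q)⟩)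
    (x₀ y₀ : K) (hP : E.toAffine.Nonsingular x₀ y₀)
    (r : K) (ρ : AdjoinRoot g)
    (hr : r ^ 2 = x₀ - α)
    (hρ : ρ ^ 2 = algebraMap K (AdjoinRoot g) x₀ - AdjoinRoot.root g)
    (hrN : r * Algebra.norm K ρ = -y₀) :
    ∃ (hQplus : E.toAffine.Nonsingular
        (x₀ + Algebra.trace K (AdjoinRoot g) ρ * r + Algebra.norm K ρ)
        (-y₀ - (r + Algebra.trace K (AdjoinRoot g) ρ) *
          (Algebra.trace K (AdjoinRoot g) ρ * r + Algebra.norm K ρ)))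
      (hQminus : E.toAffine.Nonsingular
        (x₀ - Algebra.trace K (AdjoinRoot g) ρ * r + Algebra.norm K ρ)
        (-y₀ - (r - Algebra.trace K (AdjoinRoot g) ρ) *
          (-(Algebra.trace K (AdjoinRoot g) ρ * r) + Algebra.norm K ρ))),
      Affine.Point.some _ _ hQplus ≠ Affine.Point.some _ _ hQminus ∧
      2 • Affine.Point.some _ _ hQplus = Affine.Point.some _ _ hP ∧
      2 • Affine.Point.some _ _ hQminus = Affine.Point.some _ _ hP := by
  subst hE
  have hg0 : g ≠ 0 := hirr.ne_zero
  have hgnd : g.natDegree = 2 := by rw [hg]; compute_degree!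
  have hgdeg : g.degree = 2 := by rw [hg]; compute_degree!
  haveI : Fact (Irreducible g) := ⟨hirr⟩
  set θ : AdjoinRoot g := AdjoinRoot.root g with hθdef
  have hθ2 : θ ^ 2 = -(algebraMap K (AdjoinRoot g) p) * θ - algebraMap K (AdjoinRoot g) q := by
    have h0 : aeval θ (X ^ 2 + C p * X + C q) = 0 := by
      rw [← hg, AdjoinRoot.aeval_eq, AdjoinRoot.mk_self]
    simp only [map_add, map_pow, aeval_X, aeval_C, map_mul] at h0
    linear_combination h0
  set b : Module.Basis (Fin 2) K (AdjoinRoot g) :=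
    (AdjoinRoot.powerBasis hg0).basis.reindex (finCongr hgnd) with hb
  haveI hfin : Module.Finite K (AdjoinRoot g) := Module.Finite.of_basis b
  have hfr : Module.finrank K (AdjoinRoot g) = 2 := by
    rw [Module.finrank_eq_card_basis b, Fintype.card_fin]
  have hinj : Function.Injective (algebraMap K (AdjoinRoot g)) :=
    (algebraMap K (AdjoinRoot g)).injective
  have hroots : ∀ k : K, k ^ 2 + p * k + q ≠ 0 := by
    intro k hk
    have hroot : g.IsRoot k := by
      rw [hg, IsRoot]; simp only [eval_add, eval_pow, eval_X, eval_mul, eval_C]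
      linear_combination hk
    have hd1 := Polynomial.degree_eq_one_of_irreducible_of_root hirr hroot
    rw [hgdeg] at hd1
    norm_num at hd1
  have hθK : ∀ k : K, algebraMap K (AdjoinRoot g) k ≠ θ := by
    intro k hk
    apply hroots k
    apply hinj
    rw [map_zero, map_add, map_add, map_pow, map_mul]
    rw [hk]
    linear_combination hθ2
  have hlin : ∀ c d : K, algebraMap K (AdjoinRoot g) c + algebraMap K (AdjoinRoot g) d * θ = 0 →
      c = 0 ∧ d = 0 := by
    intro c d h
    by_cases hd : d = 0
    · subst hd
      refine ⟨hinj ?_, rfl⟩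
      rw [map_zero, zero_mul, add_zero] at h
      rw [map_zero]
      exact h
    · exfalso
      have hdn : algebraMap K (AdjoinRoot g) d ≠ 0 := fun hh =>
        hd (hinj (by rw [map_zero]; exact hh))
      apply hθK (-(c / d))
      rw [map_neg, map_div₀, ← neg_div, div_eq_iff hdn]
      linear_combination -h
  have hTrθ : Algebra.trace K (AdjoinRoot g) θ = -p := by
    have hq := CH2 b θ
    have hpair := hlin (Algebra.norm K (S := AdjoinRoot g) θ - q)
      (-p - Algebra.trace K (AdjoinRoot g) θ) (by
        rw [map_sub, map_sub, map_neg]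
        linear_combination hq - hθ2)
    linear_combination -hpair.2
  have hTrz : Algebra.trace K (AdjoinRoot g) (algebraMap K (AdjoinRoot g) x₀ - θ)
      = 2 * x₀ + p := by
    rw [map_sub, Algebra.trace_algebraMap, hfr, hTrθ]
    push_cast
    ring
  have hNz : Algebra.norm K (algebraMap K (AdjoinRoot g) x₀ - θ) = x₀ ^ 2 + p * x₀ + q := by
    have hq := CH2 b (algebraMap K (AdjoinRoot g) x₀ - θ)
    rw [hTrz] at hq
    rw [map_add, map_mul, map_ofNat] at hq
    apply hinj
    rw [map_add, map_add, map_pow, map_mul]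
    linear_combination hq - hθ2
  set t : K := Algebra.trace K (AdjoinRoot g) ρ with htdef
  set n : K := Algebra.norm K (S := AdjoinRoot g) ρ with hndef
  have hn2 : n ^ 2 = x₀ ^ 2 + p * x₀ + q := by
    rw [hndef, ← map_pow, hρ, hNz]
  have hkey : algebraMap K (AdjoinRoot g) t * ρ = algebraMap K (AdjoinRoot g) (x₀ + n) - θ := by
    rw [map_add]
    linear_combination hρ - CH2 b ρ
  have ht0 : t ≠ 0 := by
    intro h
    apply hθK (x₀ + n)
    rw [h, map_zero, zero_mul] at hkey
    linear_combination -hkey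
  have htt : t ^ 2 = 2 * x₀ + p + 2 * n := by
    have h1 : Algebra.trace K (AdjoinRoot g) (algebraMap K (AdjoinRoot g) t * ρ) = t * t := by
      rw [← Algebra.smul_def, map_smul, smul_eq_mul]
    have h2' : Algebra.trace K (AdjoinRoot g) (algebraMap K (AdjoinRoot g) (x₀ + n) - θ)
        = 2 * (x₀ + n) + p := by
      rw [map_sub, Algebra.trace_algebraMap, hfr, hTrθ]
      push_cast
      ring
    have hc := congrArg (Algebra.trace K (AdjoinRoot g)) hkey
    rw [h1, h2'] at hc
    linear_combination hc
  -- pure K-side facts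
  have hga : α ^ 2 + p * α + q ≠ 0 := hroots α
  have hdisc : p ^ 2 - 4 * q ≠ 0 := by
    intro h
    apply hroots (-(p / 2))
    field_simp
    linear_combination -h
  have hx0 : x₀ = r ^ 2 + α := by linear_combination -hr
  subst hx0
  have hy0 : y₀ = -(r * n) := by linear_combination hrN
  subst hy0
  obtain ⟨hQp, h2p⟩ := half_lemma h2 p q α r t n hn2 htt hga hdisc ht0 hP
  have httm : (-t) ^ 2 = 2 * (r ^ 2 + α) + p + 2 * n := by linear_combination htt
  obtain ⟨hQm, h2m⟩ := half_lemma h2 p q α r (-t) n hn2 httm hga hdisc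
    (neg_ne_zero.mpr ht0) hP
  refine ⟨hQp, ns_congr (by ring) (by ring) hQm, ?_, h2p, ?_⟩
  · intro hcon
    simp only [Affine.Point.some.injEq] at hcon
    obtain ⟨hx, hy⟩ := hcon
    have hr0 : r = 0 := by
      have h2t : 2 * t ≠ 0 := mul_ne_zero h2 ht0
      have hh : 2 * t * r = 0 := by linear_combination hx
      exact (mul_eq_zero.mp hh).resolve_left h2t
    have hn0 : n = 0 := by
      rw [hr0] at hy
      have hh : 2 * t * n = 0 := by linear_combination -hy
      exact (mul_eq_zero.mp hh).resolve_left (mul_ne_zero h2 ht0)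
    apply hga
    rw [hr0, hn0] at hn2
    linear_combination -hn2
  · rw [some_eq_some (show r ^ 2 + α - t * r + n = r ^ 2 + α + -t * r + n by ring)
      (show -(-(r * n)) - (r - t) * (-(t * r) + n)
        = -(-(r * n)) - (r + -t) * (-t * r + n) by ring)]
    exact h2m
end

section
/- Let K be a field of characteristic different from 2 and let a, b be nonzero elements of K such that a² + 4b is not a square in K. Then the group of K-points of the elliptic curve E⁽⁴⁾_{a,b} : y² = x(x² + (a² + 2b)x + b²) contains a point of order 8 if and only if there exist r, t ∈ K with r ≠ 0 and t ∉ {0, 1, −1} such that b = −r² and a = 2t²r/(1 − t²). -/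
open WeierstrassCurve

namespace E4aux

open WeierstrassCurve Affine

variable {K : Type*} [Field K]

open Classical

/-- The curve `E⁽⁴⁾_{a,b}` as an affine Weierstrass curve. -/
abbrev Wc (a b : K) : WeierstrassCurve.Affine K :=
  (⟨0, a ^ 2 + 2 * b, 0, b ^ 2, 0⟩ : WeierstrassCurve K).toAffine

lemma Wa1 (a b : K) : (Wc a b).a₁ = 0 := rfl
lemma Wa2 (a b : K) : (Wc a b).a₂ = a ^ 2 + 2 * b := rfl
lemma Wa3 (a b : K) : (Wc a b).a₃ = 0 := rfl
lemma Wa4 (a b : K) : (Wc a b).a₄ = b ^ 2 := rfl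
lemma Wa6 (a b : K) : (Wc a b).a₆ = 0 := rfl

lemma some_eq_some {W : WeierstrassCurve.Affine K} {x₁ y₁ x₂ y₂ : K} (hx : x₁ = x₂)
    (hy : y₁ = y₂) (h₁ : W.Nonsingular x₁ y₁) (h₂ : W.Nonsingular x₂ y₂) :
    Point.some _ _ h₁ = Point.some _ _ h₂ := by subst hx; subst hy; rfl

lemma equation_iff'' (a b x y : K) :
    (Wc a b).Equation x y ↔ y ^ 2 = x ^ 3 + (a ^ 2 + 2 * b) * x ^ 2 + b ^ 2 * x := by
  rw [Affine.equation_iff]; constructor <;> intro h <;> linear_combination h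

lemma negY_eq (a b x y : K) : (Wc a b).negY x y = -y := by
  simp [Affine.negY, Wa1, Wa3]

lemma Δ_eq (a b : K) : (Wc a b).Δ = 16 * b ^ 4 * a ^ 2 * (a ^ 2 + 4 * b) := by
  simp only [WeierstrassCurve.Δ, WeierstrassCurve.b₂, WeierstrassCurve.b₄, WeierstrassCurve.b₆,
    WeierstrassCurve.b₈, Wa1, Wa2, Wa3, Wa4, Wa6]
  ring

lemma ne_negY_iff {a b x y : K} (h2 : (2 : K) ≠ 0) :
    y ≠ (Wc a b).negY x y ↔ y ≠ 0 := by
  rw [negY_eq]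
  constructor
  · intro h hy; exact h (by rw [hy]; ring)
  · intro h hc
    exact h (by
      have h' : 2 * y = 0 := by linear_combination hc
      rcases mul_eq_zero.mp h' with h'' | h''
      · exact absurd h'' h2
      · exact h'')

lemma slope_mul (a b : K) (h2 : (2 : K) ≠ 0) {x y : K} (hy : y ≠ 0) :
    (Wc a b).slope x x y y * (2 * y) = 3 * x ^ 2 + 2 * (a ^ 2 + 2 * b) * x + b ^ 2 := by
  have hy' : y ≠ (Wc a b).negY x y := (ne_negY_iff h2).mpr hy
  rw [slope_of_Y_ne rfl hy', Wa1, Wa2, Wa4, negY_eq]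
  have hden : y - -y = 2 * y := by ring
  rw [hden, div_mul_cancel₀ _ (mul_ne_zero h2 hy)]
  ring

lemma double_P (h2 : (2 : K) ≠ 0) (a b : K) {x y : K} (hns : (Wc a b).Nonsingular x y)
    (hy0 : y ≠ 0) (hx2 : (x ^ 2 - b ^ 2) ^ 2 = -(4 * b * y ^ 2)) :
    ∃ (yR : K) (hR : (Wc a b).Nonsingular (-b) yR),
      Point.some _ _ hns + Point.some _ _ hns = Point.some _ _ hR := by
  have hy' : y ≠ (Wc a b).negY x y := (ne_negY_iff h2).mpr hy0
  have hE1 : y ^ 2 = x ^ 3 + (a ^ 2 + 2 * b) * x ^ 2 + b ^ 2 * x :=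
    (equation_iff'' a b x y).mp hns.1
  have hℓ := slope_mul a b h2 (x := x) hy0
  set ℓ := (Wc a b).slope x x y y with hℓdef
  have h2y : (2 * y) ≠ 0 := mul_ne_zero h2 hy0
  have hN2 : (3 * x ^ 2 + 2 * (a ^ 2 + 2 * b) * x + b ^ 2) ^ 2
      = 4 * y ^ 2 * ((a ^ 2 + 2 * b) + 2 * x - b) := by
    linear_combination hx2 - (4 * a ^ 2 + 8 * b + 8 * x) * hE1
  have hℓsq : ℓ ^ 2 = (a ^ 2 + 2 * b) + 2 * x - b := by
    have h1 : ℓ ^ 2 * (2 * y) ^ 2 = ((a ^ 2 + 2 * b) + 2 * x - b) * (2 * y) ^ 2 := by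
      rw [← mul_pow, hℓ]; linear_combination hN2
    exact mul_right_cancel₀ (pow_ne_zero 2 h2y) h1
  have haddX : (Wc a b).addX x x ℓ = -b := by
    simp only [Affine.addX, Wa1, Wa2]; linear_combination hℓsq
  refine ⟨(Wc a b).addY x x y ℓ, ?_, ?_⟩
  · have h := Affine.nonsingular_add hns hns (fun hxy => hy' hxy.2)
    rwa [haddX] at h
  · rw [Point.add_self_of_Y_ne hy']
    exact some_eq_some haddX rfl _ _

lemma double_R (h2 : (2 : K) ≠ 0) (a b : K) (ha : a ≠ 0) (hb : b ≠ 0) {yR : K}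
    (hR : (Wc a b).Nonsingular (-b) yR) :
    ∃ h00 : (Wc a b).Nonsingular 0 0,
      Point.some _ _ hR + Point.some _ _ hR = Point.some _ _ h00 := by
  have hyR2 : yR ^ 2 = a ^ 2 * b ^ 2 := by
    have h := (equation_iff'' a b (-b) yR).mp hR.1
    linear_combination h
  have hyR0 : yR ≠ 0 := by
    intro h
    have h0 : a ^ 2 * b ^ 2 = 0 := by rw [← hyR2, h]; ring
    rcases mul_eq_zero.mp h0 with h' | h'
    · exact ha (pow_eq_zero_iff (by norm_num) |>.mp h')
    · exact hb (pow_eq_zero_iff (by norm_num) |>.mp h')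
  have hy' : yR ≠ (Wc a b).negY (-b) yR := (ne_negY_iff h2).mpr hyR0
  have hℓ := slope_mul a b h2 (x := -b) hyR0
  set ℓ := (Wc a b).slope (-b) (-b) yR yR with hℓdef
  have h2y : (2 * yR) ≠ 0 := mul_ne_zero h2 hyR0
  have hℓsq : ℓ ^ 2 = a ^ 2 := by
    have h1 : ℓ ^ 2 * (2 * yR) ^ 2 = a ^ 2 * (2 * yR) ^ 2 := by
      rw [← mul_pow, hℓ]; linear_combination (-4 * a ^ 2) * hyR2
    exact mul_right_cancel₀ (pow_ne_zero 2 h2y) h1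
  have haddX : (Wc a b).addX (-b) (-b) ℓ = 0 := by
    simp only [Affine.addX, Wa1, Wa2]; linear_combination hℓsq
  have hℓb : ℓ * b = -yR := by
    have h1 : (ℓ * b) * (2 * yR) = (-yR) * (2 * yR) := by
      have h : (ℓ * b) * (2 * yR) = (ℓ * (2 * yR)) * b := by ring
      rw [h, hℓ]; linear_combination 2 * hyR2
    exact mul_right_cancel₀ h2y h1
  have haddY : (Wc a b).addY (-b) (-b) yR ℓ = 0 := by
    simp only [Affine.addY, Affine.negAddY, Affine.negY, Wa1, Wa3, zero_mul, sub_zero, mul_zero]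
    rw [haddX]
    linear_combination -hℓb
  have h00 : (Wc a b).Nonsingular 0 0 := by
    have h := Affine.nonsingular_add hR hR (fun hxy => hy' hxy.2)
    rwa [haddX, haddY] at h
  refine ⟨h00, ?_⟩
  rw [Point.add_self_of_Y_ne hy']
  exact some_eq_some haddX haddY _ _

lemma ord_eight {W : WeierstrassCurve.Affine K} (P : W.Point)
    (h8 : (8 : ℕ) • P = 0) (h4 : (4 : ℕ) • P ≠ 0) : addOrderOf P = 8 := by
  have hd : addOrderOf P ∣ 8 := addOrderOf_dvd_of_nsmul_eq_zero h8
  have h4' : ¬ addOrderOf P ∣ 4 := fun hc => h4 (addOrderOf_dvd_iff_nsmul_eq_zero.mp hc)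
  have h1 : addOrderOf P ≤ 8 := Nat.le_of_dvd (by norm_num) hd
  interval_cases h : addOrderOf P <;> revert hd h4' <;> decide

lemma backward (h2 : (2 : K) ≠ 0) (a b r t : K) (ha : a ≠ 0) (hb : b ≠ 0)
    (habne : a ^ 2 + 4 * b ≠ 0) (hr : r ≠ 0) (ht0 : t ≠ 0) (ht1 : t ≠ 1) (ht1' : t ≠ -1)
    (hbr : b = -r ^ 2) (hat : a = 2 * t ^ 2 * r / (1 - t ^ 2)) :
    ∃ P : (Wc a b).Point, addOrderOf P = 8 := by
  subst hbr
  have h1t : (1 : K) - t ≠ 0 := by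
    intro h; exact ht1 (by linear_combination -h)
  have h1t' : (1 : K) + t ≠ 0 := by
    intro h; exact ht1' (by linear_combination h)
  have h1t2 : (1 : K) - t ^ 2 ≠ 0 := by
    have h : (1 : K) - t ^ 2 = (1 - t) * (1 + t) := by ring
    rw [h]; exact mul_ne_zero h1t h1t'
  set x : K := r ^ 2 * (1 + t) / (1 - t) with hx
  set y : K := 2 * r ^ 3 * t / (1 - t) ^ 2 with hy
  have hy0 : y ≠ 0 := by
    rw [hy]
    exact div_ne_zero (by
      apply mul_ne_zero (mul_ne_zero h2 (pow_ne_zero 3 hr)) ht0) (pow_ne_zero 2 h1t)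
  have hE1 : y ^ 2 = x ^ 3 + (a ^ 2 + 2 * -r ^ 2) * x ^ 2 + (-r ^ 2) ^ 2 * x := by
    rw [hx, hy, hat]; field_simp [h1t, h1t', h1t2, hr, h2]; ring
  have hx2 : (x ^ 2 - (-r ^ 2) ^ 2) ^ 2 = -(4 * -r ^ 2 * y ^ 2) := by
    rw [hx, hy]; field_simp [h1t, h1t', h1t2, hr, h2]; ring
  have hΔ : (Wc a (-r ^ 2)).Δ ≠ 0 := by
    rw [Δ_eq]
    refine mul_ne_zero (mul_ne_zero (mul_ne_zero ?_ (pow_ne_zero 4 ?_)) (pow_ne_zero 2 ha)) habne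
    · have h16 : (16 : K) = 2 ^ 4 := by norm_num
      rw [h16]; exact pow_ne_zero 4 h2
    · intro h; exact hr (by
        have h' := neg_eq_zero.mp h
        exact pow_eq_zero_iff (by norm_num) |>.mp h')
  have hns : (Wc a (-r ^ 2)).Nonsingular x y :=
    (Affine.equation_iff_nonsingular_of_Δ_ne_zero hΔ).mp ((equation_iff'' a (-r ^ 2) x y).mpr hE1)
  obtain ⟨yR, hR, hPP⟩ := double_P h2 a (-r ^ 2) hns hy0 hx2
  obtain ⟨h00, hRR⟩ := double_R h2 a (-r ^ 2) ha hb hR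
  have hTT : Point.some _ _ h00 + Point.some _ _ h00 = 0 :=
    Point.add_self_of_Y_eq (by rw [negY_eq]; ring)
  refine ⟨Point.some _ _ hns, ?_⟩
  have e1 : (2 : ℕ) • Point.some _ _ hns = Point.some _ _ hR := by rw [two_nsmul]; exact hPP
  have e2 : (4 : ℕ) • Point.some _ _ hns = Point.some _ _ h00 := by
    rw [show (4 : ℕ) = 2 * 2 from rfl, mul_nsmul, e1, two_nsmul]; exact hRR
  have e3 : (8 : ℕ) • Point.some _ _ hns = 0 := by
    rw [show (8 : ℕ) = 4 * 2 from rfl, mul_nsmul, e2, two_nsmul]; exact hTT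
  exact ord_eight _ e3 (by rw [e2]; exact Point.some_ne_zero h00)

lemma two_tor (h2 : (2 : K) ≠ 0) (a b : K) (ha : a ≠ 0)
    (hab : ¬ IsSquare (a ^ 2 + 4 * b)) {x y : K} (hns : (Wc a b).Nonsingular x y)
    (hS : Point.some _ _ hns + Point.some _ _ hns = 0) : x = 0 ∧ y = 0 := by
  by_cases hy : y = (Wc a b).negY x y
  · have hy0 : y = 0 := by
      rw [negY_eq] at hy
      have h' : 2 * y = 0 := by linear_combination hy
      rcases mul_eq_zero.mp h' with h'' | h''
      · exact absurd h'' h2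
      · exact h''
    refine ⟨?_, hy0⟩
    have hE : y ^ 2 = x ^ 3 + (a ^ 2 + 2 * b) * x ^ 2 + b ^ 2 * x :=
      (equation_iff'' a b x y).mp hns.1
    rw [hy0] at hE
    by_contra hx
    have hq : x ^ 2 + (a ^ 2 + 2 * b) * x + b ^ 2 = 0 := by
      have hfac : x * (x ^ 2 + (a ^ 2 + 2 * b) * x + b ^ 2) = 0 := by linear_combination -hE
      rcases mul_eq_zero.mp hfac with h | h
      · exact absurd h hx
      · exact h
    apply hab
    refine ⟨(2 * x + (a ^ 2 + 2 * b)) / a, ?_⟩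
    rw [div_mul_div_comm, eq_div_iff (mul_ne_zero ha ha)]
    linear_combination -4 * hq
  · rw [Point.add_self_of_Y_ne hy] at hS
    exact absurd hS (Point.some_ne_zero _)

lemma double_to_T (h2 : (2 : K) ≠ 0) (a b : K) (ha : a ≠ 0) (hb : b ≠ 0)
    (hab : ¬ IsSquare (a ^ 2 + 4 * b)) {x₁ y₁ : K} (hns : (Wc a b).Nonsingular x₁ y₁)
    {h00 : (Wc a b).Nonsingular 0 0}
    (hS : Point.some _ _ hns + Point.some _ _ hns = Point.some _ _ h00) : x₁ = -b ∧ y₁ ≠ 0 := by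
  have hy' : y₁ ≠ (Wc a b).negY x₁ y₁ := by
    intro h
    rw [Point.add_self_of_Y_eq h] at hS
    exact (Point.some_ne_zero h00) hS.symm
  have hy0 : y₁ ≠ 0 := (ne_negY_iff h2).mp hy'
  refine ⟨?_, hy0⟩
  rw [Point.add_self_of_Y_ne hy'] at hS
  injection hS with h1 h2'
  have hℓ := slope_mul a b h2 (x := x₁) hy0
  set ℓ := (Wc a b).slope x₁ x₁ y₁ y₁ with hℓdef
  simp only [Affine.addY, Affine.negAddY, Affine.negY, Wa1, Wa3, zero_mul, sub_zero,
    mul_zero] at h2'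
  rw [h1] at h2'
  have hyx : y₁ = ℓ * x₁ := by linear_combination -h2'
  have hN : 2 * y₁ ^ 2 = (3 * x₁ ^ 2 + 2 * (a ^ 2 + 2 * b) * x₁ + b ^ 2) * x₁ := by
    have h : 2 * y₁ ^ 2 = (ℓ * (2 * y₁)) * x₁ := by linear_combination (2 * y₁) * hyx
    rw [hℓ] at h; exact h
  have hE1 : y₁ ^ 2 = x₁ ^ 3 + (a ^ 2 + 2 * b) * x₁ ^ 2 + b ^ 2 * x₁ :=
    (equation_iff'' a b x₁ y₁).mp hns.1
  have hfac : x₁ * (x₁ - b) * (x₁ + b) = 0 := by linear_combination -hN + 2 * hE1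
  rcases mul_eq_zero.mp hfac with h | h
  · rcases mul_eq_zero.mp h with h' | h'
    · exfalso
      apply hy0
      have hy2 : y₁ ^ 2 = 0 := by rw [hE1, h']; ring
      exact pow_eq_zero_iff (by norm_num) |>.mp hy2
    · exfalso
      apply hab
      have hx₁ : x₁ = b := by linear_combination h'
      refine ⟨y₁ / b, ?_⟩
      rw [div_mul_div_comm, eq_div_iff (mul_ne_zero hb hb)]
      rw [hx₁] at hE1
      linear_combination -hE1
  · linear_combination h

lemma final_core (h2 : (2 : K) ≠ 0) (a r x : K) (ha : a ≠ 0) (hr : r ≠ 0) (hx0 : x ≠ 0)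
    (hab : ¬ IsSquare (a ^ 2 + 4 * -r ^ 2)) (hkey : (x - r ^ 2) ^ 2 = 2 * a * r * x) :
    ∃ r' t : K, r' ≠ 0 ∧ t ≠ 0 ∧ t ≠ 1 ∧ t ≠ -1 ∧ (-r ^ 2 : K) = -r' ^ 2 ∧
      a = 2 * t ^ 2 * r' / (1 - t ^ 2) := by
  have ha2r : a + 2 * r ≠ 0 := by
    intro h
    apply hab
    have hae : a = -2 * r := by linear_combination h
    exact ⟨0, by rw [hae]; ring⟩
  have hxr : x + r ^ 2 ≠ 0 := by
    intro h
    apply ha2r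
    have hx' : x = -r ^ 2 := by linear_combination h
    rw [hx'] at hkey
    have hfac : (2 * r ^ 3) * (a + 2 * r) = 0 := by linear_combination hkey
    rcases mul_eq_zero.mp hfac with h' | h'
    · exact absurd (by
        rcases mul_eq_zero.mp h' with h'' | h''
        · exact absurd h'' h2
        · exact pow_eq_zero_iff (by norm_num) |>.mp h'') hr
    · exact h'
  have hxr2 : x - r ^ 2 ≠ 0 := by
    intro h
    rw [h] at hkey
    have h0 : 2 * a * r * x = 0 := by linear_combination -hkey
    exact (mul_ne_zero (mul_ne_zero (mul_ne_zero h2 ha) hr) hx0) h0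
  refine ⟨r, (x - r ^ 2) / (x + r ^ 2), hr, div_ne_zero hxr2 hxr, ?_, ?_, rfl, ?_⟩
  · intro h
    rw [div_eq_one_iff_eq hxr] at h
    have h0 : 2 * r ^ 2 = 0 := by linear_combination -h
    rcases mul_eq_zero.mp h0 with h' | h'
    · exact h2 h'
    · exact hr (pow_eq_zero_iff (by norm_num) |>.mp h')
  · intro h
    rw [div_eq_iff hxr] at h
    have h0 : 2 * x = 0 := by linear_combination h
    rcases mul_eq_zero.mp h0 with h' | h'
    · exact h2 h'
    · exact hx0 h'
  · have hsq : (x + r ^ 2) ^ 2 = 2 * r * x * (a + 2 * r) := by linear_combination hkey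
    have ht2 : ((x - r ^ 2) / (x + r ^ 2)) ^ 2 * (a + 2 * r) = a := by
      rw [div_pow, div_mul_eq_mul_div, div_eq_iff (pow_ne_zero 2 hxr)]
      rw [hkey, hsq]; ring
    have h1t2 : 1 - ((x - r ^ 2) / (x + r ^ 2)) ^ 2 ≠ 0 := by
      intro h
      have ht1 : ((x - r ^ 2) / (x + r ^ 2)) ^ 2 = 1 := by linear_combination -h
      rw [ht1, one_mul] at ht2
      have h0 : 2 * r = 0 := by linear_combination ht2
      rcases mul_eq_zero.mp h0 with h' | h'
      · exact h2 h'
      · exact hr h'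
    rw [eq_div_iff h1t2]
    linear_combination -ht2

lemma forward_core (h2 : (2 : K) ≠ 0) (a b x y : K) (ha : a ≠ 0) (hb : b ≠ 0)
    (hab : ¬ IsSquare (a ^ 2 + 4 * b)) (hy0 : y ≠ 0)
    (hE1 : y ^ 2 = x ^ 3 + (a ^ 2 + 2 * b) * x ^ 2 + b ^ 2 * x)
    (hx2 : (x ^ 2 - b ^ 2) ^ 2 = -(4 * b * y ^ 2)) :
    ∃ r t : K, r ≠ 0 ∧ t ≠ 0 ∧ t ≠ 1 ∧ t ≠ -1 ∧ b = -r ^ 2 ∧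
      a = 2 * t ^ 2 * r / (1 - t ^ 2) := by
  have hx0 : x ≠ 0 := by
    intro h
    apply hy0
    have hy2 : y ^ 2 = 0 := by rw [hE1, h]; ring
    exact pow_eq_zero_iff (by norm_num) |>.mp hy2
  obtain ⟨r₀, hyr⟩ : ∃ r₀ : K, 2 * r₀ * y = x ^ 2 - b ^ 2 :=
    ⟨(x ^ 2 - b ^ 2) / (2 * y), by field_simp⟩
  have hrsq : r₀ ^ 2 = -b := by
    have h4 : (4 * y ^ 2 : K) ≠ 0 := by
      refine mul_ne_zero ?_ (pow_ne_zero 2 hy0)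
      intro h
      exact h2 (by
        have h22 : (2 : K) * 2 = 0 := by linear_combination h
        rcases mul_eq_zero.mp h22 with h' | h' <;> exact h')
    refine mul_right_cancel₀ h4 ?_
    linear_combination (2 * r₀ * y + x ^ 2 - b ^ 2) * hyr + hx2
  have hbr : b = -r₀ ^ 2 := by linear_combination hrsq
  subst hbr
  have hr0 : r₀ ≠ 0 := by
    intro h
    exact hb (by rw [h]; ring)
  have hquart : (x - r₀ ^ 2) ^ 4 = 4 * a ^ 2 * r₀ ^ 2 * x ^ 2 := by
    linear_combination (4 * r₀ ^ 2) * hE1 - (x ^ 2 + 2 * r₀ * y - r₀ ^ 4) * hyr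
  have hfac : ((x - r₀ ^ 2) ^ 2 - 2 * a * r₀ * x) * ((x - r₀ ^ 2) ^ 2 + 2 * a * r₀ * x) = 0 := by
    linear_combination hquart
  rcases mul_eq_zero.mp hfac with h | h
  · obtain ⟨r', t, h₁, h₂, h₃, h₄, h₅, h₆⟩ :=
      final_core h2 a r₀ x ha hr0 hx0 hab (by linear_combination h)
    exact ⟨r', t, h₁, h₂, h₃, h₄, h₅, h₆⟩
  · obtain ⟨r', t, h₁, h₂, h₃, h₄, h₅, h₆⟩ :=
      final_core h2 a (-r₀) x ha (neg_ne_zero.mpr hr0) hx0 (by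
        convert hab using 3; ring) (by linear_combination h)
    refine ⟨r', t, h₁, h₂, h₃, h₄, by linear_combination h₅, h₆⟩

lemma forward (h2 : (2 : K) ≠ 0) (a b : K) (ha : a ≠ 0) (hb : b ≠ 0)
    (hab : ¬ IsSquare (a ^ 2 + 4 * b)) (P : (Wc a b).Point) (hP8 : addOrderOf P = 8) :
    ∃ r t : K, r ≠ 0 ∧ t ≠ 0 ∧ t ≠ 1 ∧ t ≠ -1 ∧ b = -r ^ 2 ∧
      a = 2 * t ^ 2 * r / (1 - t ^ 2) := by
  have h8 : (8 : ℕ) • P = 0 := by rw [← hP8]; exact addOrderOf_nsmul_eq_zero P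
  have h4ne : (4 : ℕ) • P ≠ 0 := by
    intro hc
    have hd := addOrderOf_dvd_of_nsmul_eq_zero hc
    rw [hP8] at hd
    norm_num at hd
  have h2ne : (2 : ℕ) • P ≠ 0 := by
    intro hc
    have hd := addOrderOf_dvd_of_nsmul_eq_zero hc
    rw [hP8] at hd
    norm_num at hd
  have hPne : P ≠ 0 := by
    intro hc
    rw [hc, addOrderOf_zero] at hP8
    norm_num at hP8
  rcases h4eq : ((4 : ℕ) • P) with _ | @⟨x₂, y₂, hQ⟩
  · exact absurd h4eq h4ne
  · have e84 : (8 : ℕ) • P = (4 : ℕ) • P + (4 : ℕ) • P := by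
      rw [← two_nsmul, ← mul_nsmul]
    have hQQ : Point.some _ _ hQ + Point.some _ _ hQ = 0 := by
      rw [← h4eq, ← e84]; exact h8
    obtain ⟨hx₂, hy₂⟩ := two_tor h2 a b ha hab hQ hQQ
    subst hx₂; subst hy₂
    rcases h2eq : ((2 : ℕ) • P) with _ | @⟨xR, yR, hRns⟩
    · exact absurd h2eq h2ne
    · have e42 : (4 : ℕ) • P = (2 : ℕ) • P + (2 : ℕ) • P := by
        rw [← two_nsmul, ← mul_nsmul]
      have hRR : Point.some _ _ hRns + Point.some _ _ hRns = Point.some _ _ hQ := by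
        rw [← h2eq, ← e42]; exact h4eq
      obtain ⟨hxR, hyR0⟩ := double_to_T h2 a b ha hb hab hRns hRR
      subst hxR
      rcases P with _ | @⟨x, y, hP⟩
      · exact absurd rfl hPne
      · have hPP : Point.some _ _ hP + Point.some _ _ hP = Point.some _ _ hRns := by
          rw [← two_nsmul]; exact h2eq
        have hy' : y ≠ (Wc a b).negY x y := by
          intro h
          rw [Point.add_self_of_Y_eq h] at hPP
          exact (Point.some_ne_zero hRns) hPP.symm
        have hy0 : y ≠ 0 := (ne_negY_iff h2).mp hy'
        rw [Point.add_self_of_Y_ne hy'] at hPP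
        injection hPP with hX hY
        have hℓ := slope_mul a b h2 (x := x) hy0
        set ℓ := (Wc a b).slope x x y y with hℓdef
        simp only [Affine.addX, Wa1, Wa2] at hX
        have hE1 : y ^ 2 = x ^ 3 + (a ^ 2 + 2 * b) * x ^ 2 + b ^ 2 * x :=
          (equation_iff'' a b x y).mp hP.1
        have hℓsq : ℓ ^ 2 = (a ^ 2 + 2 * b) + 2 * x - b := by linear_combination hX
        have hN2 : (3 * x ^ 2 + 2 * (a ^ 2 + 2 * b) * x + b ^ 2) ^ 2
            = 4 * y ^ 2 * ((a ^ 2 + 2 * b) + 2 * x - b) := by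
          have h1 : (ℓ * (2 * y)) ^ 2 = ((a ^ 2 + 2 * b) + 2 * x - b) * (2 * y) ^ 2 := by
            linear_combination (2 * y) ^ 2 * hℓsq
          rw [hℓ] at h1
          linear_combination h1
        have hx2 : (x ^ 2 - b ^ 2) ^ 2 = -(4 * b * y ^ 2) := by
          linear_combination hN2 + (4 * a ^ 2 + 8 * b + 8 * x) * hE1
        exact forward_core h2 a b x y ha hb hab hy0 hE1 hx2

end E4aux

open Classical in
/-- the curve `E⁽⁴⁾_{a,b} : y² = x(x² + (a² + 2b)x + b²)` has a `K`-point of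
order 8 if and only if `b = −r²` and `a = 2t²r/(1 − t²)` for some `r ≠ 0` and `t ∉ {0, ±1}`. -/
theorem order_eight_point_on_E4 {K : Type*} [Field K] (h2 : (2 : K) ≠ 0)
    (a b : K) (ha : a ≠ 0) (hb : b ≠ 0) (hab : ¬ IsSquare (a ^ 2 + 4 * b)) :
    (∃ P : (⟨0, a ^ 2 + 2 * b, 0, b ^ 2, 0⟩ : WeierstrassCurve K).toAffine.Point,
        addOrderOf P = 8) ↔
    ∃ r t : K, r ≠ 0 ∧ t ≠ 0 ∧ t ≠ 1 ∧ t ≠ -1 ∧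
      b = -r ^ 2 ∧ a = 2 * t ^ 2 * r / (1 - t ^ 2) := by
  constructor
  · rintro ⟨P, hP8⟩
    exact E4aux.forward h2 a b ha hb hab P hP8
  · rintro ⟨r, t, hr, ht0, ht1, ht1', hbr, hat⟩
    have habne : a ^ 2 + 4 * b ≠ 0 := fun h => hab (by rw [h]; exact ⟨0, by ring⟩)
    exact E4aux.backward h2 a b r t ha hb habne hr ht0 ht1 ht1' hbr hat
end

section
/- Let K be a field of characteristic different from 2 and let s, t ∈ K be nonzero elements with s, t ≠ ±1 such that neither 2s² − 1 nor 2t² − 1 is a square in K. Consider the elliptic curves E⁽⁸⁾_s : y² = x(x² + 2(s⁴ + 2s² − 1)/(s² − 1)²·x + 1) and E⁽⁸⁾_t : y² = x(x² + 2(t⁴ + 2t² − 1)/(t² − 1)²·x + 1). If K contains no element i with i² = −1, then E⁽⁸⁾_s and E⁽⁸⁾_t are K-isomorphic if and only if s = t, s = −t, or s² + t² = 2s²t². If K contains an element i with i² = −1, then E⁽⁸⁾_s and E⁽⁸⁾_t are K-isomorphic if and only if s = t, s = −t, s² + t² = 2s²t², or s⁴t⁴ + 2s² + 2t² = 4s²t²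 + 1. -/
open WeierstrassCurve

theorem aux_key_iso {K : Type*} [Field K] (h2 : (2 : K) ≠ 0)
    (s : K) (hs0 : s ≠ 0) (hds : (s ^ 2 - 1) ≠ 0)
    (hsq : ¬ IsSquare (2 * s ^ 2 - 1)) (B : K) :
    (∃ C : VariableChange K,
        C • (⟨0, 2 * (s ^ 4 + 2 * s ^ 2 - 1) / (s ^ 2 - 1) ^ 2, 0, 1, 0⟩ :
          WeierstrassCurve K) = ⟨0, B, 0, 1, 0⟩) ↔
      (B = 2 * (s ^ 4 + 2 * s ^ 2 - 1) / (s ^ 2 - 1) ^ 2 ∨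
        (B = -(2 * (s ^ 4 + 2 * s ^ 2 - 1) / (s ^ 2 - 1) ^ 2) ∧ ∃ i : K, i ^ 2 = -1)) := by
  set A : K := 2 * (s ^ 4 + 2 * s ^ 2 - 1) / (s ^ 2 - 1) ^ 2 with hA
  constructor
  · rintro ⟨⟨u, r, sc, tc⟩, hC⟩
    simp only [variableChange_def, WeierstrassCurve.mk.injEq] at hC
    obtain ⟨h1, hα2, h3, h4, h6⟩ := hC
    set v : K := ((u⁻¹ : Kˣ) : K) with hv
    have hvne : v ≠ 0 := Units.ne_zero _
    have hsc : sc = 0 := by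
      have h := mul_eq_zero.mp (show v * (2 * sc) = 0 by linear_combination h1)
      rcases h with h | h
      · exact absurd h hvne
      · exact (mul_eq_zero.mp h).resolve_left h2
    have htc : tc = 0 := by
      have h := mul_eq_zero.mp (show v ^ 3 * (2 * tc) = 0 by linear_combination h3)
      rcases h with h | h
      · exact absurd h (pow_ne_zero _ hvne)
      · exact (mul_eq_zero.mp h).resolve_left h2
    subst hsc htc
    have h6' : r * (1 + r * A + r ^ 2) = 0 := by
      have h := mul_eq_zero.mp
        (show v ^ 6 * (r * (1 + r * A + r ^ 2)) = 0 by linear_combination h6)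
      rcases h with h | h
      · exact absurd h (pow_ne_zero _ hvne)
      · exact h
    have hr : r = 0 := by
      by_contra hrne
      have hq : 1 + r * A + r ^ 2 = 0 := (mul_eq_zero.mp h6').resolve_left hrne
      apply hsq
      refine ⟨(r * (s ^ 2 - 1) ^ 2 + (s ^ 4 + 2 * s ^ 2 - 1)) / (2 * s ^ 2), ?_⟩
      have hq' : (s ^ 2 - 1) ^ 2 + r * (2 * (s ^ 4 + 2 * s ^ 2 - 1)) +
          r ^ 2 * (s ^ 2 - 1) ^ 2 = 0 := by
        rw [hA] at hq
        field_simp at hq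
        linear_combination hq
      field_simp
      linear_combination (-(s ^ 2 - 1) ^ 2) * hq'
    subst hr
    have h4' : v ^ 4 = 1 := by linear_combination h4
    have hα2' : v ^ 2 * A = B := by linear_combination hα2
    have hv2 : v ^ 2 = 1 ∨ v ^ 2 = -1 := by
      have h := mul_eq_zero.mp (show (v ^ 2 - 1) * (v ^ 2 + 1) = 0 by linear_combination h4')
      rcases h with h | h
      · exact Or.inl (by linear_combination h)
      · exact Or.inr (by linear_combination h)
    rcases hv2 with h | h
    · left; rw [h, one_mul] at hα2'; exact hα2'.symm
    · right
      rw [h] at hα2'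
      exact ⟨by linear_combination -hα2', v, h⟩
  · rintro (hB | ⟨hB, i, hi⟩)
    · exact ⟨1, by rw [one_smul, hB]⟩
    · have hi0 : i ≠ 0 := by
        intro h
        rw [h] at hi
        have h0 : (0 : K) = -1 := by simpa using hi
        exact one_ne_zero (by linear_combination h0)
      refine ⟨⟨Units.mk0 i hi0, 0, 0, 0⟩, ?_⟩
      have hii : (i⁻¹) ^ 2 = -1 := by
        rw [inv_pow, hi]
        exact inv_neg_one
      have hinv : (((Units.mk0 i hi0)⁻¹ : Kˣ) : K) = i⁻¹ := by
        rw [Units.val_inv_eq_inv_val, Units.val_mk0]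
      simp only [variableChange_def, hinv]
      ext <;> dsimp only
      · ring1
      · linear_combination A * hii - hB
      · ring1
      · linear_combination ((i⁻¹) ^ 2 - 1) * hii
      · ring1

/-- isomorphism criterion for the curves
`E⁽⁸⁾_t : y² = x(x² + 2(t⁴ + 2t² − 1)/(t² − 1)²·x + 1)`, depending on whether `K` contains
a primitive 4th root of unity. -/
theorem isomorphism_criterion_order_eight_curves {K : Type*} [Field K] (h2 : (2 : K) ≠ 0)
    (s t : K) (hs0 : s ≠ 0) (ht0 : t ≠ 0) (hs1 : s ≠ 1) (hs1' : s ≠ -1)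
    (ht1 : t ≠ 1) (ht1' : t ≠ -1)
    (hsq : ¬ IsSquare (2 * s ^ 2 - 1)) (htq : ¬ IsSquare (2 * t ^ 2 - 1)) :
    ((¬ ∃ i : K, i ^ 2 = -1) →
      ((∃ C : VariableChange K,
          C • (⟨0, 2 * (s ^ 4 + 2 * s ^ 2 - 1) / (s ^ 2 - 1) ^ 2, 0, 1, 0⟩ :
            WeierstrassCurve K) =
            ⟨0, 2 * (t ^ 4 + 2 * t ^ 2 - 1) / (t ^ 2 - 1) ^ 2, 0, 1, 0⟩) ↔
        (s = t ∨ s = -t ∨ s ^ 2 + t ^ 2 = 2 * s ^ 2 * t ^ 2))) ∧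
    ((∃ i : K, i ^ 2 = -1) →
      ((∃ C : VariableChange K,
          C • (⟨0, 2 * (s ^ 4 + 2 * s ^ 2 - 1) / (s ^ 2 - 1) ^ 2, 0, 1, 0⟩ :
            WeierstrassCurve K) =
            ⟨0, 2 * (t ^ 4 + 2 * t ^ 2 - 1) / (t ^ 2 - 1) ^ 2, 0, 1, 0⟩) ↔
        (s = t ∨ s = -t ∨ s ^ 2 + t ^ 2 = 2 * s ^ 2 * t ^ 2 ∨
          s ^ 4 * t ^ 4 + 2 * s ^ 2 + 2 * t ^ 2 = 4 * s ^ 2 * t ^ 2 + 1))) := by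
  have h4ne : (4 : K) ≠ 0 := by
    have : (4 : K) = 2 * 2 := by norm_num
    rw [this]
    exact mul_ne_zero h2 h2
  have hds : (s ^ 2 - 1) ≠ 0 := by
    intro h
    rcases mul_eq_zero.mp (show (s - 1) * (s + 1) = 0 by linear_combination h) with h' | h'
    · exact hs1 (by linear_combination h')
    · exact hs1' (by linear_combination h')
  have hdt : (t ^ 2 - 1) ≠ 0 := by
    intro h
    rcases mul_eq_zero.mp (show (t - 1) * (t + 1) = 0 by linear_combination h) with h' | h'
    · exact ht1 (by linear_combination h')
    · exact ht1' (by linear_combination h')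
  have key := aux_key_iso h2 s hs0 hds hsq (2 * (t ^ 4 + 2 * t ^ 2 - 1) / (t ^ 2 - 1) ^ 2)
  have hE1 : (2 * (t ^ 4 + 2 * t ^ 2 - 1) / (t ^ 2 - 1) ^ 2 =
      2 * (s ^ 4 + 2 * s ^ 2 - 1) / (s ^ 2 - 1) ^ 2) ↔
      (s = t ∨ s = -t ∨ s ^ 2 + t ^ 2 = 2 * s ^ 2 * t ^ 2) := by
    rw [div_eq_div_iff (pow_ne_zero _ hdt) (pow_ne_zero _ hds)]
    constructor
    · intro h
      have h0 : (s - t) * ((s + t) * (s ^ 2 + t ^ 2 - 2 * s ^ 2 * t ^ 2)) * 4 = 0 := by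
        linear_combination -h
      rcases mul_eq_zero.mp ((mul_eq_zero.mp h0).resolve_right h4ne) with h' | h'
      · exact Or.inl (by linear_combination h')
      · rcases mul_eq_zero.mp h' with h'' | h''
        · exact Or.inr (Or.inl (by linear_combination h''))
        · exact Or.inr (Or.inr (by linear_combination h''))
    · rintro (rfl | rfl | hq)
      · ring
      · ring
      · linear_combination (-4 * (s ^ 2 - t ^ 2)) * hq
  have hE2 : (2 * (t ^ 4 + 2 * t ^ 2 - 1) / (t ^ 2 - 1) ^ 2 =
      -(2 * (s ^ 4 + 2 * s ^ 2 - 1) / (s ^ 2 - 1) ^ 2)) ↔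
      (s ^ 4 * t ^ 4 + 2 * s ^ 2 + 2 * t ^ 2 = 4 * s ^ 2 * t ^ 2 + 1) := by
    rw [← neg_div, div_eq_div_iff (pow_ne_zero _ hdt) (pow_ne_zero _ hds)]
    constructor
    · intro h
      have h0 : (s ^ 4 * t ^ 4 + 2 * s ^ 2 + 2 * t ^ 2 - (4 * s ^ 2 * t ^ 2 + 1)) * 4 = 0 := by
        linear_combination h
      have := (mul_eq_zero.mp h0).resolve_right h4ne
      linear_combination this
    · intro hq
      linear_combination 4 * hq
  rw [key]
  constructor
  · intro hni
    constructor
    · rintro (h | ⟨h, hi⟩)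
      · exact hE1.mp h
      · exact absurd hi hni
    · intro h
      exact Or.inl (hE1.mpr h)
  · intro hi
    constructor
    · rintro (h | ⟨h, _⟩)
      · rcases hE1.mp h with a | a | a
        · exact Or.inl a
        · exact Or.inr (Or.inl a)
        · exact Or.inr (Or.inr (Or.inl a))
      · exact Or.inr (Or.inr (Or.inr (hE2.mp h)))
    · rintro (h | h | h | h)
      · exact Or.inl (hE1.mpr (Or.inl h))
      · exact Or.inl (hE1.mpr (Or.inr (Or.inl h)))
      · exact Or.inl (hE1.mpr (Or.inr (Or.inr h)))
      · exact Or.inr ⟨hE2.mpr h, hi⟩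
end

section
/- Let K be a field of characteristic different from 2 and let E be an elliptic curve over K given by y² = f(x) with f ∈ K[x] a monic cubic without repeated roots. Then the following are equivalent: (i) E(K) contains a point of order 6; (ii) there exists t ∈ K with t ∉ {0, −4, 1/2} such that E is K-isomorphic to the elliptic curve E⁽⁶⁾_t : y² = (x + 1)(x² + (t² + 2t)x + t²). -/
open WeierstrassCurve
open WeierstrassCurve.Affine

namespace OrderSixHelpers

open Classical


variable {K : Type*} [Field K]

lemma my_negY_ne (h2 : (2:K) ≠ 0) {W : Affine K} (h1 : W.a₁ = 0) (h3 : W.a₃ = 0)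
    {x y : K} (hy : y ≠ 0) : y ≠ W.negY x y := by
  simp only [negY, h1, h3, mul_zero, zero_mul, sub_zero]
  intro he
  have h2y : 2 * y = 0 := by linear_combination he
  exact hy ((mul_eq_zero.mp h2y).resolve_left h2)

lemma my_order_two {W : Affine K} (h1 : W.a₁ = 0) (h3 : W.a₃ = 0) {x : K}
    (h : W.Nonsingular x 0) : addOrderOf (Point.some _ _ h) = 2 := by
  haveI : Fact (Nat.Prime 2) := ⟨by norm_num⟩
  refine addOrderOf_eq_prime ?_ (Point.some_ne_zero h)
  rw [two_nsmul]
  exact Point.add_of_Y_eq rfl (by simp [negY, h1, h3])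

lemma my_order_three (h2 : (2:K) ≠ 0) {W : Affine K} (h1 : W.a₁ = 0) (h3 : W.a₃ = 0)
    {x y : K} (h : W.Nonsingular x y) (hy : y ≠ 0)
    (hkey : (3*x^2 + 2*W.a₂*x + W.a₄)^2 = 4*y^2*(W.a₂ + 3*x)) :
    addOrderOf (Point.some _ _ h) = 3 := by
  haveI : Fact (Nat.Prime 3) := ⟨by norm_num⟩
  have hy' : y ≠ W.negY x y := my_negY_ne h2 h1 h3 hy
  have hL : W.slope x x y y = (3*x^2 + 2*W.a₂*x + W.a₄) / (2*y) := by
    rw [slope_of_Y_ne rfl hy']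
    simp only [negY, h1, h3, mul_zero, zero_mul, sub_zero]
    ring_nf
  have h2y : (2*y) ≠ 0 := mul_ne_zero h2 hy
  have hL2 : (W.slope x x y y)^2 = W.a₂ + 3*x := by
    rw [hL, div_pow, div_eq_iff (pow_ne_zero 2 h2y)]
    linear_combination hkey
  have hX : W.addX x x (W.slope x x y y) = x := by
    simp only [addX, h1, zero_mul, add_zero, hL2]
    ring
  have hY : W.addY x x y (W.slope x x y y) = W.negY x y := by
    rw [addY, negAddY, hX]
    simp only [negY, h1, h3, mul_zero, zero_mul, sub_zero]
    ring
  refine addOrderOf_eq_prime ?_ (Point.some_ne_zero h)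
  rw [show (3:ℕ) = 2 + 1 from rfl, succ_nsmul, two_nsmul, Point.add_of_Y_ne hy']
  exact Point.add_of_Y_eq hX hY

lemma my_key_of_three (h2 : (2:K) ≠ 0) {W : Affine K} (h1 : W.a₁ = 0) (h3 : W.a₃ = 0)
    {x y : K} (h : W.Nonsingular x y) (h3S : (3:ℕ) • (Point.some _ _ h) = 0) :
    y ≠ 0 ∧ (3*x^2 + 2*W.a₂*x + W.a₄)^2 = 4*y^2*(W.a₂ + 3*x) := by
  have hy : y ≠ 0 := by
    intro hy0
    subst hy0
    rw [show (3:ℕ) = 2 + 1 from rfl, succ_nsmul, two_nsmul,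
      Point.add_of_Y_eq rfl (by simp [negY, h1, h3]), zero_add] at h3S
    exact Point.some_ne_zero h h3S
  refine ⟨hy, ?_⟩
  have hy' : y ≠ W.negY x y := my_negY_ne h2 h1 h3 hy
  rw [show (3:ℕ) = 2 + 1 from rfl, succ_nsmul, two_nsmul, Point.add_of_Y_ne hy'] at h3S
  have hXeq : W.addX x x (W.slope x x y y) = x := by
    by_contra hne
    rw [Point.add_of_X_ne hne] at h3S
    exact Point.some_ne_zero _ h3S
  have hL : W.slope x x y y = (3*x^2 + 2*W.a₂*x + W.a₄) / (2*y) := by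
    rw [slope_of_Y_ne rfl hy']
    simp only [negY, h1, h3, mul_zero, zero_mul, sub_zero]
    ring_nf
  rw [addX, hL, h1] at hXeq
  have h2y : (2*y) ≠ 0 := mul_ne_zero h2 hy
  field_simp at hXeq
  linear_combination hXeq

lemma my_y_of_two (h2 : (2:K) ≠ 0) {W : Affine K} (h1 : W.a₁ = 0) (h3 : W.a₃ = 0)
    {x y : K} (h : W.Nonsingular x y) (h2T : (2:ℕ) • (Point.some _ _ h) = 0) : y = 0 := by
  by_contra hy
  rw [two_nsmul, Point.add_of_Y_ne (my_negY_ne h2 h1 h3 hy)] at h2T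
  exact Point.some_ne_zero _ h2T

lemma my_Δ_fact (t : K) :
    (⟨0, (t ^ 2 + 2 * t) + 1, 0, (t ^ 2 + 2 * t) + t ^ 2, t ^ 2⟩ : WeierstrassCurve K).Δ
      = 16*t^3*(t+4)*(2*t-1)^2 := by
  simp only [WeierstrassCurve.Δ, WeierstrassCurve.b₂, WeierstrassCurve.b₄, WeierstrassCurve.b₆,
    WeierstrassCurve.b₈]
  ring

end OrderSixHelpers

open OrderSixHelpers in
open Classical in
/-- an elliptic curve `y² = f(x)` over a field of characteristic ≠ 2 has a
`K`-point of order 6 if and only if it is `K`-isomorphic to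
`E⁽⁶⁾_t : y² = (x + 1)(x² + (t² + 2t)x + t²)` for some `t ∉ {0, −4, 1/2}`.  The curve
`E⁽⁶⁾_t` has expanded Weierstrass form `y² = x³ + (t² + 2t + 1)x² + (2t² + 2t)x + t²`. -/
theorem order_six_family {K : Type*} [Field K] (h2 : (2 : K) ≠ 0)
    (E : WeierstrassCurve K) (hE₁ : E.a₁ = 0) (hE₃ : E.a₃ = 0) (hΔ : E.Δ ≠ 0) :
    (∃ P : E.toAffine.Point, addOrderOf P = 6) ↔
    ∃ t : K, t ≠ 0 ∧ t ≠ -4 ∧ t ≠ 1 / 2 ∧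
      ∃ C : VariableChange K,
        C • E =
          ⟨0, (t ^ 2 + 2 * t) + 1, 0, (t ^ 2 + 2 * t) + t ^ 2, t ^ 2⟩ := by
  constructor
  · rintro ⟨R, hR⟩
    have h6R : (6:ℕ) • R = 0 := by rw [← hR]; exact addOrderOf_nsmul_eq_zero R
    have h3S : (3:ℕ) • ((2:ℕ) • R) = 0 := by rw [smul_smul]; exact h6R
    have h2T : (2:ℕ) • ((3:ℕ) • R) = 0 := by rw [smul_smul]; exact h6R
    rcases hSc : (2:ℕ) • R with _ | @⟨x₀, y₀, hS⟩
    · exfalso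
      have : addOrderOf R ∣ 2 := addOrderOf_dvd_of_nsmul_eq_zero (by rw [hSc]; rfl)
      rw [hR] at this
      norm_num at this
    rcases hTc : (3:ℕ) • R with _ | @⟨e, ye, hT⟩
    · exfalso
      have : addOrderOf R ∣ 3 := addOrderOf_dvd_of_nsmul_eq_zero (by rw [hTc]; rfl)
      rw [hR] at this
      norm_num at this
    rw [hSc] at h3S
    rw [hTc] at h2T
    obtain ⟨hy₀, hkey⟩ := my_key_of_three h2 hE₁ hE₃ hS h3S
    have hye : ye = 0 := my_y_of_two h2 hE₁ hE₃ hT h2T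
    subst hye
    have hfx : y₀^2 = x₀^3 + E.a₂*x₀^2 + E.a₄*x₀ + E.a₆ := by
      have h9 : y₀^2 + E.a₁*x₀*y₀ + E.a₃*y₀ = x₀^3 + E.a₂*x₀^2 + E.a₄*x₀ + E.a₆ :=
        (E.toAffine.equation_iff x₀ y₀).mp hS.1
      rw [hE₁, hE₃] at h9
      linear_combination h9
    have hfe : e^3 + E.a₂*e^2 + E.a₄*e + E.a₆ = 0 := by
      have h7 : (0:K)^2 + E.a₁*e*0 + E.a₃*0 = e^3 + E.a₂*e^2 + E.a₄*e + E.a₆ :=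
        (E.toAffine.equation_iff e 0).mp hT.1
      linear_combination -h7
    obtain ⟨L, hLdef⟩ : ∃ L : K, L = (3*x₀^2 + 2*E.a₂*x₀ + E.a₄) / (2*y₀) := ⟨_, rfl⟩
    obtain ⟨e', he'def⟩ : ∃ e' : K, e' = e - x₀ := ⟨_, rfl⟩
    have hexne : e' ≠ 0 := by
      rw [he'def]
      intro h0
      have hex : e = x₀ := by linear_combination h0
      apply hy₀
      have hsq : y₀^2 = 0 := by rw [hfx, ← hex]; linear_combination hfe
      exact pow_eq_zero_iff (n := 2) (by norm_num) |>.mp hsq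
    have h2y : (2*y₀) ≠ 0 := mul_ne_zero h2 hy₀
    have hB : 2*y₀*L = 3*x₀^2 + 2*E.a₂*x₀ + E.a₄ := by
      rw [hLdef]; field_simp
    have hA : L^2 = E.a₂ + 3*x₀ := by
      rw [hLdef, div_pow, div_eq_iff (pow_ne_zero 2 h2y)]
      linear_combination hkey
    have hcube : (L*e' + y₀)^2 = -e'^3 := by
      rw [he'def]
      linear_combination (e-x₀)^2 * hA + (e-x₀) * hB + hfx + hfe
    obtain ⟨u, hudef⟩ : ∃ u : K, u = L + y₀/e' := ⟨_, rfl⟩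
    have hue : u * e' = L*e' + y₀ := by
      rw [hudef]; field_simp
    have hu : u ≠ 0 := by
      intro h0
      apply hexne
      have hz : L*e' + y₀ = 0 := by rw [← hue, h0, zero_mul]
      have hc3 : e'^3 = 0 := by
        have h8 := hcube
        rw [hz] at h8
        linear_combination h8
      exact pow_eq_zero_iff (n := 3) (by norm_num) |>.mp hc3
    have hu2 : u^2 = -e' := by
      have hcc : u^2 * e'^2 = (-e') * e'^2 := by
        linear_combination (u*e' + L*e' + y₀) * hue + hcube
      exact mul_right_cancel₀ (pow_ne_zero 2 hexne) hcc
    obtain ⟨t, htdef⟩ : ∃ t : K, t = y₀ / u^3 := ⟨_, rfl⟩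
    have ht : t * u^3 = y₀ := by rw [htdef]; field_simp
    have ht0 : t ≠ 0 := by
      rw [htdef]
      exact div_ne_zero hy₀ (pow_ne_zero 3 hu)
    have hLu : L = u*(1+t) := by
      have h5 : L * u^2 = u^3 + y₀ := by
        linear_combination hue + (L - u) * hu2
      have h6 : L * u^2 = (u*(1+t)) * u^2 := by
        linear_combination h5 - ht
      exact mul_right_cancel₀ (pow_ne_zero 2 hu) h6
    have hcurve : (⟨Units.mk0 u hu, x₀, 0, 0⟩ : VariableChange K) • E =
        ⟨0, (t ^ 2 + 2 * t) + 1, 0, (t ^ 2 + 2 * t) + t ^ 2, t ^ 2⟩ := by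
      ext
      · show _ * (E.a₁ + 2 * 0) = (0:K)
        rw [hE₁]
        ring
      · show _ ^ 2 * (E.a₂ - 0 * E.a₁ + 3 * x₀ - 0 ^ 2) = (t ^ 2 + 2 * t) + 1
        simp only [Units.val_inv_eq_inv_val, Units.val_mk0]
        rw [inv_pow, inv_mul_eq_iff_eq_mul₀ (pow_ne_zero 2 hu)]
        linear_combination (L + u*(1+t))*hLu - hA
      · show _ ^ 3 * (E.a₃ + x₀ * E.a₁ + 2 * 0) = (0:K)
        rw [hE₁, hE₃]
        ring
      · show _ ^ 4 * (E.a₄ - 0 * E.a₃ + 2 * x₀ * E.a₂ - (0 + x₀ * 0) * E.a₁ + 3 * x₀ ^ 2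
            - 2 * 0 * 0) = (t ^ 2 + 2 * t) + t ^ 2
        simp only [Units.val_inv_eq_inv_val, Units.val_mk0]
        rw [inv_pow, inv_mul_eq_iff_eq_mul₀ (pow_ne_zero 4 hu)]
        linear_combination -hB - 2*L*ht + 2*t*u^3*hLu
      · show _ ^ 6 * (E.a₆ + x₀ * E.a₄ + x₀ ^ 2 * E.a₂ + x₀ ^ 3 - 0 * E.a₃ - 0 ^ 2
            - x₀ * 0 * E.a₁) = t ^ 2
        simp only [Units.val_inv_eq_inv_val, Units.val_mk0]
        rw [inv_pow, inv_mul_eq_iff_eq_mul₀ (pow_ne_zero 6 hu)]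
        linear_combination -hfx - (y₀ + t*u^3)*ht
    have hΔt : (16:K)*t^3*(t+4)*(2*t-1)^2 ≠ 0 := by
      rw [← my_Δ_fact, ← hcurve, variableChange_Δ]
      exact mul_ne_zero (pow_ne_zero _ (Units.ne_zero _)) hΔ
    refine ⟨t, ht0, ?_, ?_, ⟨Units.mk0 u hu, x₀, 0, 0⟩, hcurve⟩
    · intro h4
      apply hΔt
      rw [h4]; ring
    · intro h12
      apply hΔt
      rw [h12]
      have h21 : (2:K) * (1/2) - 1 = 0 := by field_simp; ring
      linear_combination (16*(1/2:K)^3*((1/2)+4)*(2*(1/2)-1)) * h21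
  · rintro ⟨t, ht0, ht4, ht12, C, hC⟩
    rcases hDc : C⁻¹ with ⟨v, rr, ss, ww⟩
    have hEeq : E = (⟨v, rr, ss, ww⟩ : VariableChange K) • (⟨0, (t ^ 2 + 2 * t) + 1, 0, (t ^ 2 + 2 * t) + t ^ 2, t ^ 2⟩ :
        WeierstrassCurve K) := by
      rw [← hDc, ← hC, smul_smul, inv_mul_cancel, one_smul]
    have hk : (v : K) ≠ 0 := Units.ne_zero v
    have hss : ss = 0 := by
      have h0 := hE₁
      rw [hEeq] at h0
      simp only [variableChange_a₁] at h0
      have h1 := (mul_eq_zero.mp h0).resolve_left (Units.ne_zero _)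
      have h2s : ss * 2 = 0 := by linear_combination h1
      exact (mul_eq_zero.mp h2s).resolve_right h2
    have hww : ww = 0 := by
      have h0 := hE₃
      rw [hEeq] at h0
      simp only [variableChange_a₃, hss] at h0
      have h1' := (mul_eq_zero.mp h0).resolve_left (by
        intro hz
        exact Units.ne_zero (v⁻¹) (pow_eq_zero_iff (n := 3) (by norm_num) |>.mp hz))
      have h2w : ww * 2 = 0 := by linear_combination h1'
      exact (mul_eq_zero.mp h2w).resolve_right h2
    have hkv : ((v⁻¹ : Kˣ) : K) = (v : K)⁻¹ := Units.val_inv_eq_inv_val v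
    have ha₂ : E.a₂ = (v:K)⁻¹^2 * ((t^2+2*t+1) + 3*rr) := by
      rw [hEeq, variableChange_a₂, hss, hkv]
      show _ * ((t ^ 2 + 2 * t) + 1 - 0 * 0 + 3 * rr - 0 ^ 2) = _
      ring
    have ha₄ : E.a₄ = (v:K)⁻¹^4 * (((t^2+2*t)+t^2) + 2*rr*(t^2+2*t+1) + 3*rr^2) := by
      rw [hEeq, variableChange_a₄, hss, hww, hkv]
      show _ * ((t ^ 2 + 2 * t) + t ^ 2 - 0 * 0 + 2 * rr * ((t ^ 2 + 2 * t) + 1)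
        - (0 + rr * 0) * 0 + 3 * rr ^ 2 - 2 * 0 * 0) = _
      ring
    have ha₆ : E.a₆ = (v:K)⁻¹^6 * (t^2 + rr*((t^2+2*t)+t^2) + rr^2*(t^2+2*t+1) + rr^3) := by
      rw [hEeq, variableChange_a₆, hss, hww, hkv]
      show _ * (t ^ 2 + rr * ((t ^ 2 + 2 * t) + t ^ 2) + rr ^ 2 * ((t ^ 2 + 2 * t) + 1)
        + rr ^ 3 - 0 * 0 - 0 ^ 2 - rr * 0 * 0) = _
      ring
    have heqP : E.toAffine.Equation ((v:K)⁻¹^2 * (0 - rr)) ((v:K)⁻¹^3 * t) := by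
      refine (E.toAffine.equation_iff _ _).mpr ?_
      show ((v:K)⁻¹^3 * t)^2 + E.a₁ * ((v:K)⁻¹^2 * (0 - rr)) * ((v:K)⁻¹^3 * t)
          + E.a₃ * ((v:K)⁻¹^3 * t) = _
      rw [hE₁, hE₃, ha₂, ha₄, ha₆]
      ring
    have heqT : E.toAffine.Equation ((v:K)⁻¹^2 * (-1 - rr)) 0 := by
      refine (E.toAffine.equation_iff _ _).mpr ?_
      show (0:K)^2 + E.a₁ * ((v:K)⁻¹^2 * (-1 - rr)) * 0 + E.a₃ * 0 = _
      rw [hE₁, hE₃, ha₂, ha₄, ha₆]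
      ring
    have hP2 : E.toAffine.Nonsingular ((v:K)⁻¹^2 * (0 - rr)) ((v:K)⁻¹^3 * t) :=
      (E.toAffine.equation_iff_nonsingular_of_Δ_ne_zero hΔ).mp heqP
    have hT2 : E.toAffine.Nonsingular ((v:K)⁻¹^2 * (-1 - rr)) 0 :=
      (E.toAffine.equation_iff_nonsingular_of_Δ_ne_zero hΔ).mp heqT
    have hyP : (v:K)⁻¹^3 * t ≠ 0 := mul_ne_zero (pow_ne_zero 3 (inv_ne_zero hk)) ht0
    have hkeyP : (3*((v:K)⁻¹^2 * (0 - rr))^2 + 2*E.a₂*((v:K)⁻¹^2 * (0 - rr)) + E.a₄)^2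
        = 4*((v:K)⁻¹^3 * t)^2*(E.a₂ + 3*((v:K)⁻¹^2 * (0 - rr))) := by
      rw [ha₂, ha₄]
      ring
    have hordP : addOrderOf (Point.some _ _ hP2) = 3 :=
      my_order_three h2 hE₁ hE₃ hP2 hyP hkeyP
    have hordT : addOrderOf (Point.some _ _ hT2) = 2 :=
      my_order_two hE₁ hE₃ hT2
    refine ⟨Point.some _ _ hP2 + Point.some _ _ hT2, ?_⟩
    rw [(AddCommute.all _ _).addOrderOf_add_eq_mul_addOrderOf_of_coprime
      (by rw [hordP, hordT]; norm_num), hordP, hordT]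
end

section
/- Let K be a field of characteristic 2 and let E be an elliptic curve over K. Then E(K) contains a point of order 2 if and only if the j-invariant j(E) is a nonzero square in K, i.e., there exists a nonzero c ∈ K with j(E) = c². -/
open WeierstrassCurve

open Classical in
/-- over a field of characteristic 2, an elliptic curve has a `K`-rational
point of order 2 if and only if its j-invariant is a nonzero square in `K`. -/
theorem order_two_point_char_two {K : Type*} [Field K] [CharP K 2]
    (E : WeierstrassCurve K) [E.IsElliptic] :
    (∃ P : E.toAffine.Point, addOrderOf P = 2) ↔ ∃ c : K, c ≠ 0 ∧ E.j = c ^ 2 := by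
  have h2 : (2 : K) = 0 := CharP.cast_eq_zero K 2
  have hΔ : E.Δ ≠ 0 := E.coe_Δ' ▸ E.Δ'.ne_zero
  have hcoe : ((E.Δ'⁻¹ : Kˣ) : K) = (E.Δ)⁻¹ := by
    rw [← E.coe_Δ']; exact Units.val_inv_eq_inv_val _
  have hΔexp : E.Δ = E.a₁ ^ 4 * (E.a₁ ^ 2 * E.a₆ + E.a₁ * E.a₃ * E.a₄ + E.a₂ * E.a₃ ^ 2
      + E.a₄ ^ 2) + E.a₃ ^ 4 + E.a₁ ^ 3 * E.a₃ ^ 3 := by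
    rw [Δ_of_char_two, b₈_of_char_two]
  constructor
  · rintro ⟨P, hP⟩
    have hP2 : P + P = 0 := by
      have h := addOrderOf_nsmul_eq_zero P
      rwa [hP, two_nsmul] at h
    rcases P with _ | @⟨x, y, h⟩
    · rw [← Affine.Point.zero_def, addOrderOf_zero] at hP
      exact absurd hP (by norm_num)
    · have hy : y = E.toAffine.negY x y := by
        by_contra hy
        rw [Affine.Point.add_self_of_Y_ne hy] at hP2
        exact Affine.Point.some_ne_zero _ hP2
      simp only [Affine.negY] at hy
      have hxy : E.a₁ * x + E.a₃ = 0 := by linear_combination hy - y * h2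
      have ha₁ : E.a₁ ≠ 0 := by
        intro ha
        rw [ha, zero_mul, zero_add] at hxy
        exact hΔ (by rw [hΔexp, hxy, ha]; ring)
      have heq : y ^ 2 + E.a₁ * x * y + E.a₃ * y
          = x ^ 3 + E.a₂ * x ^ 2 + E.a₄ * x + E.a₆ :=
        (E.toAffine.equation_iff x y).mp ((E.toAffine.nonsingular_iff x y).mp h).1
      have hd : (E.a₁ ^ 3 * y + E.a₁ ^ 2 * E.a₄ + E.a₃ ^ 2) ^ 2 = E.Δ := by
        rw [hΔexp]
        linear_combination E.a₁ ^ 6 * heq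
          + (E.a₁ ^ 3 * E.a₃ ^ 2 - E.a₁ ^ 4 * E.a₃ * x - E.a₁ ^ 4 * E.a₂ * E.a₃
            + E.a₁ ^ 5 * x ^ 2 + E.a₁ ^ 5 * E.a₄ + E.a₁ ^ 5 * E.a₂ * x - E.a₁ ^ 6 * y) * hxy
          + (E.a₁ ^ 2 * E.a₃ ^ 2 * E.a₄ + E.a₁ ^ 3 * E.a₃ ^ 2 * y - E.a₁ ^ 3 * E.a₃ ^ 3
            + E.a₁ ^ 5 * E.a₄ * y - E.a₁ ^ 5 * E.a₃ * E.a₄) * h2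
      have hdne : E.a₁ ^ 3 * y + E.a₁ ^ 2 * E.a₄ + E.a₃ ^ 2 ≠ 0 := by
        intro h0
        exact hΔ (by rw [← hd, h0]; ring)
      refine ⟨E.a₁ ^ 6 / (E.a₁ ^ 3 * y + E.a₁ ^ 2 * E.a₄ + E.a₃ ^ 2),
        div_ne_zero (pow_ne_zero _ ha₁) hdne, ?_⟩
      rw [j_of_char_two, hcoe, ← hd]
      field_simp
  · rintro ⟨c, hc, hj⟩
    have ha₁ : E.a₁ ≠ 0 := by
      intro ha
      have h0 : E.j = 0 := E.j_eq_zero_of_char_two ha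
      rw [hj] at h0
      exact hc (pow_eq_zero_iff two_ne_zero |>.mp h0)
    have hΔc : E.Δ * c ^ 2 = E.a₁ ^ 12 := by
      rw [j_of_char_two, hcoe] at hj
      rw [← hj]
      field_simp
    obtain ⟨s, hs⟩ : ∃ s, s ^ 2 = E.Δ :=
      ⟨E.a₁ ^ 6 / c, by field_simp; linear_combination -hΔc⟩
    obtain ⟨x, hx⟩ : ∃ x, E.a₁ * x = E.a₃ := ⟨E.a₃ / E.a₁, by field_simp⟩
    obtain ⟨y, hy'⟩ : ∃ y, E.a₁ ^ 3 * y = s + E.a₁ ^ 2 * E.a₄ + E.a₃ ^ 2 :=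
      ⟨(s + E.a₁ ^ 2 * E.a₄ + E.a₃ ^ 2) / E.a₁ ^ 3, by field_simp⟩
    rw [hΔexp] at hs
    have heq : E.toAffine.Equation x y := by
      rw [Affine.equation_iff]
      have key : E.a₁ ^ 6 * (y ^ 2 + E.a₁ * x * y + E.a₃ * y)
          = E.a₁ ^ 6 * (x ^ 3 + E.a₂ * x ^ 2 + E.a₄ * x + E.a₆) := by
        linear_combination
          (E.a₁ ^ 3 * s - E.a₁ ^ 4 * E.a₃ * x - E.a₁ ^ 4 * E.a₂ * E.a₃ - E.a₁ ^ 5 * x ^ 2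
            - E.a₁ ^ 5 * E.a₂ * x) * hx
          + (s + E.a₃ ^ 2 + E.a₁ ^ 2 * E.a₄ + E.a₁ ^ 3 * y + E.a₁ ^ 3 * E.a₃
            + E.a₁ ^ 4 * x) * hy'
          + hs
          + (E.a₃ ^ 2 * s + E.a₃ ^ 4 + E.a₁ ^ 2 * E.a₄ * s + E.a₁ ^ 2 * E.a₃ ^ 2 * E.a₄
            + E.a₁ ^ 3 * E.a₃ * s + E.a₁ ^ 3 * E.a₃ ^ 3 + E.a₁ ^ 4 * E.a₄ ^ 2
            + E.a₁ ^ 5 * E.a₃ * E.a₄) * h2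
      exact mul_left_cancel₀ (pow_ne_zero 6 ha₁) key
    have hns := E.toAffine.equation_iff_nonsingular.mp heq
    have hyneg : y = E.toAffine.negY x y := by
      simp only [Affine.negY]
      linear_combination hx + (y + E.a₃) * h2
    refine ⟨.some _ _ hns, ?_⟩
    have h2P : (2 : ℕ) • Affine.Point.some _ _ hns = 0 := by
      rw [two_nsmul]
      exact Affine.Point.add_self_of_Y_eq hyneg
    exact addOrderOf_eq_prime h2P (Affine.Point.some_ne_zero hns)
end
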